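/- arXiv:2402.11280 — 7 statements merged into one kernel-verified Lean document; each statement's English description precedes it below -/
import Mathlib

section
/- Under Assumption A, there exist τ₀ > 0 and Q > 0, depending only on d, k, L and T, such that for every N ∈ ℕ with τ = T/N ≤ τ₀, the iterates of the constrained discrete HiSD scheme satisfy |‖x̃_n‖² − 1 − 2τ x_{n−1}ᵀ F(x_{n−1})| ≤ Q τ² for all 1 ≤ n ≤ N. -/
open scoped RealInnerProductSpace BigOperators

noncomputable section

set_option maxHeartbeats 1000000

theorem hisd_stmt11
    (d k : ℕ) (hd : 1 ≤ d) (hk : 1 ≤ k) (hkd : k ≤ d)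
    (F : EuclideanSpace ℝ (Fin d) → EuclideanSpace ℝ (Fin d))
    (J : EuclideanSpace ℝ (Fin d) → (EuclideanSpace ℝ (Fin d) →L[ℝ] EuclideanSpace ℝ (Fin d)))
    (hJsymm : ∀ x u w, ⟪J x u, w⟫ = ⟪u, J x w⟫)
    (L : ℝ) (hL : 0 < L)
    (hLip : ∀ x₁ x₂ : EuclideanSpace ℝ (Fin d), ‖J x₂ - J x₁‖ + ‖F x₂ - F x₁‖ ≤ L * ‖x₂ - x₁‖)
    (hgrow : ∀ x : EuclideanSpace ℝ (Fin d), ‖F x‖ ≤ L * (1 + ‖x‖))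
    (T : ℝ) (hT : 0 < T)
    (x₀ : EuclideanSpace ℝ (Fin d)) (hx₀ : ‖x₀‖ = 1)
    (v₀ : Fin k → EuclideanSpace ℝ (Fin d))
    (hv₀ : ∀ i j : Fin k, ⟪v₀ i, v₀ j⟫ = if i = j then (1:ℝ) else 0)
    (hv₀x : ∀ i : Fin k, ⟪v₀ i, x₀⟫ = 0) :
    ∃ τ₀ > (0:ℝ), ∃ Q > (0:ℝ), ∀ (N : ℕ) (τ : ℝ), 0 < N → τ = T / N → τ ≤ τ₀ →
      ∀ (x : ℕ → EuclideanSpace ℝ (Fin d)) (v : ℕ → Fin k → EuclideanSpace ℝ (Fin d)),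
        x 0 = x₀ → v 0 = v₀ →
        (∀ n < N,
          let xt := x n + τ • (F (x n) - (2:ℝ) • ∑ j, ⟪v n j, F (x n)⟫ • v n j)
          xt ≠ 0 ∧ x (n+1) = ‖xt‖⁻¹ • xt) →
        (∀ n < N, ∀ i : Fin k,
          let vt := v n i + τ • J (x n) (v n i)
          let vh := vt - ⟪vt, x (n+1)⟫ • x (n+1)
          let w := vh - ∑ j ∈ Finset.Iio i, ⟪vh, v (n+1) j⟫ • v (n+1) j
          w ≠ 0 ∧ v (n+1) i = ‖w‖⁻¹ • w) →
        ∀ n < N,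
          |‖x n + τ • (F (x n) - (2:ℝ) • ∑ j, ⟪v n j, F (x n)⟫ • v n j)‖^2 -
            1 - 2 * τ * ⟪x n, F (x n)⟫| ≤ Q * τ^2 := by
  refine ⟨1, one_pos, (2*L*(1+2*(k:ℝ)))^2, by positivity, ?_⟩
  intro N τ hN hτ hτ₀ x v hx0 hv0 hstep hvstep
  have key : ∀ n, n ≤ N → ‖x n‖ = 1 ∧ ∀ i : Fin k, ‖v n i‖ = 1 ∧ ⟪v n i, x n⟫ = 0 := by
    intro n
    induction n with
    | zero =>
      intro _
      refine ⟨by rw [hx0]; exact hx₀, fun i => ⟨?_, by rw [hv0, hx0]; exact hv₀x i⟩⟩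
      rw [hv0]
      have h : ⟪v₀ i, v₀ i⟫ = (1:ℝ) := by simpa using hv₀ i i
      have h2 := real_inner_self_eq_norm_sq (v₀ i)
      nlinarith [norm_nonneg (v₀ i)]
    | succ n ih =>
      intro hn1
      have hn : n < N := hn1
      obtain ⟨hx1, hvni⟩ := ih hn.le
      obtain ⟨hxt_ne, hxeq⟩ := hstep n hn
      have hxnorm : ‖x (n+1)‖ = 1 := by
        rw [hxeq, norm_smul, norm_inv, norm_norm]
        exact inv_mul_cancel₀ (norm_ne_zero_iff.mpr hxt_ne)
      have hxx : ⟪x (n+1), x (n+1)⟫ = (1:ℝ) := by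
        rw [real_inner_self_eq_norm_sq, hxnorm]; norm_num
      refine ⟨hxnorm, ?_⟩
      have main : ∀ m : ℕ, ∀ i : Fin k, (i : ℕ) < m →
          (‖v (n+1) i‖ = 1 ∧ ⟪v (n+1) i, x (n+1)⟫ = 0) := by
        intro m
        induction m with
        | zero => intro i hi; omega
        | succ m IHm =>
        intro i hi
        have IH : ∀ j : Fin k, j < i → (‖v (n+1) j‖ = 1 ∧ ⟪v (n+1) j, x (n+1)⟫ = 0) := by
          intro j hj
          exact IHm j (by omega)
        obtain ⟨hw_ne, hveq⟩ := hvstep n hn i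
        have hvh : ∀ u : EuclideanSpace ℝ (Fin d),
            ⟪u - ⟪u, x (n+1)⟫ • x (n+1), x (n+1)⟫ = 0 := by
          intro u
          rw [inner_sub_left, real_inner_smul_left, hxx]; ring
        have hwx : ⟪(v n i + τ • J (x n) (v n i) -
              ⟪v n i + τ • J (x n) (v n i), x (n+1)⟫ • x (n+1)) -
            ∑ j ∈ Finset.Iio i, ⟪v n i + τ • J (x n) (v n i) -
              ⟪v n i + τ • J (x n) (v n i), x (n+1)⟫ • x (n+1), v (n+1) j⟫ • v (n+1) j,
            x (n+1)⟫ = 0 := by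
          rw [inner_sub_left, hvh, sum_inner]
          have : ∀ j ∈ Finset.Iio i, ⟪(⟪v n i + τ • J (x n) (v n i) -
              ⟪v n i + τ • J (x n) (v n i), x (n+1)⟫ • x (n+1), v (n+1) j⟫ : ℝ) • v (n+1) j,
              x (n+1)⟫ = (0:ℝ) := by
            intro j hj
            rw [real_inner_smul_left, (IH j (Finset.mem_Iio.mp hj)).2, mul_zero]
          rw [Finset.sum_congr rfl this]
          simp
        constructor
        · rw [hveq, norm_smul, norm_inv, norm_norm]
          exact inv_mul_cancel₀ (norm_ne_zero_iff.mpr hw_ne)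
        · rw [hveq, real_inner_smul_left, hwx, mul_zero]
      exact fun i => main ((i : ℕ) + 1) i (Nat.lt_succ_self _)
  intro n hn
  obtain ⟨hx1, hvs⟩ := key n hn.le
  have hFb : ‖F (x n)‖ ≤ 2*L := by
    have := hgrow (x n); rw [hx1] at this; linarith
  set s := ∑ j, ⟪v n j, F (x n)⟫ • v n j with hs
  have hsb : ‖s‖ ≤ (k:ℝ) * (2*L) := by
    calc ‖s‖ ≤ ∑ j, ‖(⟪v n j, F (x n)⟫ : ℝ) • v n j‖ := norm_sum_le _ _
    _ ≤ ∑ _j : Fin k, 2*L := by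
        apply Finset.sum_le_sum; intro j _
        rw [norm_smul, (hvs j).1, mul_one, Real.norm_eq_abs]
        calc |(⟪v n j, F (x n)⟫ : ℝ)| ≤ ‖v n j‖ * ‖F (x n)‖ := abs_real_inner_le_norm _ _
        _ ≤ 2*L := by rw [(hvs j).1, one_mul]; exact hFb
    _ = (k:ℝ) * (2*L) := by simp [Finset.sum_const, Finset.card_univ]
  set S := F (x n) - (2:ℝ) • s with hS
  have hSb : ‖S‖ ≤ 2*L*(1+2*(k:ℝ)) := by
    calc ‖S‖ ≤ ‖F (x n)‖ + ‖(2:ℝ) • s‖ := norm_sub_le _ _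
    _ ≤ 2*L + 2*((k:ℝ)*(2*L)) := by
        rw [norm_smul, Real.norm_eq_abs]
        have : |(2:ℝ)| = 2 := by norm_num
        rw [this]
        have hk0 : (0:ℝ) ≤ 2 := by norm_num
        nlinarith [hsb, hFb]
    _ = 2*L*(1+2*(k:ℝ)) := by ring
  have hinner : ⟪x n, S⟫ = ⟪x n, F (x n)⟫ := by
    rw [hS, inner_sub_right, real_inner_smul_right, hs, inner_sum]
    have : ∀ j ∈ (Finset.univ : Finset (Fin k)),
        ⟪x n, (⟪v n j, F (x n)⟫ : ℝ) • v n j⟫ = (0:ℝ) := by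
      intro j _
      have h0 : ⟪x n, v n j⟫ = (0:ℝ) := by rw [real_inner_comm]; exact (hvs j).2
      rw [real_inner_smul_right, h0, mul_zero]
    rw [Finset.sum_congr rfl this]
    simp
  have hexp : ‖x n + τ • S‖^2 = 1 + 2*τ*⟪x n, F (x n)⟫ + τ^2 * ‖S‖^2 := by
    rw [norm_add_sq_real, real_inner_smul_right, hinner, norm_smul, hx1,
      Real.norm_eq_abs, mul_pow, sq_abs]
    ring
  rw [hexp]
  have h1 : 1 + 2*τ*⟪x n, F (x n)⟫ + τ^2 * ‖S‖^2 - 1 - 2 * τ * ⟪x n, F (x n)⟫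
      = τ^2 * ‖S‖^2 := by ring
  rw [h1, abs_of_nonneg (by positivity : (0:ℝ) ≤ τ^2 * ‖S‖^2)]
  have h2 : ‖S‖^2 ≤ (2*L*(1+2*(k:ℝ)))^2 := by
    nlinarith [norm_nonneg S]
  nlinarith [sq_nonneg τ]
end
end

section
/- Under Assumption A, there exist τ₀ > 0 and Q > 0, depending only on d, k, L and T, such that for every N ∈ ℕ with τ = T/N ≤ τ₀, the iterates of the constrained discrete HiSD scheme satisfy ‖(x_n − x_{n−1})/τ − S^{n−1} + x_{n−1} x_{n−1}ᵀ F(x_{n−1})‖ ≤ Q τ for all 1 ≤ n ≤ N; that is, the explicit Euler step followed by the normalization retraction recovers, up to an O(τ) error, the Euler discretization of the constrained state dynamics dx/dt = S − x xᵀ F(x). -/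
open scoped RealInnerProductSpace BigOperators

noncomputable section

set_option maxHeartbeats 1000000 in
theorem hisd_stmt12
    (d k : ℕ) (hd : 1 ≤ d) (hk : 1 ≤ k) (hkd : k ≤ d)
    (F : EuclideanSpace ℝ (Fin d) → EuclideanSpace ℝ (Fin d))
    (J : EuclideanSpace ℝ (Fin d) → (EuclideanSpace ℝ (Fin d) →L[ℝ] EuclideanSpace ℝ (Fin d)))
    (hJsymm : ∀ x u w, ⟪J x u, w⟫ = ⟪u, J x w⟫)
    (L : ℝ) (hL : 0 < L)
    (hLip : ∀ x₁ x₂ : EuclideanSpace ℝ (Fin d), ‖J x₂ - J x₁‖ + ‖F x₂ - F x₁‖ ≤ L * ‖x₂ - x₁‖)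
    (hgrow : ∀ x : EuclideanSpace ℝ (Fin d), ‖F x‖ ≤ L * (1 + ‖x‖))
    (T : ℝ) (hT : 0 < T)
    (x₀ : EuclideanSpace ℝ (Fin d)) (hx₀ : ‖x₀‖ = 1)
    (v₀ : Fin k → EuclideanSpace ℝ (Fin d))
    (hv₀ : ∀ i j : Fin k, ⟪v₀ i, v₀ j⟫ = if i = j then (1:ℝ) else 0)
    (hv₀x : ∀ i : Fin k, ⟪v₀ i, x₀⟫ = 0) :
    ∃ τ₀ > (0:ℝ), ∃ Q > (0:ℝ), ∀ (N : ℕ) (τ : ℝ), 0 < N → τ = T / N → τ ≤ τ₀ →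
      ∀ (x : ℕ → EuclideanSpace ℝ (Fin d)) (v : ℕ → Fin k → EuclideanSpace ℝ (Fin d)),
        x 0 = x₀ → v 0 = v₀ →
        (∀ n < N,
          let xt := x n + τ • (F (x n) - (2:ℝ) • ∑ j, ⟪v n j, F (x n)⟫ • v n j)
          xt ≠ 0 ∧ x (n+1) = ‖xt‖⁻¹ • xt) →
        (∀ n < N, ∀ i : Fin k,
          let vt := v n i + τ • J (x n) (v n i)
          let vh := vt - ⟪vt, x (n+1)⟫ • x (n+1)
          let w := vh - ∑ j ∈ Finset.Iio i, ⟪vh, v (n+1) j⟫ • v (n+1) j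
          w ≠ 0 ∧ v (n+1) i = ‖w‖⁻¹ • w) →
        ∀ n < N,
          ‖τ⁻¹ • (x (n+1) - x n) -
            (F (x n) - (2:ℝ) • ∑ j, ⟪v n j, F (x n)⟫ • v n j) +
            ⟪x n, F (x n)⟫ • x n‖ ≤ Q * τ := by
  have hk0 : (0:ℝ) < 1 + 2*(k:ℝ) := by positivity
  set M : ℝ := 2*L*(1+2*(k:ℝ)) with hMdef
  have hM : 0 < M := by positivity
  set A : ℝ := 4*L + M^2 with hAdef
  have hA : 0 < A := by positivity
  set B : ℝ := 8*L*A + M^2 with hBdef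
  have hB : 0 < B := by positivity
  refine ⟨min 1 (1/(8*L+A)), by positivity, 2*B + 2*A*M, by positivity, ?_⟩
  intro N τ hN hτdef hττ₀ x v hx0 hv0 hxstep hvstep
  have hNpos : (0:ℝ) < (N:ℝ) := by exact_mod_cast hN
  have hτpos : 0 < τ := by rw [hτdef]; exact div_pos hT hNpos
  have hτne : τ ≠ 0 := ne_of_gt hτpos
  have hτ1 : τ ≤ 1 := le_trans hττ₀ (min_le_left _ _)
  have hτ2 : τ ≤ 1/(8*L+A) := le_trans hττ₀ (min_le_right _ _)
  have hτ3 : τ*(8*L+A) ≤ 1 := by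
    rw [le_div_iff₀ (by positivity)] at hτ2; linarith
  have hAτ1 : A*τ ≤ 1 := by nlinarith
  -- the basic manifold invariant
  have hinv : ∀ n, n ≤ N → ‖x n‖ = 1 ∧ ∀ i : Fin k, ‖v n i‖ = 1 ∧ ⟪v n i, x n⟫ = 0 := by
    intro n
    induction n with
    | zero =>
      intro _
      refine ⟨by rw [hx0]; exact hx₀, fun i => ⟨?_, ?_⟩⟩
      · rw [hv0]
        have h : ⟪v₀ i, v₀ i⟫ = (1:ℝ) := by rw [hv₀ i i, if_pos rfl]
        have h2 : ‖v₀ i‖^2 = 1 := by rw [← real_inner_self_eq_norm_sq, h]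
        have h3 : (‖v₀ i‖ - 1) * (‖v₀ i‖ + 1) = 0 := by linear_combination h2
        rcases mul_eq_zero.mp h3 with h4 | h4
        · linarith
        · linarith [norm_nonneg (v₀ i)]
      · rw [hv0, hx0]; exact hv₀x i
    | succ n ih =>
      intro hn1
      have hnN : n < N := hn1
      obtain ⟨hxn1, hvn⟩ := ih (le_of_lt hnN)
      obtain ⟨hne, hxeq⟩ := hxstep n hnN
      have hxn : ‖x (n+1)‖ = 1 := by
        rw [hxeq, norm_smul, norm_inv, norm_norm,
          inv_mul_cancel₀ (norm_ne_zero_iff.mpr hne)]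
      refine ⟨hxn, ?_⟩
      have hxx : ⟪x (n+1), x (n+1)⟫ = 1 := by
        rw [real_inner_self_eq_norm_sq, hxn]; norm_num
      have horth : ∀ m : ℕ, ∀ i : Fin k, (i:ℕ) < m → ⟪v (n+1) i, x (n+1)⟫ = 0 := by
        intro m
        induction m with
        | zero => intro i hi; omega
        | succ m ihm =>
          intro i hi
          obtain ⟨hw, hvdef⟩ := hvstep n hnN i
          rw [hvdef, real_inner_smul_left]
          have hzero : ⟪(v n i + τ • J (x n) (v n i)) -
              ⟪(v n i + τ • J (x n) (v n i)), x (n+1)⟫ • x (n+1) -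
              ∑ j ∈ Finset.Iio i,
                ⟪(v n i + τ • J (x n) (v n i)) -
                  ⟪(v n i + τ • J (x n) (v n i)), x (n+1)⟫ • x (n+1), v (n+1) j⟫ • v (n+1) j,
              x (n+1)⟫ = 0 := by
            rw [inner_sub_left, inner_sub_left, real_inner_smul_left, hxx, mul_one, sub_self,
              sum_inner, zero_sub, neg_eq_zero]
            apply Finset.sum_eq_zero
            intro j hj
            have hji : (j:ℕ) < m := by
              have := Finset.mem_Iio.mp hj
              omega
            rw [real_inner_smul_left, ihm j hji, mul_zero]
          rw [hzero, mul_zero]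
      intro i
      obtain ⟨hw, hvdef⟩ := hvstep n hnN i
      refine ⟨?_, horth k i i.isLt⟩
      rw [hvdef, norm_smul, norm_inv, norm_norm,
        inv_mul_cancel₀ (norm_ne_zero_iff.mpr hw)]
  -- the main estimate
  intro n hn
  obtain ⟨hxn, hvn⟩ := hinv n (le_of_lt hn)
  obtain ⟨hne, hxeq⟩ := hxstep n hn
  clear hxstep hvstep hinv hLip hJsymm hv₀ hv₀x hx0 hv0 hx₀ hττ₀ hτdef hτ2
  set Fx := F (x n) with hFxdef
  set S := Fx - (2:ℝ) • ∑ j, ⟪v n j, Fx⟫ • v n j with hSdef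
  set c := ⟪x n, Fx⟫ with hcdef
  set s := ‖S‖ with hsdef
  set r := ‖x n + τ • S‖ with hrdef
  have hFb : ‖Fx‖ ≤ 2*L := by
    have := hgrow (x n); rw [hxn] at this; linarith
  have hcb : |c| ≤ 2*L := by
    calc |c| ≤ ‖x n‖ * ‖Fx‖ := abs_real_inner_le_norm _ _
    _ ≤ 2*L := by rw [hxn, one_mul]; exact hFb
  obtain ⟨hcl1, hcl2⟩ := abs_le.mp hcb
  have hsum : ‖∑ j, ⟪v n j, Fx⟫ • v n j‖ ≤ (k:ℝ) * (2*L) := by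
    calc ‖∑ j, ⟪v n j, Fx⟫ • v n j‖ ≤ ∑ j : Fin k, ‖⟪v n j, Fx⟫ • v n j‖ :=
          norm_sum_le _ _
    _ ≤ ∑ _j : Fin k, 2*L := by
        apply Finset.sum_le_sum
        intro j _
        rw [norm_smul, (hvn j).1, mul_one, Real.norm_eq_abs]
        calc |⟪v n j, Fx⟫| ≤ ‖v n j‖ * ‖Fx‖ := abs_real_inner_le_norm _ _
        _ ≤ 2*L := by rw [(hvn j).1, one_mul]; exact hFb
    _ = (k:ℝ)*(2*L) := by
        rw [Finset.sum_const, Finset.card_univ, Fintype.card_fin, nsmul_eq_mul]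
  have hsnn : 0 ≤ s := norm_nonneg _
  have hsb : s ≤ M := by
    rw [hsdef, hSdef, hMdef]
    calc ‖Fx - (2:ℝ) • ∑ j, ⟪v n j, Fx⟫ • v n j‖
        ≤ ‖Fx‖ + ‖(2:ℝ) • ∑ j, ⟪v n j, Fx⟫ • v n j‖ := norm_sub_le _ _
    _ ≤ 2*L + 2*((k:ℝ)*(2*L)) := by
        rw [norm_smul, Real.norm_eq_abs, abs_of_pos (by norm_num : (0:ℝ) < 2)]
        have := mul_le_mul_of_nonneg_left hsum (by norm_num : (0:ℝ) ≤ 2)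
        linarith [hFb]
    _ = 2*L*(1+2*(k:ℝ)) := by ring
  have hs2 : s^2 ≤ M^2 := by nlinarith [hsnn, hsb, hM]
  have hxS : ⟪x n, S⟫ = c := by
    rw [hSdef, inner_sub_right, inner_smul_right, inner_sum]
    have hz : ∀ j ∈ Finset.univ, ⟪x n, ⟪v n j, Fx⟫ • v n j⟫ = 0 := by
      intro j _
      have hz0 : ⟪x n, v n j⟫ = (0:ℝ) := by rw [real_inner_comm]; exact (hvn j).2
      rw [real_inner_smul_right, hz0, mul_zero]
    rw [Finset.sum_eq_zero hz, mul_zero, sub_zero, hcdef]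
  have hr2 : r^2 = 1 + 2*τ*c + τ^2*s^2 := by
    rw [hrdef, norm_add_sq_real, hxn, real_inner_smul_right, hxS, norm_smul,
      Real.norm_eq_abs, abs_of_pos hτpos, mul_pow, hsdef]
    ring
  have hrnn : 0 ≤ r := norm_nonneg _
  have h8L : 8*L*τ ≤ 1 := by nlinarith
  have hr_half : 1/2 ≤ r := by
    nlinarith [sq_nonneg (τ*s), mul_nonneg hτpos.le (show 0 ≤ c + 2*L by linarith [hcl1])]
  have hτsq : τ^2 ≤ τ := by
    have h := mul_le_mul_of_nonneg_left hτ1 hτpos.le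
    rw [mul_one] at h
    calc τ^2 = τ*τ := sq τ
    _ ≤ τ := h
  have hts : τ^2*s^2 ≤ τ*M^2 := by
    have e1 : τ*s^2 ≤ τ*M^2 := mul_le_mul_of_nonneg_left hs2 hτpos.le
    have e2 : τ^2*s^2 ≤ τ*s^2 := mul_le_mul_of_nonneg_right hτsq (sq_nonneg s)
    linarith
  have htc : τ*c ≤ 2*L*τ := by
    have := mul_le_mul_of_nonneg_left hcl2 hτpos.le; linarith
  have htc2 : -(2*L*τ) ≤ τ*c := by
    have := mul_le_mul_of_nonneg_left hcl1 hτpos.le; linarith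
  have hrub : r - 1 ≤ A*τ := by
    nlinarith [hr2, htc, hts, hrnn, sq_nonneg (A*τ), mul_nonneg hA.le hτpos.le]
  have hrlb : -(A*τ) ≤ r - 1 := by
    nlinarith [hr2, htc2, sq_nonneg (τ*s), hrnn, hAτ1, mul_nonneg hA.le hτpos.le]
  have hrne : r ≠ 0 := by intro h; rw [h] at hr_half; linarith
  have key_id : (1 - r + τ*c*r)*(1+r) = τ*c*(r-1)*(r+2) - τ^2*s^2 := by
    linear_combination -hr2
  have hub : |1 - r + τ*c*r| ≤ B*τ^2 := by
    have hr4 : r + 2 ≤ 4 := by linarith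
    have e1 : |τ*c*(r-1)*(r+2)| ≤ 8*L*A*τ^2 := by
      rw [abs_mul, abs_mul, abs_mul, abs_of_pos hτpos,
        abs_of_pos (show (0:ℝ) < r+2 by linarith)]
      have hr1' : |r-1| ≤ A*τ := abs_le.mpr ⟨by linarith, by linarith⟩
      have p1 : τ * |c| ≤ τ*(2*L) := mul_le_mul_of_nonneg_left hcb hτpos.le
      have p2 : τ * |c| * |r-1| ≤ (τ*(2*L))*(A*τ) :=
        mul_le_mul p1 hr1' (abs_nonneg _) (by positivity)
      have p3 : τ * |c| * |r-1| * (r+2) ≤ ((τ*(2*L))*(A*τ))*4 :=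
        mul_le_mul p2 hr4 (by linarith) (by positivity)
      calc τ * |c| * |r-1| * (r+2) ≤ ((τ*(2*L))*(A*τ))*4 := p3
      _ = 8*L*A*τ^2 := by ring
    have e2 : |τ^2*s^2| ≤ M^2*τ^2 := by
      rw [abs_of_nonneg (by positivity)]
      calc τ^2*s^2 = s^2*τ^2 := by ring
      _ ≤ M^2*τ^2 := mul_le_mul_of_nonneg_right hs2 (sq_nonneg τ)
    have h1 : |τ*c*(r-1)*(r+2) - τ^2*s^2| ≤ B*τ^2 := by
      calc |τ*c*(r-1)*(r+2) - τ^2*s^2| ≤ |τ*c*(r-1)*(r+2)| + |τ^2*s^2| := abs_sub _ _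
      _ ≤ 8*L*A*τ^2 + M^2*τ^2 := add_le_add e1 e2
      _ = B*τ^2 := by rw [hBdef]; ring
    have h2 : |1 - r + τ*c*r| * 1 ≤ |1 - r + τ*c*r| * (1+r) :=
      mul_le_mul_of_nonneg_left (by linarith) (abs_nonneg _)
    have h3 : |1 - r + τ*c*r| * (1+r) = |(1 - r + τ*c*r)*(1+r)| := by
      rw [abs_mul, abs_of_pos (show (0:ℝ) < 1+r by linarith)]
    rw [key_id] at h3
    calc |1 - r + τ*c*r| = |1 - r + τ*c*r| * 1 := by ring
    _ ≤ |1 - r + τ*c*r| * (1+r) := h2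
    _ = |τ*c*(r-1)*(r+2) - τ^2*s^2| := h3
    _ ≤ B*τ^2 := h1
  set b : ℝ := r⁻¹ - 1 with hbdef
  set a : ℝ := τ⁻¹*(r⁻¹-1) + c with hadef
  have ha_id : a * (τ*r) = 1 - r + τ*c*r := by
    rw [hadef]; field_simp
  have hb_id : b * r = 1 - r := by
    rw [hbdef]; field_simp
  have ha_abs : |a| * (τ*r) = |1 - r + τ*c*r| := by
    rw [← ha_id, abs_mul, abs_of_pos (by positivity : (0:ℝ) < τ*r)]
  have hb_abs : |b| * r = |1 - r| := by
    rw [← hb_id, abs_mul, abs_of_pos (show (0:ℝ) < r by linarith)]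
  have hb1 : |1 - r| ≤ A*τ := abs_le.mpr ⟨by linarith, by linarith⟩
  have ha2 : |a| ≤ 2*B*τ := by
    have q1 : |a| * (τ*r) ≤ B*τ^2 := by rw [ha_abs]; exact hub
    have q2 : τ*(1/2) ≤ τ*r := mul_le_mul_of_nonneg_left hr_half hτpos.le
    have q3 : |a| * (τ*(1/2)) ≤ B*τ^2 :=
      le_trans (mul_le_mul_of_nonneg_left q2 (abs_nonneg a)) q1
    have q4 : |a| * τ ≤ (2*B*τ)*τ := by
      calc |a| * τ = 2*(|a| * (τ*(1/2))) := by ring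
      _ ≤ 2*(B*τ^2) := by linarith
      _ = (2*B*τ)*τ := by ring
    exact le_of_mul_le_mul_right q4 hτpos
  have hb2 : |b| ≤ 2*A*τ := by
    have q1 : |b| * r ≤ A*τ := by rw [hb_abs]; exact hb1
    have q2 : |b| * (1/2) ≤ |b| * r :=
      mul_le_mul_of_nonneg_left hr_half (abs_nonneg b)
    linarith
  have hdec : τ⁻¹ • (x (n+1) - x n) - S + c • x n = a • x n + b • S := by
    rw [hxeq, hadef, hbdef]
    match_scalars <;> field_simp <;> ring
  rw [hdec]
  have hsplit : ‖a • x n + b • S‖ ≤ |a| + |b| * s := by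
    calc ‖a • x n + b • S‖ ≤ ‖a • x n‖ + ‖b • S‖ := norm_add_le _ _
    _ = |a| + |b| * s := by
        rw [norm_smul, norm_smul, hxn, Real.norm_eq_abs, Real.norm_eq_abs, mul_one, hsdef]
  have hbs : |b| * s ≤ 2*A*τ*M :=
    mul_le_mul hb2 hsb hsnn (by positivity)
  calc ‖a • x n + b • S‖ ≤ |a| + |b| * s := hsplit
  _ ≤ 2*B*τ + 2*A*τ*M := add_le_add ha2 hbs
  _ = (2*B + 2*A*M)*τ := by ring
end
end

section
/- Under Assumption A, there exist τ₀ > 0 and Q > 0, depending only on d, k, L and T, such that for every N ∈ ℕ with τ = T/N ≤ τ₀, the vector-transport output of the constrained discrete HiSD scheme satisfies, for all 1 ≤ i ≤ k and 1 ≤ n ≤ N, ‖v̂_{i,n} − v_{i,n−1} − τ J(x_{n−1}) v_{i,n−1} − τ (v_{i,n−1}ᵀ F(x_{n−1})) x_{n−1} + τ (v_{i,n−1}ᵀ J(x_{n−1})ᵀ x_{n−1}) x_{n−1}‖ ≤ Q τ². -/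
open scoped RealInnerProductSpace BigOperators

noncomputable section

private lemma hisd_aux1 {E : Type*} [AddCommGroup E] [Module ℝ E]
    (xn xt jv vn : E) (τ u p q r : ℝ) :
    (vn + τ • jv) - (u * (τ * (p - q) + τ^2 * r)) • (u • xt) - vn - τ • jv
      - (τ * q) • xn + (τ * p) • xn
    = (τ * (p - q)) • (xn - (u*u) • xt) - ((τ^2 * r) * (u*u)) • xt := by
  module

private lemma hisd_aux2 {E : Type*} [AddCommGroup E] [Module ℝ E]
    (xn S : E) (τ u : ℝ) :
    xn - (u*u) • (xn + τ • S) = (1 - u*u) • xn - (τ*(u*u)) • S := by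
  module

private lemma hisd_aux3 {E : Type*} [NormedAddCommGroup E] [NormedSpace ℝ E]
    (xn S : E) (τ u Ms : ℝ) (hτpos : 0 < τ) (hupos : 0 < u) (hMs0 : 0 < Ms)
    (hX : ‖xn‖ = 1) (hSb : ‖S‖ ≤ Ms) (hu1 : |1 - u*u| ≤ 12 * (τ * Ms))
    (hu2 : u ≤ 2) :
    ‖(1 - u*u) • xn - (τ*(u*u)) • S‖ ≤ 16 * (τ * Ms) := by
  have e1 : ‖(1 - u*u) • xn‖ = |1 - u*u| := by
    rw [norm_smul, Real.norm_eq_abs, hX, mul_one]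
  have e2 : ‖(τ*(u*u)) • S‖ ≤ 4 * (τ * Ms) := by
    rw [norm_smul, Real.norm_eq_abs,
      abs_of_pos (mul_pos hτpos (mul_pos hupos hupos))]
    have huu : u * u ≤ 4 := by nlinarith
    have t1 : 0 ≤ (4 - u*u) * (τ*‖S‖) :=
      mul_nonneg (by linarith) (mul_nonneg hτpos.le (norm_nonneg S))
    have t2 : τ*‖S‖ ≤ τ*Ms := mul_le_mul_of_nonneg_left hSb hτpos.le
    nlinarith [t1, t2]
  have e3 := norm_sub_le ((1 - u*u) • xn) ((τ*(u*u)) • S)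
  rw [e1] at e3
  linarith [hu1]

private lemma hisd_aux4 {E : Type*} [NormedAddCommGroup E] [NormedSpace ℝ E]
    (A B : E) (τ u α β Mf Mj Ms : ℝ)
    (hτpos : 0 < τ) (hupos : 0 < u) (hMj0 : 0 < Mj) (hMf0 : 0 < Mf) (hMs0 : 0 < Ms)
    (hA : ‖A‖ ≤ 16 * (τ * Ms)) (hB : (u*u) * ‖B‖ ≤ 2)
    (hα : |α| ≤ Mj + Mf) (hβ : |β| ≤ Mj * Ms) :
    ‖(τ * α) • A - ((τ^2 * β) * (u*u)) • B‖ ≤ (16*(Mf+Mj)*Ms + 2*Mj*Ms) * τ^2 := by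
  have n1 : ‖(τ * α) • A‖ ≤ (τ * (Mj + Mf)) * (16 * (τ * Ms)) := by
    rw [norm_smul, Real.norm_eq_abs, abs_mul, abs_of_pos hτpos]
    exact mul_le_mul (mul_le_mul_of_nonneg_left hα hτpos.le) hA (norm_nonneg _)
      (by positivity)
  have n2 : ‖((τ^2 * β) * (u*u)) • B‖ ≤ (τ^2 * (Mj * Ms)) * 2 := by
    rw [norm_smul, Real.norm_eq_abs, abs_mul,
      abs_of_pos (mul_pos hupos hupos), abs_mul,
      abs_of_pos (by positivity : (0:ℝ) < τ^2), mul_assoc]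
    refine mul_le_mul ?_ hB (by positivity) (by positivity)
    exact mul_le_mul_of_nonneg_left hβ (by positivity)
  have e3 := norm_sub_le ((τ * α) • A) (((τ^2 * β) * (u*u)) • B)
  nlinarith [e3, n1, n2]

set_option maxHeartbeats 1000000 in
theorem hisd_stmt13
    (d k : ℕ) (hd : 1 ≤ d) (hk : 1 ≤ k) (hkd : k ≤ d)
    (F : EuclideanSpace ℝ (Fin d) → EuclideanSpace ℝ (Fin d))
    (J : EuclideanSpace ℝ (Fin d) → (EuclideanSpace ℝ (Fin d) →L[ℝ] EuclideanSpace ℝ (Fin d)))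
    (hJsymm : ∀ x u w, ⟪J x u, w⟫ = ⟪u, J x w⟫)
    (L : ℝ) (hL : 0 < L)
    (hLip : ∀ x₁ x₂ : EuclideanSpace ℝ (Fin d), ‖J x₂ - J x₁‖ + ‖F x₂ - F x₁‖ ≤ L * ‖x₂ - x₁‖)
    (hgrow : ∀ x : EuclideanSpace ℝ (Fin d), ‖F x‖ ≤ L * (1 + ‖x‖))
    (T : ℝ) (hT : 0 < T)
    (x₀ : EuclideanSpace ℝ (Fin d)) (hx₀ : ‖x₀‖ = 1)
    (v₀ : Fin k → EuclideanSpace ℝ (Fin d))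
    (hv₀ : ∀ i j : Fin k, ⟪v₀ i, v₀ j⟫ = if i = j then (1:ℝ) else 0)
    (hv₀x : ∀ i : Fin k, ⟪v₀ i, x₀⟫ = 0) :
    ∃ τ₀ > (0:ℝ), ∃ Q > (0:ℝ), ∀ (N : ℕ) (τ : ℝ), 0 < N → τ = T / N → τ ≤ τ₀ →
      ∀ (x : ℕ → EuclideanSpace ℝ (Fin d)) (v : ℕ → Fin k → EuclideanSpace ℝ (Fin d)),
        x 0 = x₀ → v 0 = v₀ →
        (∀ n < N,
          let xt := x n + τ • (F (x n) - (2:ℝ) • ∑ j, ⟪v n j, F (x n)⟫ • v n j)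
          xt ≠ 0 ∧ x (n+1) = ‖xt‖⁻¹ • xt) →
        (∀ n < N, ∀ i : Fin k,
          let vt := v n i + τ • J (x n) (v n i)
          let vh := vt - ⟪vt, x (n+1)⟫ • x (n+1)
          let w := vh - ∑ j ∈ Finset.Iio i, ⟪vh, v (n+1) j⟫ • v (n+1) j
          w ≠ 0 ∧ v (n+1) i = ‖w‖⁻¹ • w) →
        ∀ n < N, ∀ i : Fin k,
          let vt := v n i + τ • J (x n) (v n i)
          let vh := vt - ⟪vt, x (n+1)⟫ • x (n+1)
          ‖vh - v n i - τ • J (x n) (v n i) -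
            (τ * ⟪v n i, F (x n)⟫) • x n +
            (τ * ⟪J (x n) (v n i), x n⟫) • x n‖ ≤ Q * τ^2 := by
  classical
  set Mj : ℝ := ‖J x₀‖ + 2*L with hMjdef
  have hMj0 : 0 < Mj := by positivity
  set Mf : ℝ := 2*L with hMfdef
  have hMf0 : 0 < Mf := by positivity
  set Ms : ℝ := (1 + 2*(k:ℝ)) * Mf with hMsdef
  have hMs0 : 0 < Ms := by positivity
  refine ⟨min 1 (1/(2*Ms)), lt_min one_pos (by positivity),
    16*(Mf+Mj)*Ms + 2*Mj*Ms, by positivity, ?_⟩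
  intro N τ hN hτeq hττ x v hx0 hv0 hxstep hvstep
  have hτpos : 0 < τ := by
    rw [hτeq]; positivity
  have hτMs : τ * Ms ≤ 1/2 := by
    have h1 : τ ≤ 1/(2*Ms) := le_trans hττ (min_le_right _ _)
    rw [le_div_iff₀ (by positivity : (0:ℝ) < 2*Ms)] at h1
    nlinarith
  -- discrete manifold invariants
  have key : ∀ n, n ≤ N → ‖x n‖ = 1 ∧ (∀ i, ⟪v n i, x n⟫ = 0) ∧
      (∀ i j, ⟪v n i, v n j⟫ = if i = j then (1:ℝ) else 0) := by
    intro n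
    induction n with
    | zero => intro _; rw [hx0, hv0]; exact ⟨hx₀, hv₀x, hv₀⟩
    | succ n ih =>
      intro hn1
      have hn : n < N := hn1
      obtain ⟨hX, hVx, hVV⟩ := ih (le_of_lt hn)
      obtain ⟨hxt0, hx1⟩ := hxstep n hn
      have hX1 : ‖x (n+1)‖ = 1 := by rw [hx1]; exact norm_smul_inv_norm hxt0
      have hxx1 : ⟪x (n+1), x (n+1)⟫ = 1 := by
        rw [real_inner_self_eq_norm_sq, hX1]; norm_num
      -- tangency of the transported vectors
      have hvh : ∀ i : Fin k,
          ⟪(v n i + τ • J (x n) (v n i)) -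
            ⟪v n i + τ • J (x n) (v n i), x (n+1)⟫ • x (n+1), x (n+1)⟫ = 0 := by
        intro i
        rw [inner_sub_left, real_inner_smul_left, hxx1]; ring
      have main : ∀ m : ℕ, ∀ i : Fin k, (i:ℕ) = m →
          ⟪v (n+1) i, x (n+1)⟫ = 0 ∧ ‖v (n+1) i‖ = 1 ∧
          ∀ j, j < i → ⟪v (n+1) i, v (n+1) j⟫ = 0 := by
        intro m
        induction m using Nat.strongRecOn with
        | ind m ihm =>
          intro i him
          have ih2 : ∀ j : Fin k, j < i →
              ⟪v (n+1) j, x (n+1)⟫ = 0 ∧ ‖v (n+1) j‖ = 1 ∧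
              ∀ j', j' < j → ⟪v (n+1) j, v (n+1) j'⟫ = 0 := by
            intro j hj
            exact ihm (j:ℕ) (him ▸ hj) j rfl
          obtain ⟨hw0, hvi⟩ := hvstep n hn i
          set vh := (v n i + τ • J (x n) (v n i)) -
            ⟪v n i + τ • J (x n) (v n i), x (n+1)⟫ • x (n+1) with hvhdef
          set w := vh - ∑ j ∈ Finset.Iio i, ⟪vh, v (n+1) j⟫ • v (n+1) j with hwdef
          have hwx : ⟪w, x (n+1)⟫ = 0 := by
            rw [hwdef, inner_sub_left, hvh i, sum_inner]
            rw [Finset.sum_eq_zero]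
            · ring
            · intro j hj
              rw [real_inner_smul_left, (ih2 j (Finset.mem_Iio.mp hj)).1, mul_zero]
          have hwv : ∀ j, j < i → ⟪w, v (n+1) j⟫ = 0 := by
            intro j hj
            rw [hwdef, inner_sub_left, sum_inner]
            have hsum : ∑ j' ∈ Finset.Iio i, ⟪⟪vh, v (n+1) j'⟫ • v (n+1) j', v (n+1) j⟫
                = ⟪vh, v (n+1) j⟫ := by
              rw [Finset.sum_eq_single j]
              · rw [real_inner_smul_left, real_inner_self_eq_norm_sq, (ih2 j hj).2.1]
                ring
              · intro j' hj' hne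
                have hj'i : j' < i := Finset.mem_Iio.mp hj'
                have horth : ⟪v (n+1) j', v (n+1) j⟫ = 0 := by
                  rcases lt_or_gt_of_ne hne with h | h
                  · rw [real_inner_comm]; exact (ih2 j hj).2.2 j' h
                  · exact (ih2 j' hj'i).2.2 j h
                rw [real_inner_smul_left, horth, mul_zero]
              · intro hmem
                exact absurd (Finset.mem_Iio.mpr hj) hmem
            rw [hsum]; ring
          refine ⟨?_, ?_, ?_⟩
          · rw [hvi, real_inner_smul_left, hwx, mul_zero]
          · rw [hvi]; exact norm_smul_inv_norm hw0
          · intro j hj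
            rw [hvi, real_inner_smul_left, hwv j hj, mul_zero]
      have main' : ∀ i : Fin k, ⟪v (n+1) i, x (n+1)⟫ = 0 ∧ ‖v (n+1) i‖ = 1 ∧
          ∀ j, j < i → ⟪v (n+1) i, v (n+1) j⟫ = 0 := fun i => main (i:ℕ) i rfl
      refine ⟨hX1, fun i => (main' i).1, fun i j => ?_⟩
      rcases lt_trichotomy i j with h | h | h
      · rw [if_neg (ne_of_lt h), real_inner_comm]
        exact (main' j).2.2 i h
      · subst h
        rw [if_pos rfl, real_inner_self_eq_norm_sq, (main' i).2.1]; norm_num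
      · rw [if_neg (ne_of_gt h)]
        exact (main' i).2.2 j h
  -- the estimate
  intro n hn i
  obtain ⟨hX, hVx, hVV⟩ := key n hn.le
  obtain ⟨hxt0, hx1⟩ := hxstep n hn
  clear hxstep hvstep key hv₀ hv₀x hJsymm hx0 hv0 hτeq hττ hN hT hd hk hkd
  have hvnorm : ∀ j, ‖v n j‖ = 1 := by
    intro j
    have h2 : ‖v n j‖^2 = 1 := by
      rw [← real_inner_self_eq_norm_sq]; simpa using hVV j j
    nlinarith [norm_nonneg (v n j)]
  have hFn : ‖F (x n)‖ ≤ Mf := by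
    have := hgrow (x n); rw [hX] at this; rw [hMfdef]; linarith
  set S := F (x n) - (2:ℝ) • ∑ j, ⟪v n j, F (x n)⟫ • v n j with hSdef
  have hSb : ‖S‖ ≤ Ms := by
    have hsum : ‖∑ j, ⟪v n j, F (x n)⟫ • v n j‖ ≤ (k:ℝ) * Mf := by
      refine le_trans (norm_sum_le _ _) ?_
      have : ∀ j : Fin k, ‖⟪v n j, F (x n)⟫ • v n j‖ ≤ Mf := by
        intro j
        rw [norm_smul, hvnorm j, mul_one]
        exact le_trans (abs_real_inner_le_norm _ _)
          (by rw [hvnorm j, one_mul]; exact hFn)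
      calc ∑ j, ‖⟪v n j, F (x n)⟫ • v n j‖ ≤ ∑ _j : Fin k, Mf :=
            Finset.sum_le_sum (fun j _ => this j)
        _ = (k:ℝ) * Mf := by simp [mul_comm]
    calc ‖S‖ ≤ ‖F (x n)‖ + ‖(2:ℝ) • ∑ j, ⟪v n j, F (x n)⟫ • v n j‖ := norm_sub_le _ _
      _ ≤ Mf + 2 * ((k:ℝ) * Mf) := by
          have he : ‖(2:ℝ) • ∑ j, ⟪v n j, F (x n)⟫ • v n j‖
              = 2 * ‖∑ j, ⟪v n j, F (x n)⟫ • v n j‖ := by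
            rw [norm_smul]; norm_num
          rw [he]
          exact add_le_add hFn (by nlinarith)
      _ = Ms := by rw [hMsdef]; ring
  have hJb : ‖J (x n)‖ ≤ Mj := by
    have h1 := hLip x₀ (x n)
    have h2 : ‖x n - x₀‖ ≤ 2 := by
      calc ‖x n - x₀‖ ≤ ‖x n‖ + ‖x₀‖ := norm_sub_le _ _
        _ = 2 := by rw [hX, hx₀]; norm_num
    have h3 : ‖J (x n) - J x₀‖ ≤ L * 2 := by
      have h5 := mul_le_mul_of_nonneg_left h2 hL.le
      linarith [norm_nonneg (F (x n) - F x₀)]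
    have h4 : ‖J (x n)‖ ≤ ‖J x₀‖ + ‖J (x n) - J x₀‖ := by
      have h6 : J x₀ + (J (x n) - J x₀) = J (x n) := by abel
      calc ‖J (x n)‖ = ‖J x₀ + (J (x n) - J x₀)‖ := by rw [h6]
        _ ≤ ‖J x₀‖ + ‖J (x n) - J x₀‖ := norm_add_le _ _
    rw [hMjdef]; linarith
  have hAvb : ‖J (x n) (v n i)‖ ≤ Mj := by
    calc ‖J (x n) (v n i)‖ ≤ ‖J (x n)‖ * ‖v n i‖ := ContinuousLinearMap.le_opNorm _ _
      _ ≤ Mj := by rw [hvnorm i, mul_one]; exact hJb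
  set α : ℝ := ⟪J (x n) (v n i), x n⟫ - ⟪v n i, F (x n)⟫ with hαdef
  set β : ℝ := ⟪J (x n) (v n i), S⟫ with hβdef
  have hαb : |α| ≤ Mj + Mf := by
    rw [hαdef]
    refine le_trans (abs_sub _ _) (add_le_add ?_ ?_)
    · exact le_trans (abs_real_inner_le_norm _ _) (by rw [hX, mul_one]; exact hAvb)
    · exact le_trans (abs_real_inner_le_norm _ _) (by rw [hvnorm i, one_mul]; exact hFn)
  have hβb : |β| ≤ Mj * Ms := by
    rw [hβdef]
    exact le_trans (abs_real_inner_le_norm _ _)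
      (mul_le_mul hAvb hSb (norm_nonneg _) hMj0.le)
  set xt := x n + τ • S with hxtdef
  have hr : (1:ℝ)/2 ≤ ‖xt‖ := by
    have h1 : ‖x n‖ ≤ ‖xt‖ + ‖τ • S‖ := by
      have h6 : x n = xt - τ • S := by rw [hxtdef]; abel
      calc ‖x n‖ = ‖xt - τ • S‖ := by rw [← h6]
        _ ≤ ‖xt‖ + ‖τ • S‖ := norm_sub_le _ _
    have h2 : ‖τ • S‖ ≤ τ * Ms := by
      rw [norm_smul, Real.norm_eq_abs, abs_of_pos hτpos]
      exact mul_le_mul_of_nonneg_left hSb hτpos.le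
    rw [hX] at h1; linarith
  have hrpos : (0:ℝ) < ‖xt‖ := lt_of_lt_of_le one_half_pos hr
  set u : ℝ := ‖xt‖⁻¹ with hudef
  have hupos : 0 < u := inv_pos.mpr hrpos
  have hu2 : u ≤ 2 := by
    have h6 : ‖xt‖⁻¹ ≤ ((1:ℝ)/2)⁻¹ := inv_anti₀ one_half_pos hr
    rw [hudef]
    norm_num at h6 ⊢
    linarith
  have hru : ‖xt‖ * u = 1 := mul_inv_cancel₀ (ne_of_gt hrpos)
  clear_value S α β xt u
  -- r² - 1 bound
  have hr2 : ‖xt‖^2 = 1 + 2*τ*⟪x n, S⟫ + τ^2*‖S‖^2 := by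
    rw [← real_inner_self_eq_norm_sq, hxtdef]
    simp only [inner_add_left, inner_add_right, real_inner_smul_left, real_inner_smul_right]
    rw [real_inner_self_eq_norm_sq (x n), hX, real_inner_self_eq_norm_sq S,
      real_inner_comm S (x n)]
    ring
  have hxS : |⟪x n, S⟫| ≤ Ms := le_trans (abs_real_inner_le_norm _ _)
    (by rw [hX, one_mul]; exact hSb)
  have hr2b : |‖xt‖^2 - 1| ≤ 3 * (τ * Ms) := by
    rw [hr2]
    have h1 : |2*τ*⟪x n, S⟫| ≤ 2*(τ*Ms) := by
      rw [abs_mul, abs_mul]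
      rw [abs_of_pos hτpos]
      have : |(2:ℝ)| = 2 := by norm_num
      rw [this]
      nlinarith [abs_nonneg (⟪x n, S⟫)]
    have h2 : τ^2*‖S‖^2 ≤ (τ*Ms)*(1/2) := by
      have h6 : τ * ‖S‖ ≤ τ * Ms := mul_le_mul_of_nonneg_left hSb hτpos.le
      have h7 : (τ*‖S‖)*(τ*‖S‖) ≤ (τ*Ms)*(τ*Ms) :=
        mul_le_mul h6 h6 (by positivity) (by positivity)
      have h8 : (τ*Ms)*(τ*Ms) ≤ (τ*Ms)*(1/2) :=
        mul_le_mul_of_nonneg_left hτMs (by positivity)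
      nlinarith [h7, h8]
    have h3 : 0 ≤ τ^2*‖S‖^2 := by positivity
    have heq : (1 + 2*τ*⟪x n, S⟫ + τ^2*‖S‖^2 - 1) = 2*τ*⟪x n, S⟫ + τ^2*‖S‖^2 := by ring
    rw [heq]
    refine le_trans (abs_add_le _ _) ?_
    rw [abs_of_nonneg h3]
    linarith
  have hu1 : |1 - u*u| ≤ 12 * (τ * Ms) := by
    have : 1 - u*u = (‖xt‖^2 - 1) * (u*u) := by
      field_simp [hudef]
      linear_combination (-(‖xt‖ * u + 1)) * hru
    rw [this, abs_mul]
    have hu4 : |u*u| ≤ 4 := by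
      rw [abs_of_pos (by positivity)]; nlinarith
    nlinarith [abs_nonneg (‖xt‖^2 - 1), mul_le_mul hr2b hu4 (abs_nonneg _) (by positivity)]
  -- inner product computation
  have hvnS : ⟪v n i, S⟫ = -⟪v n i, F (x n)⟫ := by
    rw [hSdef, inner_sub_right, real_inner_smul_right, inner_sum]
    have hsum : ∑ j, ⟪v n i, ⟪v n j, F (x n)⟫ • v n j⟫ = ⟪v n i, F (x n)⟫ := by
      rw [Finset.sum_eq_single i]
      · rw [real_inner_smul_right, hVV i i, if_pos rfl]; ring
      · intro j _ hne
        rw [real_inner_smul_right, hVV i j, if_neg (Ne.symm hne), mul_zero]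
      · intro h; exact absurd (Finset.mem_univ i) h
    rw [hsum]; ring
  have hc : ⟪v n i + τ • J (x n) (v n i), xt⟫ = τ * α + τ^2 * β := by
    rw [hxtdef]
    simp only [inner_add_left, inner_add_right, real_inner_smul_left, real_inner_smul_right]
    rw [hVx i, hvnS, hαdef, hβdef]
    ring
  have hip : ⟪v n i + τ • J (x n) (v n i), x (n+1)⟫ = u * (τ * α + τ^2 * β) := by
    rw [hx1, real_inner_smul_right, hc, hudef]
  -- the algebraic identity
  have hE : (v n i + τ • J (x n) (v n i)) -
        ⟪v n i + τ • J (x n) (v n i), x (n+1)⟫ • x (n+1) - v n i - τ • J (x n) (v n i) -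
        (τ * ⟪v n i, F (x n)⟫) • x n + (τ * ⟪J (x n) (v n i), x n⟫) • x n
      = (τ * α) • (x n - (u*u) • xt) - ((τ^2 * β) * (u*u)) • xt := by
    rw [hip, hx1, hαdef]
    exact hisd_aux1 (x n) xt (J (x n) (v n i)) (v n i) τ u _ _ β
  have hsplit : x n - (u*u) • xt = (1 - u*u) • x n - (τ*(u*u)) • S := by
    rw [hxtdef]; exact hisd_aux2 (x n) S τ u
  have h1n : ‖x n - (u*u) • xt‖ ≤ 16 * (τ * Ms) := by
    rw [hsplit]
    exact hisd_aux3 (x n) S τ u Ms hτpos hupos hMs0 hX hSb hu1 hu2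
  have hfinal : ‖(v n i + τ • J (x n) (v n i)) -
        ⟪v n i + τ • J (x n) (v n i), x (n+1)⟫ • x (n+1) - v n i - τ • J (x n) (v n i) -
        (τ * ⟪v n i, F (x n)⟫) • x n + (τ * ⟪J (x n) (v n i), x n⟫) • x n‖
      ≤ (16*(Mf+Mj)*Ms + 2*Mj*Ms) * τ^2 := by
    rw [hE]
    have ha3 : (u*u) * ‖xt‖ ≤ 2 := by
      calc (u*u) * ‖xt‖ = u * (‖xt‖ * u) := by ring
        _ = u := by rw [hru, mul_one]
        _ ≤ 2 := hu2
    exact hisd_aux4 (x n - (u*u) • xt) xt τ u α β Mf Mj Ms hτpos hupos hMj0 hMf0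
      hMs0 h1n ha3 hαb hβb
  exact hfinal
end
end

section
/- Under Assumption A, there exist τ₀ > 0 and Q > 0, depending only on d, k, L and T, such that for every N ∈ ℕ with τ = T/N ≤ τ₀, the iterates of the constrained discrete HiSD scheme satisfy ‖v_{i,n} − v_{i,n−1}‖ ≤ Q τ for all 1 ≤ i ≤ k and 1 ≤ n ≤ N. -/
open scoped RealInnerProductSpace BigOperators

noncomputable section

lemma gs_sum_Iio (k : ℕ) (i : Fin k) (g : ℕ → ℝ) :
    ∑ j ∈ Finset.Iio i, g (j : ℕ) = ∑ m ∈ Finset.range (i : ℕ), g m := by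
  rw [← Nat.Iio_eq_range, ← Fin.map_valEmbedding_Iio, Finset.sum_map]
  rfl

lemma gs_geom (n : ℕ) : ∑ m ∈ Finset.range n, (3:ℝ)^(m+1) = (3^(n+1) - 3)/2 := by
  induction n with
  | zero => simp
  | succ n ih => rw [Finset.sum_range_succ, ih]; ring

lemma gs_step {E : Type*} [NormedAddCommGroup E] [InnerProductSpace ℝ E]
    {k : ℕ} {τ M Cx : ℝ} (hτ : 0 ≤ τ) (hM : 0 ≤ M) (hCx : 0 ≤ Cx)
    (Jo : E →L[ℝ] E)
    (hJM : ∀ u : E, ‖u‖ = 1 → ‖Jo u‖ ≤ M)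
    (xo xn : E) (vo vn : Fin k → E)
    (hxn : ‖xn‖ = 1)
    (hdx : ‖xn - xo‖ ≤ Cx * τ)
    (hvo : ∀ i j : Fin k, ⟪vo i, vo j⟫ = if i = j then (1:ℝ) else 0)
    (hvox : ∀ i : Fin k, ⟪vo i, xo⟫ = 0)
    (hstep : ∀ i : Fin k,
      (vn i = ‖(vo i + τ • Jo (vo i)) - ⟪vo i + τ • Jo (vo i), xn⟫ • xn
          - ∑ j ∈ Finset.Iio i, ⟪(vo i + τ • Jo (vo i)) - ⟪vo i + τ • Jo (vo i), xn⟫ • xn, vn j⟫ • vn j‖⁻¹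
          • ((vo i + τ • Jo (vo i)) - ⟪vo i + τ • Jo (vo i), xn⟫ • xn
          - ∑ j ∈ Finset.Iio i, ⟪(vo i + τ • Jo (vo i)) - ⟪vo i + τ • Jo (vo i), xn⟫ • xn, vn j⟫ • vn j))
      ∧ ((vo i + τ • Jo (vo i)) - ⟪vo i + τ • Jo (vo i), xn⟫ • xn
          - ∑ j ∈ Finset.Iio i, ⟪(vo i + τ • Jo (vo i)) - ⟪vo i + τ • Jo (vo i), xn⟫ • xn, vn j⟫ • vn j) ≠ 0) :
    (∀ i j : Fin k, ⟪vn i, vn j⟫ = if i = j then (1:ℝ) else 0) ∧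
    (∀ i : Fin k, ⟪vn i, xn⟫ = 0) ∧
    (∀ i : Fin k, ‖vn i - vo i‖ ≤ 2*(M+Cx) * (3^((i:ℕ)+1) - 1) * τ) := by
  set A := 2*(M+Cx) with hA_def
  have hA : 0 ≤ A := by positivity
  have hvon : ∀ i, ‖vo i‖ = 1 := by
    intro i
    rw [norm_eq_sqrt_real_inner, hvo i i]
    simp
  -- main inner induction
  have Φ : ∀ m : ℕ, ∀ j : Fin k, (j:ℕ) < m →
      (‖vn j‖ = 1 ∧ ⟪vn j, xn⟫ = 0 ∧
       (∀ j' : Fin k, (j':ℕ) < (j:ℕ) → ⟪vn j, vn j'⟫ = 0) ∧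
       ‖vn j - vo j‖ ≤ A * (3^((j:ℕ)+1) - 1) * τ) := by
    intro m
    induction m with
    | zero => intro j hj; omega
    | succ m IH =>
      intro i hi
      by_cases hcase : (i:ℕ) < m
      · exact IH i hcase
      have him : (i:ℕ) = m := by omega
      -- the new index
      obtain ⟨hvi, hw0⟩ := hstep i
      set vt := vo i + τ • Jo (vo i) with hvt_def
      set e := ⟪vt, xn⟫ with he_def
      set vh := vt - e • xn with hvh_def
      set w := vh - ∑ j ∈ Finset.Iio i, ⟪vh, vn j⟫ • vn j with hw_def
      have hvo_i : ‖vo i‖ = 1 := hvon i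
      -- bound on ‖vt - vo i‖
      have hJv : ‖Jo (vo i)‖ ≤ M := hJM (vo i) hvo_i
      have hvt_sub : ‖vt - vo i‖ ≤ M * τ := by
        have : vt - vo i = τ • Jo (vo i) := by rw [hvt_def]; abel
        rw [this, norm_smul, Real.norm_eq_abs, abs_of_nonneg hτ]
        calc τ * ‖Jo (vo i)‖ ≤ τ * M := by
              exact mul_le_mul_of_nonneg_left hJv hτ
          _ = M * τ := by ring
      -- bound on |e|
      have he : |e| ≤ (Cx + M) * τ := by
        have h1 : e = ⟪vo i, xn - xo⟫ + τ * ⟪Jo (vo i), xn⟫ := by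
          rw [he_def, hvt_def, inner_add_left, real_inner_smul_left, inner_sub_right, hvox i]
          ring
        rw [h1]
        have h2 : |⟪vo i, xn - xo⟫| ≤ Cx * τ := by
          calc |⟪vo i, xn - xo⟫| ≤ ‖vo i‖ * ‖xn - xo‖ := abs_real_inner_le_norm _ _
            _ = ‖xn - xo‖ := by rw [hvo_i, one_mul]
            _ ≤ Cx * τ := hdx
        have h3 : |τ * ⟪Jo (vo i), xn⟫| ≤ M * τ := by
          rw [abs_mul, abs_of_nonneg hτ]
          calc τ * |⟪Jo (vo i), xn⟫| ≤ τ * (‖Jo (vo i)‖ * ‖xn‖) :=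
                mul_le_mul_of_nonneg_left (abs_real_inner_le_norm _ _) hτ
            _ = τ * ‖Jo (vo i)‖ := by rw [hxn, mul_one]
            _ ≤ τ * M := mul_le_mul_of_nonneg_left hJv hτ
            _ = M * τ := by ring
        calc |⟪vo i, xn - xo⟫ + τ * ⟪Jo (vo i), xn⟫|
            ≤ |⟪vo i, xn - xo⟫| + |τ * ⟪Jo (vo i), xn⟫| := abs_add_le _ _
          _ ≤ Cx * τ + M * τ := add_le_add h2 h3
          _ = (Cx + M) * τ := by ring
      -- bound on ‖vh - vo i‖
      have hvh_sub : ‖vh - vo i‖ ≤ A * τ := by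
        have : vh - vo i = (vt - vo i) - e • xn := by rw [hvh_def]; abel
        rw [this]
        calc ‖(vt - vo i) - e • xn‖ ≤ ‖vt - vo i‖ + ‖e • xn‖ := norm_sub_le _ _
          _ = ‖vt - vo i‖ + |e| := by rw [norm_smul, Real.norm_eq_abs, hxn, mul_one]
          _ ≤ M * τ + (Cx + M) * τ := add_le_add hvt_sub he
          _ ≤ A * τ := by rw [hA_def]; nlinarith
      -- vh ⟂ xn
      have hvh_x : ⟪vh, xn⟫ = 0 := by
        rw [hvh_def, inner_sub_left, real_inner_smul_left, real_inner_self_eq_norm_sq, hxn, ← he_def]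
        ring
      -- bounds on coefficients
      have hcj : ∀ j : Fin k, (j:ℕ) < (i:ℕ) → |⟪vh, vn j⟫| ≤ A * 3^((j:ℕ)+1) * τ := by
        intro j hj
        obtain ⟨hnj, -, -, hbj⟩ := IH j (by omega)
        have hij : i ≠ j := by intro h; rw [h] at hj; omega
        have h1 : ⟪vh, vn j⟫ = ⟪vh - vo i, vn j⟫ + ⟪vo i, vn j - vo j⟫ := by
          simp only [inner_sub_left, inner_sub_right]
          have := hvo i j
          rw [if_neg hij] at this
          rw [this]; ring
        rw [h1]
        have h2 : |⟪vh - vo i, vn j⟫| ≤ A * τ := by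
          calc |⟪vh - vo i, vn j⟫| ≤ ‖vh - vo i‖ * ‖vn j‖ := abs_real_inner_le_norm _ _
            _ = ‖vh - vo i‖ := by rw [hnj, mul_one]
            _ ≤ A * τ := hvh_sub
        have h3 : |⟪vo i, vn j - vo j⟫| ≤ A * (3^((j:ℕ)+1) - 1) * τ := by
          calc |⟪vo i, vn j - vo j⟫| ≤ ‖vo i‖ * ‖vn j - vo j‖ := abs_real_inner_le_norm _ _
            _ = ‖vn j - vo j‖ := by rw [hvo_i, one_mul]
            _ ≤ A * (3^((j:ℕ)+1) - 1) * τ := hbj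
        calc |⟪vh - vo i, vn j⟫ + ⟪vo i, vn j - vo j⟫|
            ≤ |⟪vh - vo i, vn j⟫| + |⟪vo i, vn j - vo j⟫| := abs_add_le _ _
          _ ≤ A * τ + A * (3^((j:ℕ)+1) - 1) * τ := add_le_add h2 h3
          _ = A * 3^((j:ℕ)+1) * τ := by ring
      -- bound the sum
      have hsum : ‖∑ j ∈ Finset.Iio i, ⟪vh, vn j⟫ • vn j‖ ≤ A * ((3^((i:ℕ)+1) - 3)/2) * τ := by
        calc ‖∑ j ∈ Finset.Iio i, ⟪vh, vn j⟫ • vn j‖ ≤ ∑ j ∈ Finset.Iio i, ‖⟪vh, vn j⟫ • vn j‖ :=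
              norm_sum_le _ _
          _ ≤ ∑ j ∈ Finset.Iio i, A * 3^((j:ℕ)+1) * τ := by
              apply Finset.sum_le_sum
              intro j hj
              have hj' : (j:ℕ) < (i:ℕ) := Fin.lt_def.mp (Finset.mem_Iio.mp hj)
              obtain ⟨hnj, -, -, -⟩ := IH j (by omega)
              rw [norm_smul, Real.norm_eq_abs, hnj, mul_one]
              exact hcj j hj'
          _ = A * ((3^((i:ℕ)+1) - 3)/2) * τ := by
              rw [gs_sum_Iio k i (fun m => A * 3^(m+1) * τ), ← Finset.sum_mul, ← Finset.mul_sum,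
                gs_geom]
      -- ‖w - vo i‖
      have hw_sub : ‖w - vo i‖ ≤ A * ((3^((i:ℕ)+1) - 1)/2) * τ := by
        have : w - vo i = (vh - vo i) - ∑ j ∈ Finset.Iio i, ⟪vh, vn j⟫ • vn j := by rw [hw_def]; abel
        rw [this]
        calc ‖(vh - vo i) - ∑ j ∈ Finset.Iio i, ⟪vh, vn j⟫ • vn j‖
            ≤ ‖vh - vo i‖ + ‖∑ j ∈ Finset.Iio i, ⟪vh, vn j⟫ • vn j‖ := norm_sub_le _ _
          _ ≤ A * τ + A * ((3^((i:ℕ)+1) - 3)/2) * τ := add_le_add hvh_sub hsum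
          _ = A * ((3^((i:ℕ)+1) - 1)/2) * τ := by ring
      -- norm of w facts
      have hwn : ‖w‖ ≠ 0 := norm_ne_zero_iff.mpr hw0
      have hwpos : 0 < ‖w‖ := norm_pos_iff.mpr hw0
      have hvn_i_norm : ‖vn i‖ = 1 := by
        rw [hvi, norm_smul, Real.norm_eq_abs, abs_of_nonneg (inv_nonneg.mpr (norm_nonneg w)),
          inv_mul_cancel₀ hwn]
      -- distance from vn i to w
      have hvnw : ‖vn i - w‖ ≤ ‖w - vo i‖ := by
        have h1 : vn i - w = (‖w‖⁻¹ - 1) • w := by rw [hvi, sub_smul, one_smul]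
        rw [h1, norm_smul, Real.norm_eq_abs]
        have h2 : |‖w‖⁻¹ - 1| * ‖w‖ = |1 - ‖w‖| := by
          rw [← abs_of_nonneg (norm_nonneg w), ← abs_mul]
          congr 1
          field_simp
          rw [abs_of_nonneg (norm_nonneg w)]; ring
        rw [h2]
        calc |1 - ‖w‖| = |‖vo i‖ - ‖w‖| := by rw [hvo_i]
          _ ≤ ‖vo i - w‖ := abs_norm_sub_norm_le _ _
          _ = ‖w - vo i‖ := norm_sub_rev _ _
      -- the main bound
      have hbound : ‖vn i - vo i‖ ≤ A * (3^((i:ℕ)+1) - 1) * τ := by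
        calc ‖vn i - vo i‖ = ‖(vn i - w) + (w - vo i)‖ := by abel_nf
          _ ≤ ‖vn i - w‖ + ‖w - vo i‖ := norm_add_le _ _
          _ ≤ ‖w - vo i‖ + ‖w - vo i‖ := add_le_add hvnw le_rfl
          _ ≤ A * ((3^((i:ℕ)+1) - 1)/2) * τ + A * ((3^((i:ℕ)+1) - 1)/2) * τ :=
              add_le_add hw_sub hw_sub
          _ = A * (3^((i:ℕ)+1) - 1) * τ := by ring
      -- orthogonality to xn
      have hwx : ⟪w, xn⟫ = 0 := by
        rw [hw_def, inner_sub_left, hvh_x, sum_inner]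
        have : ∀ j ∈ Finset.Iio i, ⟪⟪vh, vn j⟫ • vn j, xn⟫ = 0 := by
          intro j hj
          have hj' : (j:ℕ) < (i:ℕ) := Fin.lt_def.mp (Finset.mem_Iio.mp hj)
          obtain ⟨-, hjx, -, -⟩ := IH j (by omega)
          rw [real_inner_smul_left, hjx, mul_zero]
        rw [Finset.sum_eq_zero this]
        ring
      have hvnx : ⟪vn i, xn⟫ = 0 := by
        rw [hvi, real_inner_smul_left, hwx, mul_zero]
      -- orthogonality to previous vn j'
      have hvnort : ∀ j' : Fin k, (j':ℕ) < (i:ℕ) → ⟪vn i, vn j'⟫ = 0 := by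
        intro j' hj'
        obtain ⟨hnj', -, -, -⟩ := IH j' (by omega)
        have hwj' : ⟪w, vn j'⟫ = 0 := by
          rw [hw_def, inner_sub_left, sum_inner]
          have hmem : j' ∈ Finset.Iio i := Finset.mem_Iio.mpr (Fin.lt_def.mpr hj')
          rw [Finset.sum_eq_single_of_mem j' hmem]
          · rw [real_inner_smul_left, real_inner_self_eq_norm_sq, hnj']
            ring
          · intro j hj hne
            have hjlt : (j:ℕ) < (i:ℕ) := Fin.lt_def.mp (Finset.mem_Iio.mp hj)
            rw [real_inner_smul_left]
            have : ⟪vn j, vn j'⟫ = 0 := by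
              rcases lt_or_gt_of_ne (fun h : (j:ℕ) = (j':ℕ) => hne (Fin.ext h)) with h | h
              · obtain ⟨-, -, ho, -⟩ := IH j' (by omega)
                rw [real_inner_comm]
                exact ho j h
              · obtain ⟨-, -, ho, -⟩ := IH j (by omega)
                exact ho j' h
            rw [this, mul_zero]
        rw [hvi, real_inner_smul_left, hwj', mul_zero]
      exact ⟨hvn_i_norm, hvnx, hvnort, hbound⟩
  -- conclude
  have Φk := Φ k
  refine ⟨?_, ?_, ?_⟩
  · intro i j
    by_cases h : i = j
    · subst h
      obtain ⟨hn, -, -, -⟩ := Φk i i.isLt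
      rw [if_pos rfl, real_inner_self_eq_norm_sq, hn]; norm_num
    · rw [if_neg h]
      rcases lt_or_gt_of_ne (fun hh : (i:ℕ) = (j:ℕ) => h (Fin.ext hh)) with hh | hh
      · obtain ⟨-, -, ho, -⟩ := Φk j j.isLt
        rw [real_inner_comm]
        exact ho i hh
      · obtain ⟨-, -, ho, -⟩ := Φk i i.isLt
        exact ho j hh
  · intro i
    obtain ⟨-, hx, -, -⟩ := Φk i i.isLt
    exact hx
  · intro i
    obtain ⟨-, -, -, hb⟩ := Φk i i.isLt
    exact hb

theorem hisd_stmt14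
    (d k : ℕ) (hd : 1 ≤ d) (hk : 1 ≤ k) (hkd : k ≤ d)
    (F : EuclideanSpace ℝ (Fin d) → EuclideanSpace ℝ (Fin d))
    (J : EuclideanSpace ℝ (Fin d) → (EuclideanSpace ℝ (Fin d) →L[ℝ] EuclideanSpace ℝ (Fin d)))
    (hJsymm : ∀ x u w, ⟪J x u, w⟫ = ⟪u, J x w⟫)
    (L : ℝ) (hL : 0 < L)
    (hLip : ∀ x₁ x₂ : EuclideanSpace ℝ (Fin d), ‖J x₂ - J x₁‖ + ‖F x₂ - F x₁‖ ≤ L * ‖x₂ - x₁‖)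
    (hgrow : ∀ x : EuclideanSpace ℝ (Fin d), ‖F x‖ ≤ L * (1 + ‖x‖))
    (T : ℝ) (hT : 0 < T)
    (x₀ : EuclideanSpace ℝ (Fin d)) (hx₀ : ‖x₀‖ = 1)
    (v₀ : Fin k → EuclideanSpace ℝ (Fin d))
    (hv₀ : ∀ i j : Fin k, ⟪v₀ i, v₀ j⟫ = if i = j then (1:ℝ) else 0)
    (hv₀x : ∀ i : Fin k, ⟪v₀ i, x₀⟫ = 0) :
    ∃ τ₀ > (0:ℝ), ∃ Q > (0:ℝ), ∀ (N : ℕ) (τ : ℝ), 0 < N → τ = T / N → τ ≤ τ₀ →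
      ∀ (x : ℕ → EuclideanSpace ℝ (Fin d)) (v : ℕ → Fin k → EuclideanSpace ℝ (Fin d)),
        x 0 = x₀ → v 0 = v₀ →
        (∀ n < N,
          let xt := x n + τ • (F (x n) - (2:ℝ) • ∑ j, ⟪v n j, F (x n)⟫ • v n j)
          xt ≠ 0 ∧ x (n+1) = ‖xt‖⁻¹ • xt) →
        (∀ n < N, ∀ i : Fin k,
          let vt := v n i + τ • J (x n) (v n i)
          let vh := vt - ⟪vt, x (n+1)⟫ • x (n+1)
          let w := vh - ∑ j ∈ Finset.Iio i, ⟪vh, v (n+1) j⟫ • v (n+1) j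
          w ≠ 0 ∧ v (n+1) i = ‖w‖⁻¹ • w) →
        ∀ n < N, ∀ i : Fin k, ‖v (n+1) i - v n i‖ ≤ Q * τ := by
  set M : ℝ := ‖J x₀‖ + 2*L with hM_def
  set Cx : ℝ := 4*L*(1+2*(k:ℝ)) with hCx_def
  have hM : 0 ≤ M := by positivity
  have hCx : 0 ≤ Cx := by positivity
  refine ⟨T, hT, 2*(M+Cx)*3^k, by positivity, ?_⟩
  intro N τ hN hτN hττ₀ x v hx0 hv0 hxstep hvstep
  have hτpos : 0 < τ := by
    rw [hτN]
    have : (0:ℝ) < N := by exact_mod_cast hN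
    positivity
  have hτ : 0 ≤ τ := le_of_lt hτpos
  -- operator norm bound on the sphere
  have hJM : ∀ y : EuclideanSpace ℝ (Fin d), ‖y‖ = 1 →
      ∀ u : EuclideanSpace ℝ (Fin d), ‖u‖ = 1 → ‖J y u‖ ≤ M := by
    intro y hy u hu
    have h1 : ‖J y u‖ ≤ ‖J y‖ * ‖u‖ := ContinuousLinearMap.le_opNorm _ _
    have h2 : ‖J y - J x₀‖ ≤ L * ‖y - x₀‖ := by
      have := hLip x₀ y
      have h3 : (0:ℝ) ≤ ‖F y - F x₀‖ := norm_nonneg _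
      linarith
    have h4 : ‖y - x₀‖ ≤ 2 := by
      calc ‖y - x₀‖ ≤ ‖y‖ + ‖x₀‖ := norm_sub_le _ _
        _ = 2 := by rw [hy, hx₀]; norm_num
    have h5 : ‖J y‖ ≤ ‖J x₀‖ + L * ‖y - x₀‖ := by
      calc ‖J y‖ = ‖J x₀ + (J y - J x₀)‖ := by rw [add_sub_cancel]
        _ ≤ ‖J x₀‖ + ‖J y - J x₀‖ := norm_add_le _ _
        _ ≤ ‖J x₀‖ + L * ‖y - x₀‖ := by linarith
    have h6 : ‖J y‖ ≤ M := by
      rw [hM_def]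
      have : L * ‖y - x₀‖ ≤ L * 2 := mul_le_mul_of_nonneg_left h4 (le_of_lt hL)
      linarith
    calc ‖J y u‖ ≤ ‖J y‖ * ‖u‖ := h1
      _ = ‖J y‖ := by rw [hu, mul_one]
      _ ≤ M := h6
  -- "good" invariant
  have step : ∀ n, n < N →
      (‖x n‖ = 1 ∧ (∀ i j : Fin k, ⟪v n i, v n j⟫ = if i = j then (1:ℝ) else 0) ∧
        (∀ i : Fin k, ⟪v n i, x n⟫ = 0)) →
      ((‖x (n+1)‖ = 1 ∧ (∀ i j : Fin k, ⟪v (n+1) i, v (n+1) j⟫ = if i = j then (1:ℝ) else 0) ∧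
        (∀ i : Fin k, ⟪v (n+1) i, x (n+1)⟫ = 0)) ∧
       ∀ i : Fin k, ‖v (n+1) i - v n i‖ ≤ 2*(M+Cx) * (3^((i:ℕ)+1) - 1) * τ) := by
    intro n hn hgood
    obtain ⟨hxn1, hvon, hvox⟩ := hgood
    obtain ⟨hxt0, hxeq⟩ := hxstep n hn
    set S := F (x n) - (2:ℝ) • ∑ j, ⟪v n j, F (x n)⟫ • v n j with hS_def
    set xt := x n + τ • S with hxt_def
    have hvnorm : ∀ j : Fin k, ‖v n j‖ = 1 := by
      intro j
      rw [norm_eq_sqrt_real_inner, hvon j j]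
      simp
    have hF : ‖F (x n)‖ ≤ 2*L := by
      have := hgrow (x n)
      rw [hxn1] at this
      linarith
    have hSb : ‖S‖ ≤ 2*L*(1+2*(k:ℝ)) := by
      have hsum : ‖∑ j, ⟪v n j, F (x n)⟫ • v n j‖ ≤ (k:ℝ) * (2*L) := by
        calc ‖∑ j, ⟪v n j, F (x n)⟫ • v n j‖
            ≤ ∑ j, ‖⟪v n j, F (x n)⟫ • v n j‖ := norm_sum_le _ _
          _ ≤ ∑ _j : Fin k, 2*L := by
              apply Finset.sum_le_sum
              intro j _
              rw [norm_smul, Real.norm_eq_abs, hvnorm j, mul_one]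
              calc |⟪v n j, F (x n)⟫| ≤ ‖v n j‖ * ‖F (x n)‖ := abs_real_inner_le_norm _ _
                _ = ‖F (x n)‖ := by rw [hvnorm j, one_mul]
                _ ≤ 2*L := hF
          _ = (k:ℝ) * (2*L) := by
              rw [Finset.sum_const, Finset.card_univ, Fintype.card_fin, nsmul_eq_mul]
      calc ‖S‖ ≤ ‖F (x n)‖ + ‖(2:ℝ) • ∑ j, ⟪v n j, F (x n)⟫ • v n j‖ := norm_sub_le _ _
        _ ≤ 2*L + 2*((k:ℝ)*(2*L)) := by
            rw [norm_smul, Real.norm_eq_abs]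
            have : |(2:ℝ)| = 2 := by norm_num
            rw [this]
            nlinarith
        _ = 2*L*(1+2*(k:ℝ)) := by ring
    have hxtd : ‖xt - x n‖ = τ * ‖S‖ := by
      rw [hxt_def]
      have : x n + τ • S - x n = τ • S := by abel
      rw [this, norm_smul, Real.norm_eq_abs, abs_of_nonneg hτ]
    have hx1 : ‖x (n+1)‖ = 1 := by
      rw [hxeq, norm_smul, Real.norm_eq_abs,
        abs_of_nonneg (inv_nonneg.mpr (norm_nonneg xt)),
        inv_mul_cancel₀ (norm_ne_zero_iff.mpr hxt0)]
    have hdx : ‖x (n+1) - x n‖ ≤ Cx * τ := by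
      have h1 : ‖x (n+1) - xt‖ = |1 - ‖xt‖| := by
        rw [hxeq]
        have : ‖xt‖⁻¹ • xt - xt = (‖xt‖⁻¹ - 1) • xt := by rw [sub_smul, one_smul]
        rw [this, norm_smul, Real.norm_eq_abs]
        rw [← abs_of_nonneg (norm_nonneg xt), ← abs_mul]
        congr 1
        have hxtn : ‖xt‖ ≠ 0 := norm_ne_zero_iff.mpr hxt0
        field_simp
        rw [abs_of_nonneg (norm_nonneg xt)]; ring
      have h2 : |1 - ‖xt‖| ≤ τ * ‖S‖ := by
        calc |1 - ‖xt‖| = |‖x n‖ - ‖xt‖| := by rw [hxn1]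
          _ ≤ ‖x n - xt‖ := abs_norm_sub_norm_le _ _
          _ = ‖xt - x n‖ := norm_sub_rev _ _
          _ = τ * ‖S‖ := hxtd
      calc ‖x (n+1) - x n‖ = ‖(x (n+1) - xt) + (xt - x n)‖ := by abel_nf
        _ ≤ ‖x (n+1) - xt‖ + ‖xt - x n‖ := norm_add_le _ _
        _ ≤ τ * ‖S‖ + τ * ‖S‖ := by rw [h1, hxtd]; exact add_le_add h2 le_rfl
        _ ≤ τ * (2*L*(1+2*(k:ℝ))) + τ * (2*L*(1+2*(k:ℝ))) := by
            have := mul_le_mul_of_nonneg_left hSb hτ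
            linarith
        _ = Cx * τ := by rw [hCx_def]; ring
    have hmain := gs_step (E := EuclideanSpace ℝ (Fin d)) hτ hM hCx (J (x n))
      (hJM (x n) hxn1) (x n) (x (n+1)) (v n) (v (n+1)) hx1 hdx hvon hvox
      (fun i => ⟨(hvstep n hn i).2, (hvstep n hn i).1⟩)
    exact ⟨⟨hx1, hmain.1, hmain.2.1⟩, hmain.2.2⟩
  have good : ∀ n, n ≤ N →
      (‖x n‖ = 1 ∧ (∀ i j : Fin k, ⟪v n i, v n j⟫ = if i = j then (1:ℝ) else 0) ∧
        (∀ i : Fin k, ⟪v n i, x n⟫ = 0)) := by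
    intro n
    induction n with
    | zero => intro _; rw [hx0, hv0]; exact ⟨hx₀, hv₀, hv₀x⟩
    | succ m ih =>
      intro h
      exact (step m (by omega) (ih (by omega))).1
  intro n hn i
  have hb := (step n hn (good n (le_of_lt hn))).2 i
  have h3 : (3:ℝ)^((i:ℕ)+1) - 1 ≤ 3^k := by
    have : (i:ℕ)+1 ≤ k := i.isLt
    have h4 : (3:ℝ)^((i:ℕ)+1) ≤ 3^k := by
      apply pow_le_pow_right₀ (by norm_num) this
    linarith
  calc ‖v (n+1) i - v n i‖ ≤ 2*(M+Cx) * (3^((i:ℕ)+1) - 1) * τ := hb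
    _ ≤ 2*(M+Cx) * 3^k * τ := by
        apply mul_le_mul_of_nonneg_right _ hτ
        apply mul_le_mul_of_nonneg_left h3 (by positivity)
end
end

section
/- Under Assumption A, there exist τ₀ > 0 and Q > 0, depending only on d, k, L and T, such that for every N ∈ ℕ with τ = T/N ≤ τ₀, the Gram–Schmidt normalization factor of the constrained discrete HiSD scheme satisfies |Z_{i,n}² − 1 − 2τ v_{i,n−1}ᵀ J(x_{n−1}) v_{i,n−1}| ≤ Q τ² for all 1 ≤ i ≤ k and 1 ≤ n ≤ N, and consequently |1/Z_{i,n} − 1 + τ v_{i,n−1}ᵀ J(x_{n−1}) v_{i,n−1}| ≤ Q τ². -/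
open scoped RealInnerProductSpace BigOperators

noncomputable section

section Aux
variable {E : Type*} [NormedAddCommGroup E] [InnerProductSpace ℝ E] {ι : Type*}

lemma aux_norm_add_smul (u w : E) (c : ℝ) :
    ‖u + c • w‖^2 = ‖u‖^2 + 2*c*⟪u,w⟫ + c^2*‖w‖^2 := by
  rw [norm_add_sq_real, real_inner_smul_right, norm_smul]
  simp [mul_pow]; ring

lemma aux_sum_bound (s : Finset ι) (e : ι → E) (he : ∀ i ∈ s, ‖e i‖ = 1) (c : ι → ℝ) :
    ‖∑ j ∈ s, c j • e j‖ ≤ ∑ j ∈ s, |c j| := by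
  refine (norm_sum_le _ _).trans (Finset.sum_le_sum fun j hj => ?_)
  rw [norm_smul, he j hj, mul_one, Real.norm_eq_abs]

lemma aux_GS [DecidableEq ι] (s : Finset ι) (e : ι → E)
    (ho : ∀ i ∈ s, ∀ j ∈ s, ⟪e i, e j⟫ = if i = j then (1:ℝ) else 0) (h : E) :
    ‖h - ∑ j ∈ s, ⟪h, e j⟫ • e j‖^2 = ‖h‖^2 - ∑ j ∈ s, ⟪h, e j⟫^2 := by
  have hp : ⟪h, ∑ j ∈ s, ⟪h, e j⟫ • e j⟫ = ∑ j ∈ s, ⟪h, e j⟫^2 := by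
    rw [inner_sum]
    exact Finset.sum_congr rfl fun j hj => by rw [real_inner_smul_right]; ring
  have hn : ‖∑ j ∈ s, ⟪h, e j⟫ • e j‖^2 = ∑ j ∈ s, ⟪h, e j⟫^2 := by
    rw [← real_inner_self_eq_norm_sq, sum_inner]
    refine Finset.sum_congr rfl fun i hi => ?_
    rw [real_inner_smul_left, inner_sum]
    rw [Finset.sum_eq_single i]
    · rw [real_inner_smul_right, ho i hi i hi, if_pos rfl]; ring
    · intro j hj hji
      rw [real_inner_smul_right, ho i hi j hj, if_neg (Ne.symm hji)]; ring
    · intro h'; exact absurd hi h'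
  rw [norm_sub_sq_real, hp, hn]; ring

lemma aux_sq_one {t : ℝ} (ht : 0 ≤ t) (h : t^2 = 1) : t = 1 := by
  have h2 : (t - 1) * (t + 1) = 0 := by linear_combination h
  rcases mul_eq_zero.mp h2 with h3 | h3
  · linarith
  · linarith

end Aux


lemma arith_P5 {M C1 E0 Q1 kR τ J2 c s a : ℝ} (hQ1 : Q1 = M^2 + C1^2 + kR*E0^2)
    (hJ20 : 0 ≤ J2) (hJ2M : J2 ≤ M^2) (hc : c^2 ≤ (C1*τ)^2) (hs0 : 0 ≤ s)
    (hsle : s ≤ kR*(E0*τ)^2) :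
    |1 + 2*τ*a + τ^2*J2 - c^2 - s - 1 - 2*τ*a| ≤ Q1*τ^2 := by
  subst hQ1
  rw [abs_le]
  constructor
  · nlinarith [sq_nonneg (τ*M), mul_nonneg (sq_nonneg τ) hJ20]
  · nlinarith [sq_nonneg (C1*τ), sq_nonneg (E0*τ), mul_nonneg (sq_nonneg τ) (sub_nonneg.mpr hJ2M), sq_nonneg c]

lemma arith_Zlb {Z M Q1 a τ : ℝ} (h1 : -(Q1*τ^2) ≤ Z^2 - 1 - 2*τ*a)
    (h2 : -M ≤ a) (hτM : τ*M ≤ 1/8) (hτQ1 : τ*Q1 ≤ 1/2)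
    (hτ : 0 < τ) (hτ1 : τ ≤ 1) (hZ : 0 ≤ Z) : 1/2 ≤ Z := by
  have h14 : 1/4 ≤ Z^2 := by
    nlinarith [mul_le_mul_of_nonneg_left hτQ1 hτ.le,
      mul_nonneg hτ.le (by linarith : (0:ℝ) ≤ a + M)]
  nlinarith

set_option maxHeartbeats 1000000 in
lemma arith_P6 {Z A M Q1 Q2 τ : ℝ} (hQ2 : Q2 = 2*(3*M^2 + 2*M^3 + 2*Q1))
    (hM1 : 1 ≤ M) (hZpos : 0 < Z) (hZlb : 1/2 ≤ Z)
    (hP5 : |Z^2 - 1 - 2*τ*A| ≤ Q1*τ^2) (hA : |A| ≤ M)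
    (hτpos : 0 < τ) (hτ1 : τ ≤ 1) (hτM : τ*M ≤ 1/8) :
    |Z⁻¹ - 1 + τ*A| ≤ Q2*τ^2 := by
  have hZne : Z ≠ 0 := ne_of_gt hZpos
  have hAM := abs_le.mp hA
  have hkey : (Z⁻¹ - 1 + τ*A) * (Z*(1+Z*(1-τ*A))) = 1 - Z^2*(1-τ*A)^2 := by
    field_simp
    ring
  have hτA : |τ*A| ≤ 1/8 := by
    rw [abs_mul, abs_of_pos hτpos]
    calc τ * |A| ≤ τ * M := mul_le_mul_of_nonneg_left hA hτpos.le
    _ ≤ 1/8 := hτM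
  have hτA' := abs_le.mp hτA
  have hden : 1/2 ≤ Z*(1+Z*(1-τ*A)) := by
    nlinarith [hZlb, hτA'.2, mul_nonneg (sq_nonneg Z) (by linarith : (0:ℝ) ≤ 1 - τ*A)]
  have hA2 : A^2 ≤ M^2 := by nlinarith [hAM.1, hAM.2]
  have hq1 : (0:ℝ) ≤ M^2 + M*A + A^2 := by nlinarith [sq_nonneg (2*A+M), sq_nonneg M]
  have hq2 : (0:ℝ) ≤ M^2 - M*A + A^2 := by nlinarith [sq_nonneg (2*A-M), sq_nonneg M]
  have hcube_ub : A^3 ≤ M^3 := by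
    nlinarith [mul_nonneg (sub_nonneg.mpr hAM.2) hq1]
  have hcube_lb : -(M^3) ≤ A^3 := by
    nlinarith [mul_nonneg (by linarith [hAM.1] : (0:ℝ) ≤ A + M) hq2]
  have hnum : |1 - Z^2*(1-τ*A)^2| ≤ (3*M^2 + 2*M^3 + 2*Q1)*τ^2 := by
    have hid : 1 - Z^2*(1-τ*A)^2
        = (3*τ^2*A^2 - 2*τ^3*A^3) - (Z^2 - 1 - 2*τ*A)*(1-τ*A)^2 := by ring
    rw [hid]
    have hM0 : (0:ℝ) ≤ M := by linarith
    have h1 : |3*τ^2*A^2 - 2*τ^3*A^3| ≤ 3*M^2*τ^2 + 2*M^3*τ^2 := by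
      rw [abs_le]
      constructor
      · nlinarith [mul_nonneg (mul_nonneg (sq_nonneg τ) (sub_nonneg.mpr hτ1)) (pow_nonneg hM0 3),
          mul_nonneg (pow_nonneg hτpos.le 3) (sub_nonneg.mpr hcube_ub),
          mul_nonneg (sq_nonneg τ) (sub_nonneg.mpr hA2), sq_nonneg (τ*A)]
      · nlinarith [mul_nonneg (mul_nonneg (sq_nonneg τ) (sub_nonneg.mpr hτ1)) (pow_nonneg hM0 3),
          mul_nonneg (pow_nonneg hτpos.le 3) (by linarith [hcube_lb] : (0:ℝ) ≤ A^3 + M^3),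
          mul_nonneg (sq_nonneg τ) (sub_nonneg.mpr hA2), sq_nonneg (τ*A)]
    have h3 : |(Z^2 - 1 - 2*τ*A)*(1-τ*A)^2| ≤ 2*Q1*τ^2 := by
      rw [abs_mul, abs_of_nonneg (sq_nonneg (1 - τ*A))]
      have hb : (1-τ*A)^2 ≤ 2 := by nlinarith [hτA'.1, hτA'.2]
      have hQ1nn : (0:ℝ) ≤ Q1*τ^2 := le_trans (abs_nonneg _) hP5
      calc |Z^2 - 1 - 2*τ*A| * (1-τ*A)^2 ≤ (Q1*τ^2) * 2 :=
          mul_le_mul hP5 hb (sq_nonneg _) hQ1nn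
      _ = 2*Q1*τ^2 := by ring
    calc |(3*τ^2*A^2 - 2*τ^3*A^3) - (Z^2 - 1 - 2*τ*A)*(1-τ*A)^2|
        ≤ |3*τ^2*A^2 - 2*τ^3*A^3| + |(Z^2 - 1 - 2*τ*A)*(1-τ*A)^2| := by
          rw [sub_eq_add_neg]
          exact (abs_add_le _ _).trans (by rw [abs_neg])
    _ ≤ (3*M^2*τ^2 + 2*M^3*τ^2) + 2*Q1*τ^2 := add_le_add h1 h3
    _ = (3*M^2 + 2*M^3 + 2*Q1)*τ^2 := by ring
  have habs : |Z⁻¹ - 1 + τ*A| * (Z*(1+Z*(1-τ*A))) = |1 - Z^2*(1-τ*A)^2| := by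
    rw [← abs_of_nonneg (by linarith : (0:ℝ) ≤ Z*(1+Z*(1-τ*A))), ← abs_mul, hkey]
  nlinarith [habs, hnum, hden, abs_nonneg (Z⁻¹ - 1 + τ*A), hQ2, sq_nonneg τ]

lemma arith_dev0 {C1 M kR A0 τ D : ℝ} (hA0 : A0 = 2*(C1+M+kR*M))
    (hD : D ≤ (C1+M)*τ) (hk : 0 ≤ kR) (hM : 0 ≤ M) (hτ : 0 ≤ τ) :
    D ≤ A0 * 1 * τ / 2 := by
  subst hA0
  nlinarith [mul_nonneg (mul_nonneg hk hM) hτ]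

lemma arith_dev {C1 M kR A0 B P τ D S : ℝ} (hA0 : A0 = 2*(C1+M+kR*M)) (hB : B = 2*kR+1)
    (hD : D ≤ (C1+M)*τ + S) (hS : S ≤ kR*((A0*P+M)*τ) ) (hP1 : 1 ≤ P)
    (hk : 0 ≤ kR) (hM : 0 ≤ M) (hC1 : 0 ≤ C1) (hτ : 0 ≤ τ) :
    D ≤ A0*(P*B)*τ/2 := by
  subst hA0; subst hB
  nlinarith [mul_nonneg (mul_nonneg hτ (by positivity : (0:ℝ) ≤ 2*(C1+M+kR*M))) (by linarith : (0:ℝ) ≤ P - 1)]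

set_option maxHeartbeats 2000000 in
lemma hisd_step {d k : ℕ} {M CS C1 A0 B C2 E0 Q1 Q2 τ : ℝ}
    (hM1 : 1 ≤ M)
    (hCS : CS = (1 + 2*(k:ℝ)) * M)
    (hC1 : C1 = 2*(CS + M + M*CS))
    (hA0 : A0 = 2*(C1 + M + (k:ℝ)*M))
    (hB : B = 2*(k:ℝ) + 1)
    (hC2 : C2 = A0 * B^k)
    (hE0 : E0 = C2 + M)
    (hQ1 : Q1 = M^2 + C1^2 + (k:ℝ)*E0^2)
    (hQ2 : Q2 = 2*(3*M^2 + 2*M^3 + 2*Q1))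
    (hτpos : 0 < τ) (hτ1 : τ ≤ 1) (hτCS : τ*CS ≤ 1/2) (hτM : τ*M ≤ 1/8) (hτQ1 : τ*Q1 ≤ 1/2)
    (Jn : EuclideanSpace ℝ (Fin d) →L[ℝ] EuclideanSpace ℝ (Fin d)) (Fn : EuclideanSpace ℝ (Fin d)) (hJn : ‖Jn‖ ≤ M) (hFn : ‖Fn‖ ≤ M)
    (xn x' : EuclideanSpace ℝ (Fin d)) (vn v' : Fin k → EuclideanSpace ℝ (Fin d))
    (hxn : ‖xn‖ = 1)
    (hvx : ∀ i, ⟪vn i, xn⟫ = 0)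
    (hvv : ∀ i j, ⟪vn i, vn j⟫ = if i = j then (1:ℝ) else 0)
    (hsx : x' = ‖xn + τ • (Fn - (2:ℝ) • ∑ j, ⟪vn j, Fn⟫ • vn j)‖⁻¹ •
      (xn + τ • (Fn - (2:ℝ) • ∑ j, ⟪vn j, Fn⟫ • vn j)))
    (hsv : ∀ i : Fin k,
      (vn i + τ • Jn (vn i) - ⟪vn i + τ • Jn (vn i), x'⟫ • x' -
        ∑ j ∈ Finset.Iio i, ⟪vn i + τ • Jn (vn i) - ⟪vn i + τ • Jn (vn i), x'⟫ • x', v' j⟫ • v' j) ≠ 0 ∧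
      v' i = ‖vn i + τ • Jn (vn i) - ⟪vn i + τ • Jn (vn i), x'⟫ • x' -
        ∑ j ∈ Finset.Iio i, ⟪vn i + τ • Jn (vn i) - ⟪vn i + τ • Jn (vn i), x'⟫ • x', v' j⟫ • v' j‖⁻¹ •
        (vn i + τ • Jn (vn i) - ⟪vn i + τ • Jn (vn i), x'⟫ • x' -
        ∑ j ∈ Finset.Iio i, ⟪vn i + τ • Jn (vn i) - ⟪vn i + τ • Jn (vn i), x'⟫ • x', v' j⟫ • v' j)) :
    ‖x'‖ = 1 ∧ (∀ i, ⟪v' i, x'⟫ = 0) ∧ (∀ i j, ⟪v' i, v' j⟫ = if i = j then (1:ℝ) else 0) ∧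
    ∀ i : Fin k,
      |‖vn i + τ • Jn (vn i) - ⟪vn i + τ • Jn (vn i), x'⟫ • x' -
        ∑ j ∈ Finset.Iio i, ⟪vn i + τ • Jn (vn i) - ⟪vn i + τ • Jn (vn i), x'⟫ • x', v' j⟫ • v' j‖^2
        - 1 - 2 * τ * ⟪vn i, Jn (vn i)⟫| ≤ Q1 * τ^2 ∧
      |‖vn i + τ • Jn (vn i) - ⟪vn i + τ • Jn (vn i), x'⟫ • x' -
        ∑ j ∈ Finset.Iio i, ⟪vn i + τ • Jn (vn i) - ⟪vn i + τ • Jn (vn i), x'⟫ • x', v' j⟫ • v' j‖⁻¹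
        - 1 + τ * ⟪vn i, Jn (vn i)⟫| ≤ Q2 * τ^2 := by
  have hk0 : (0:ℝ) ≤ (k:ℝ) := Nat.cast_nonneg k
  have hMpos : 0 < M := lt_of_lt_of_le one_pos hM1
  have hCSpos : 0 < CS := by
    rw [hCS]; exact mul_pos (by positivity) hMpos
  have hC1pos : 0 < C1 := by
    rw [hC1]; have := mul_pos hMpos hCSpos; linarith
  have hA0pos : 0 < A0 := by
    rw [hA0]; have := mul_nonneg hk0 hMpos.le; linarith
  have hB1 : 1 ≤ B := by rw [hB]; linarith
  have hC2pos : 0 < C2 := by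
    rw [hC2]; exact mul_pos hA0pos (pow_pos (by linarith) k)
  have hE0pos : 0 < E0 := by rw [hE0]; linarith
  -- abbreviations
  obtain ⟨vt, hvt⟩ : ∃ f : Fin k → EuclideanSpace ℝ (Fin d), ∀ i, f i = vn i + τ • Jn (vn i) := ⟨_, fun _ => rfl⟩
  obtain ⟨vh, hvh⟩ : ∃ f : Fin k → EuclideanSpace ℝ (Fin d), ∀ i, f i = vt i - ⟪vt i, x'⟫ • x' := ⟨_, fun _ => rfl⟩
  obtain ⟨w, hw⟩ : ∃ f : Fin k → EuclideanSpace ℝ (Fin d), ∀ i, f i = vh i - ∑ j ∈ Finset.Iio i, ⟪vh i, v' j⟫ • v' j :=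
    ⟨_, fun _ => rfl⟩
  have hbig : ∀ i : Fin k, w i = vn i + τ • Jn (vn i) - ⟪vn i + τ • Jn (vn i), x'⟫ • x' -
      ∑ j ∈ Finset.Iio i, ⟪vn i + τ • Jn (vn i) - ⟪vn i + τ • Jn (vn i), x'⟫ • x', v' j⟫ • v' j := by
    intro i; rw [hw i, hvh i, hvt i]
  have hsv' : ∀ i : Fin k, w i ≠ 0 ∧ v' i = ‖w i‖⁻¹ • w i := by
    intro i; rw [hbig i]; exact hsv i
  have hunit : ∀ i, ‖vn i‖ = 1 := by
    intro i
    have h := hvv i i; rw [if_pos rfl, real_inner_self_eq_norm_sq] at h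
    exact aux_sq_one (norm_nonneg _) h
  have hJv : ∀ i, ‖Jn (vn i)‖ ≤ M := by
    intro i
    calc ‖Jn (vn i)‖ ≤ ‖Jn‖ * ‖vn i‖ := Jn.le_opNorm _
    _ = ‖Jn‖ := by rw [hunit i, mul_one]
    _ ≤ M := hJn
  have ha : ∀ i, |⟪vn i, Jn (vn i)⟫| ≤ M := by
    intro i
    calc |⟪vn i, Jn (vn i)⟫| ≤ ‖vn i‖ * ‖Jn (vn i)‖ := abs_real_inner_le_norm _ _
    _ ≤ M := by rw [hunit i, one_mul]; exact hJv i
  -- x-step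
  obtain ⟨S, hS⟩ : ∃ s : EuclideanSpace ℝ (Fin d), s = Fn - (2:ℝ) • ∑ j, ⟪vn j, Fn⟫ • vn j := ⟨_, rfl⟩
  obtain ⟨xt, hxt⟩ : ∃ y : EuclideanSpace ℝ (Fin d), y = xn + τ • S := ⟨_, rfl⟩
  have hsx' : x' = ‖xt‖⁻¹ • xt := by rw [hxt, hS]; exact hsx
  have hSb : ‖S‖ ≤ CS := by
    rw [hS]
    calc ‖Fn - (2:ℝ) • ∑ j, ⟪vn j, Fn⟫ • vn j‖
        ≤ ‖Fn‖ + ‖(2:ℝ) • ∑ j, ⟪vn j, Fn⟫ • vn j‖ := norm_sub_le _ _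
    _ = ‖Fn‖ + 2 * ‖∑ j, ⟪vn j, Fn⟫ • vn j‖ := by rw [norm_smul]; norm_num
    _ ≤ M + 2 * ((k:ℝ) * M) := by
        have h := aux_sum_bound Finset.univ vn (fun j _ => hunit j) (fun j => ⟪vn j, Fn⟫)
        have h2 : ∑ j, |⟪vn j, Fn⟫| ≤ ∑ _j : Fin k, M := by
          refine Finset.sum_le_sum fun j _ => ?_
          have h3 := abs_real_inner_le_norm (vn j) Fn
          rw [hunit j, one_mul] at h3; exact h3.trans hFn
        rw [Finset.sum_const, Finset.card_univ, Fintype.card_fin, nsmul_eq_mul] at h2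
        have := h.trans h2
        linarith
    _ = CS := by rw [hCS]; ring
  have hτS : ‖τ • S‖ ≤ τ * CS := by
    rw [norm_smul, Real.norm_eq_abs, abs_of_pos hτpos]
    exact mul_le_mul_of_nonneg_left hSb hτpos.le
  have hxtlb : 1/2 ≤ ‖xt‖ := by
    have h1 : ‖xn‖ ≤ ‖xt‖ + ‖τ • S‖ := by
      rw [hxt]
      have := norm_sub_le (xn + τ • S) (τ • S)
      simpa using this
    rw [hxn] at h1; linarith
  have hxtpos : 0 < ‖xt‖ := by linarith
  have hxtinv : ‖xt‖⁻¹ ≤ 2 := by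
    have h2x := inv_anti₀ (by norm_num : (0:ℝ) < 1/2) hxtlb
    norm_num at h2x
    exact h2x
  have hx'1 : ‖x'‖ = 1 := by
    rw [hsx', norm_smul, norm_inv, norm_norm, inv_mul_cancel₀ (ne_of_gt hxtpos)]
  have hvtx : ∀ i, |⟪vt i, x'⟫| ≤ C1 * τ := by
    intro i
    have e1 : ⟪vt i, xt⟫ = τ * ⟪vn i, S⟫ + τ * ⟪Jn (vn i), xn⟫ + τ * (τ * ⟪Jn (vn i), S⟫) := by
      simp only [hvt i, hxt, inner_add_left, inner_add_right, real_inner_smul_left,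
        real_inner_smul_right, hvx i]
      ring
    have b1 : |⟪vn i, S⟫| ≤ CS := by
      have h3 := abs_real_inner_le_norm (vn i) S
      rw [hunit i, one_mul] at h3; exact h3.trans hSb
    have b2 : |⟪Jn (vn i), xn⟫| ≤ M := by
      have h3 := abs_real_inner_le_norm (Jn (vn i)) xn
      rw [hxn, mul_one] at h3; exact h3.trans (hJv i)
    have b3 : |⟪Jn (vn i), S⟫| ≤ M * CS :=
      (abs_real_inner_le_norm _ _).trans (mul_le_mul (hJv i) hSb (norm_nonneg _) hMpos.le)
    have c1 : |τ * ⟪vn i, S⟫| ≤ τ * CS := by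
      rw [abs_mul, abs_of_pos hτpos]; exact mul_le_mul_of_nonneg_left b1 hτpos.le
    have c2 : |τ * ⟪Jn (vn i), xn⟫| ≤ τ * M := by
      rw [abs_mul, abs_of_pos hτpos]; exact mul_le_mul_of_nonneg_left b2 hτpos.le
    have c3 : |τ * (τ * ⟪Jn (vn i), S⟫)| ≤ τ * (M * CS) := by
      rw [abs_mul, abs_mul, abs_of_pos hτpos]
      refine mul_le_mul_of_nonneg_left ?_ hτpos.le
      have h5 := mul_le_mul_of_nonneg_right hτ1 (abs_nonneg (⟪Jn (vn i), S⟫))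
      rw [one_mul] at h5
      exact h5.trans b3
    have e2 : |⟪vt i, xt⟫| ≤ τ * (CS + M + M * CS) := by
      rw [e1]
      calc |τ * ⟪vn i, S⟫ + τ * ⟪Jn (vn i), xn⟫ + τ * (τ * ⟪Jn (vn i), S⟫)|
          ≤ |τ * ⟪vn i, S⟫ + τ * ⟪Jn (vn i), xn⟫| + |τ * (τ * ⟪Jn (vn i), S⟫)| := abs_add_le _ _
      _ ≤ |τ * ⟪vn i, S⟫| + |τ * ⟪Jn (vn i), xn⟫| + |τ * (τ * ⟪Jn (vn i), S⟫)| := by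
          linarith [abs_add_le (τ * ⟪vn i, S⟫) (τ * ⟪Jn (vn i), xn⟫)]
      _ ≤ τ * CS + τ * M + τ * (M * CS) := by linarith
      _ = τ * (CS + M + M * CS) := by ring
    have e3 : ⟪vt i, x'⟫ = ‖xt‖⁻¹ * ⟪vt i, xt⟫ := by rw [hsx', real_inner_smul_right]
    rw [e3, abs_mul, abs_of_nonneg (inv_nonneg.mpr (norm_nonneg xt))]
    calc ‖xt‖⁻¹ * |⟪vt i, xt⟫| ≤ 2 * (τ * (CS + M + M*CS)) :=
        mul_le_mul hxtinv e2 (abs_nonneg _) (by norm_num)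
    _ = C1 * τ := by rw [hC1]; ring
  
  have KEY : ∀ m : ℕ, ∀ i : Fin k, (i:ℕ) ≤ m →
      ‖v' i‖ = 1 ∧ ⟪v' i, x'⟫ = 0 ∧ (∀ j : Fin k, j < i → ⟪v' i, v' j⟫ = 0) ∧
      ‖v' i - vn i‖ ≤ A0 * B^(i:ℕ) * τ ∧
      |‖w i‖^2 - 1 - 2 * τ * ⟪vn i, Jn (vn i)⟫| ≤ Q1 * τ^2 ∧
      |‖w i‖⁻¹ - 1 + τ * ⟪vn i, Jn (vn i)⟫| ≤ Q2 * τ^2 := by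
    have MAIN : ∀ i : Fin k, (∀ j : Fin k, j < i →
        ‖v' j‖ = 1 ∧ ⟪v' j, x'⟫ = 0 ∧ (∀ j' : Fin k, j' < j → ⟪v' j, v' j'⟫ = 0) ∧
        ‖v' j - vn j‖ ≤ A0 * B^(j:ℕ) * τ ∧
        |‖w j‖^2 - 1 - 2 * τ * ⟪vn j, Jn (vn j)⟫| ≤ Q1 * τ^2 ∧
        |‖w j‖⁻¹ - 1 + τ * ⟪vn j, Jn (vn j)⟫| ≤ Q2 * τ^2) →
        (‖v' i‖ = 1 ∧ ⟪v' i, x'⟫ = 0 ∧ (∀ j : Fin k, j < i → ⟪v' i, v' j⟫ = 0) ∧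
        ‖v' i - vn i‖ ≤ A0 * B^(i:ℕ) * τ ∧
        |‖w i‖^2 - 1 - 2 * τ * ⟪vn i, Jn (vn i)⟫| ≤ Q1 * τ^2 ∧
        |‖w i‖⁻¹ - 1 + τ * ⟪vn i, Jn (vn i)⟫| ≤ Q2 * τ^2) := by
      intro i IH
      obtain ⟨hwne, hveq⟩ := hsv' i
      have hZpos : 0 < ‖w i‖ := norm_pos_iff.mpr hwne
      have hZne : ‖w i‖ ≠ 0 := ne_of_gt hZpos
      have hcj : ∀ j : Fin k, j < i → |⟪vh i, v' j⟫| ≤ (A0 * B^(j:ℕ) + M) * τ := by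
        intro j hj
        obtain ⟨hj1, hj2, _, hj4, _, _⟩ := IH j hj
        have hxj : ⟪x', v' j⟫ = 0 := by rw [real_inner_comm]; exact hj2
        have hij : ⟪vn i, vn j⟫ = 0 := by
          rw [hvv i j, if_neg]
          exact fun h => absurd (h ▸ hj) (lt_irrefl _)
        have e0 : ⟪vh i, v' j⟫ = ⟪vn i, v' j - vn j⟫ + τ * ⟪Jn (vn i), v' j⟫ := by
          rw [hvh i, inner_sub_left, real_inner_smul_left, hxj, mul_zero, sub_zero,
            hvt i, inner_add_left, real_inner_smul_left, inner_sub_right, hij, sub_zero]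
        rw [e0]
        have b1 : |⟪vn i, v' j - vn j⟫| ≤ A0 * B^(j:ℕ) * τ := by
          have h3 := abs_real_inner_le_norm (vn i) (v' j - vn j)
          rw [hunit i, one_mul] at h3
          exact h3.trans hj4
        have b2 : |τ * ⟪Jn (vn i), v' j⟫| ≤ τ * M := by
          rw [abs_mul, abs_of_pos hτpos]
          refine mul_le_mul_of_nonneg_left ?_ hτpos.le
          have h3 := abs_real_inner_le_norm (Jn (vn i)) (v' j)
          rw [hj1, mul_one] at h3
          exact h3.trans (hJv i)
        calc |⟪vn i, v' j - vn j⟫ + τ * ⟪Jn (vn i), v' j⟫|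
            ≤ |⟪vn i, v' j - vn j⟫| + |τ * ⟪Jn (vn i), v' j⟫| := abs_add_le _ _
        _ ≤ A0 * B^(j:ℕ) * τ + τ * M := add_le_add b1 b2
        _ = (A0 * B^(j:ℕ) + M) * τ := by ring
      have hcj' : ∀ j : Fin k, j < i → |⟪vh i, v' j⟫| ≤ E0 * τ := by
        intro j hj
        refine (hcj j hj).trans ?_
        have h1 : A0 * B^(j:ℕ) ≤ C2 := by
          rw [hC2]
          exact mul_le_mul_of_nonneg_left (pow_le_pow_right₀ hB1 j.isLt.le) hA0pos.le
        have h2 : A0 * B^(j:ℕ) + M ≤ E0 := by rw [hE0]; linarith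
        exact mul_le_mul_of_nonneg_right h2 hτpos.le
      have hoIio : ∀ j1 ∈ Finset.Iio i, ∀ j2 ∈ Finset.Iio i,
          ⟪v' j1, v' j2⟫ = if j1 = j2 then (1:ℝ) else 0 := by
        intro j1 h1 j2 h2
        rw [Finset.mem_Iio] at h1 h2
        rcases eq_or_ne j1 j2 with rfl | hne
        · rw [if_pos rfl, real_inner_self_eq_norm_sq, (IH j1 h1).1, one_pow]
        · rw [if_neg hne]
          rcases hne.lt_or_gt with hlt | hlt
          · rw [real_inner_comm]; exact (IH j2 h2).2.2.1 j1 hlt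
          · exact (IH j1 h1).2.2.1 j2 hlt
      have hZsq : ‖w i‖^2 = ‖vh i‖^2 - ∑ j ∈ Finset.Iio i, ⟪vh i, v' j⟫^2 := by
        rw [hw i]; exact aux_GS _ _ hoIio _
      have hvhsq : ‖vh i‖^2 = ‖vt i‖^2 - ⟪vt i, x'⟫^2 := by
        have hrw : vh i = vt i + (-(⟪vt i, x'⟫)) • x' := by
          rw [hvh i, neg_smul, ← sub_eq_add_neg]
        rw [hrw, aux_norm_add_smul, hx'1]; ring
      have hvtsq : ‖vt i‖^2 = 1 + 2 * τ * ⟪vn i, Jn (vn i)⟫ + τ^2 * ‖Jn (vn i)‖^2 := by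
        rw [hvt i, aux_norm_add_smul, hunit i]; ring
      have hsum_nonneg : 0 ≤ ∑ j ∈ Finset.Iio i, ⟪vh i, v' j⟫^2 :=
        Finset.sum_nonneg fun j _ => sq_nonneg _
      have hcardk : ((Finset.Iio i).card : ℝ) ≤ (k:ℝ) := by
        exact_mod_cast (Finset.card_le_univ _).trans_eq (by simp)
      have hsum_le1 : ∑ j ∈ Finset.Iio i, ⟪vh i, v' j⟫^2 ≤ (Finset.Iio i).card • ((E0*τ)^2) := by
        refine Finset.sum_le_card_nsmul _ _ _ fun j hj => ?_
        rw [← sq_abs]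
        exact pow_le_pow_left₀ (abs_nonneg _) (hcj' j (Finset.mem_Iio.mp hj)) 2
      have hsum_le : ∑ j ∈ Finset.Iio i, ⟪vh i, v' j⟫^2 ≤ (k:ℝ) * (E0 * τ)^2 := by
        rw [nsmul_eq_mul] at hsum_le1
        exact hsum_le1.trans (mul_le_mul_of_nonneg_right hcardk (sq_nonneg _))
      have hcsq : ⟪vt i, x'⟫^2 ≤ (C1*τ)^2 := by
        rw [← sq_abs]; exact pow_le_pow_left₀ (abs_nonneg _) (hvtx i) 2
      have hJsq : ‖Jn (vn i)‖^2 ≤ M^2 := pow_le_pow_left₀ (norm_nonneg _) (hJv i) 2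
      have hP5 : |‖w i‖^2 - 1 - 2 * τ * ⟪vn i, Jn (vn i)⟫| ≤ Q1 * τ^2 := by
        rw [hZsq, hvhsq, hvtsq]
        exact arith_P5 hQ1 (sq_nonneg _) hJsq hcsq hsum_nonneg hsum_le
      have hZlb : 1/2 ≤ ‖w i‖ :=
        arith_Zlb (abs_le.mp hP5).1 (abs_le.mp (ha i)).1 hτM hτQ1 hτpos hτ1 (norm_nonneg _)
      have hP6 : |‖w i‖⁻¹ - 1 + τ * ⟪vn i, Jn (vn i)⟫| ≤ Q2 * τ^2 :=
        arith_P6 hQ2 hM1 hZpos hZlb hP5 (ha i) hτpos hτ1 hτM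
      have hP1 : ‖v' i‖ = 1 := by
        rw [hveq, norm_smul, norm_inv, norm_norm, inv_mul_cancel₀ hZne]
      have hP2 : ⟪v' i, x'⟫ = 0 := by
        rw [hveq, real_inner_smul_left]
        have h1 : ⟪vh i, x'⟫ = 0 := by
          rw [hvh i, inner_sub_left, real_inner_smul_left, real_inner_self_eq_norm_sq, hx'1]
          ring
        have h2 : ∑ j ∈ Finset.Iio i, ⟪⟪vh i, v' j⟫ • v' j, x'⟫ = 0 :=
          Finset.sum_eq_zero fun j hj => by
            rw [real_inner_smul_left, (IH j (Finset.mem_Iio.mp hj)).2.1, mul_zero]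
        rw [hw i, inner_sub_left, sum_inner, h1, h2, sub_zero, mul_zero]
      have hP3 : ∀ j : Fin k, j < i → ⟪v' i, v' j⟫ = 0 := by
        intro j hj
        rw [hveq, real_inner_smul_left]
        have h2 : ∑ j' ∈ Finset.Iio i, ⟪⟪vh i, v' j'⟫ • v' j', v' j⟫ = ⟪vh i, v' j⟫ := by
          rw [Finset.sum_eq_single j]
          · rw [real_inner_smul_left,
              hoIio j (Finset.mem_Iio.mpr hj) j (Finset.mem_Iio.mpr hj), if_pos rfl, mul_one]
          · intro j' hj' hne
            rw [real_inner_smul_left, hoIio j' hj' j (Finset.mem_Iio.mpr hj), if_neg hne, mul_zero]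
          · intro hmem; exact absurd (Finset.mem_Iio.mpr hj) hmem
        rw [hw i, inner_sub_left, sum_inner, h2, sub_self, mul_zero]
      have hwv : w i - vn i = τ • Jn (vn i) - ⟪vt i, x'⟫ • x'
          - ∑ j ∈ Finset.Iio i, ⟪vh i, v' j⟫ • v' j := by
        rw [hw i, hvh i, hvt i]; abel
      have hDev : ‖w i - vn i‖ ≤ (C1 + M) * τ + ∑ j ∈ Finset.Iio i, |⟪vh i, v' j⟫| := by
        rw [hwv]
        have e1 : ‖τ • Jn (vn i)‖ ≤ τ * M := by
          rw [norm_smul, Real.norm_eq_abs, abs_of_pos hτpos]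
          exact mul_le_mul_of_nonneg_left (hJv i) hτpos.le
        have e2 : ‖⟪vt i, x'⟫ • x'‖ ≤ C1 * τ := by
          rw [norm_smul, Real.norm_eq_abs, hx'1, mul_one]; exact hvtx i
        calc ‖τ • Jn (vn i) - ⟪vt i, x'⟫ • x' - ∑ j ∈ Finset.Iio i, ⟪vh i, v' j⟫ • v' j‖
            ≤ ‖τ • Jn (vn i) - ⟪vt i, x'⟫ • x'‖ + ‖∑ j ∈ Finset.Iio i, ⟪vh i, v' j⟫ • v' j‖ :=
              norm_sub_le _ _
        _ ≤ (‖τ • Jn (vn i)‖ + ‖⟪vt i, x'⟫ • x'‖) + ∑ j ∈ Finset.Iio i, |⟪vh i, v' j⟫| :=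
              add_le_add (norm_sub_le _ _)
                (aux_sum_bound _ _ (fun j hj => (IH j (Finset.mem_Iio.mp hj)).1) _)
        _ ≤ (C1 + M) * τ + ∑ j ∈ Finset.Iio i, |⟪vh i, v' j⟫| := by
              have : (C1 + M) * τ = C1*τ + τ*M := by ring
              linarith
      have hDev2 : ‖w i - vn i‖ ≤ A0 * B^(i:ℕ) * τ / 2 := by
        rcases Nat.eq_zero_or_pos (i:ℕ) with h0 | h0
        · have hempty : Finset.Iio i = ∅ :=
            Finset.eq_empty_iff_forall_notMem.mpr fun j hj => by
              have := Fin.lt_def.mp (Finset.mem_Iio.mp hj); omega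
          rw [hempty] at hDev
          simp only [Finset.sum_empty, add_zero] at hDev
          rw [h0, pow_zero]
          exact arith_dev0 hA0 hDev hk0 hMpos.le hτpos.le
        · obtain ⟨m, hm⟩ : ∃ m, (i:ℕ) = m + 1 := ⟨(i:ℕ) - 1, by omega⟩
          have hBm1 : (1:ℝ) ≤ B^m := by
            have := pow_le_pow_right₀ hB1 (Nat.zero_le m)
            rwa [pow_zero] at this
          have hjb : ∀ j ∈ Finset.Iio i, |⟪vh i, v' j⟫| ≤ (A0 * B^m + M) * τ := by
            intro j hj
            have hjm : (j:ℕ) ≤ m := by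
              have := Fin.lt_def.mp (Finset.mem_Iio.mp hj); omega
            refine (hcj j (Finset.mem_Iio.mp hj)).trans ?_
            have hbb : B^(j:ℕ) ≤ B^m := pow_le_pow_right₀ hB1 hjm
            have h2 : A0 * B^(j:ℕ) + M ≤ A0 * B^m + M :=
              add_le_add_left (mul_le_mul_of_nonneg_left hbb hA0pos.le) M
            exact mul_le_mul_of_nonneg_right h2 hτpos.le
          have hbmt : (0:ℝ) ≤ (A0*B^m + M)*τ :=
            mul_nonneg (add_nonneg (mul_nonneg hA0pos.le (by linarith)) hMpos.le) hτpos.le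
          have hsum21 : ∑ j ∈ Finset.Iio i, |⟪vh i, v' j⟫| ≤ (Finset.Iio i).card • ((A0*B^m+M)*τ) :=
            Finset.sum_le_card_nsmul _ _ _ hjb
          have hsum2 : ∑ j ∈ Finset.Iio i, |⟪vh i, v' j⟫| ≤ (k:ℝ) * ((A0*B^m + M)*τ) := by
            rw [nsmul_eq_mul] at hsum21
            exact hsum21.trans (mul_le_mul_of_nonneg_right hcardk hbmt)
          rw [hm, pow_succ]
          exact arith_dev hA0 hB hDev hsum2 hBm1 hk0 hMpos.le hC1pos.le hτpos.le
      have hP4 : ‖v' i - vn i‖ ≤ A0 * B^(i:ℕ) * τ := by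
        have h1 : v' i - vn i = (‖w i‖⁻¹ - 1) • w i + (w i - vn i) := by
          rw [hveq, sub_smul, one_smul]; abel
        have hfe : (‖w i‖⁻¹ - 1) * ‖w i‖ = 1 - ‖w i‖ := by
          field_simp
        have h2 : ‖(‖w i‖⁻¹ - 1) • w i‖ = |1 - ‖w i‖| := by
          calc ‖(‖w i‖⁻¹ - 1) • w i‖ = |‖w i‖⁻¹ - 1| * ‖w i‖ := by
                rw [norm_smul, Real.norm_eq_abs]
          _ = |(‖w i‖⁻¹ - 1) * ‖w i‖| := by rw [abs_mul, abs_of_nonneg (norm_nonneg _)]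
          _ = |1 - ‖w i‖| := by rw [hfe]
        have h3 : |1 - ‖w i‖| ≤ ‖w i - vn i‖ := by
          have h4 := abs_norm_sub_norm_le (w i) (vn i)
          rw [hunit i] at h4
          rwa [abs_sub_comm] at h4
        calc ‖v' i - vn i‖ ≤ ‖(‖w i‖⁻¹ - 1) • w i‖ + ‖w i - vn i‖ := by
              rw [h1]; exact norm_add_le _ _
        _ ≤ ‖w i - vn i‖ + ‖w i - vn i‖ := by rw [h2]; linarith
        _ ≤ A0 * B^(i:ℕ) * τ := by linarith [hDev2]
      exact ⟨hP1, hP2, hP3, hP4, hP5, hP6⟩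
    intro m
    induction m with
    | zero =>
      intro i hi
      exact MAIN i fun j hj => absurd (Fin.lt_def.mp hj) (by omega)
    | succ m ih =>
      intro i hi
      exact MAIN i fun j hj => ih j (by have := Fin.lt_def.mp hj; omega)
  have ALL := fun i : Fin k => KEY k i i.isLt.le
  refine ⟨hx'1, fun i => (ALL i).2.1, ?_, ?_⟩
  · intro i j
    rcases eq_or_ne i j with rfl | hne
    · rw [if_pos rfl, real_inner_self_eq_norm_sq, (ALL i).1, one_pow]
    · rw [if_neg hne]
      rcases hne.lt_or_gt with h | h
      · rw [real_inner_comm]; exact (ALL j).2.2.1 i h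
      · exact (ALL i).2.2.1 j h
  · intro i
    rw [← hbig i]
    exact ⟨(ALL i).2.2.2.2.1, (ALL i).2.2.2.2.2⟩

lemma arith_tau {τ CS M Q1 D : ℝ} (hτD : τ * D ≤ 1)
    (hexp : τ * D = 2*(τ*CS) + 8*(τ*M) + 2*(τ*Q1) + 2*τ)
    (g1 : 0 < τ*CS) (g2 : 0 < τ*M) (g3 : 0 < τ*Q1) (hτpos : 0 < τ) :
    τ ≤ 1 ∧ τ * CS ≤ 1/2 ∧ τ * M ≤ 1/8 ∧ τ * Q1 ≤ 1/2 :=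
  ⟨by linarith, by linarith, by linarith, by linarith⟩

set_option maxHeartbeats 1000000 in
theorem hisd_stmt15
    (d k : ℕ) (hd : 1 ≤ d) (hk : 1 ≤ k) (hkd : k ≤ d)
    (F : EuclideanSpace ℝ (Fin d) → EuclideanSpace ℝ (Fin d))
    (J : EuclideanSpace ℝ (Fin d) → (EuclideanSpace ℝ (Fin d) →L[ℝ] EuclideanSpace ℝ (Fin d)))
    (hJsymm : ∀ x u w, ⟪J x u, w⟫ = ⟪u, J x w⟫)
    (L : ℝ) (hL : 0 < L)
    (hLip : ∀ x₁ x₂ : EuclideanSpace ℝ (Fin d), ‖J x₂ - J x₁‖ + ‖F x₂ - F x₁‖ ≤ L * ‖x₂ - x₁‖)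
    (hgrow : ∀ x : EuclideanSpace ℝ (Fin d), ‖F x‖ ≤ L * (1 + ‖x‖))
    (T : ℝ) (hT : 0 < T)
    (x₀ : EuclideanSpace ℝ (Fin d)) (hx₀ : ‖x₀‖ = 1)
    (v₀ : Fin k → EuclideanSpace ℝ (Fin d))
    (hv₀ : ∀ i j : Fin k, ⟪v₀ i, v₀ j⟫ = if i = j then (1:ℝ) else 0)
    (hv₀x : ∀ i : Fin k, ⟪v₀ i, x₀⟫ = 0) :
    ∃ τ₀ > (0:ℝ), ∃ Q > (0:ℝ), ∀ (N : ℕ) (τ : ℝ), 0 < N → τ = T / N → τ ≤ τ₀ →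
      ∀ (x : ℕ → EuclideanSpace ℝ (Fin d)) (v : ℕ → Fin k → EuclideanSpace ℝ (Fin d)),
        x 0 = x₀ → v 0 = v₀ →
        (∀ n < N,
          let xt := x n + τ • (F (x n) - (2:ℝ) • ∑ j, ⟪v n j, F (x n)⟫ • v n j)
          xt ≠ 0 ∧ x (n+1) = ‖xt‖⁻¹ • xt) →
        (∀ n < N, ∀ i : Fin k,
          let vt := v n i + τ • J (x n) (v n i)
          let vh := vt - ⟪vt, x (n+1)⟫ • x (n+1)
          let w := vh - ∑ j ∈ Finset.Iio i, ⟪vh, v (n+1) j⟫ • v (n+1) j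
          w ≠ 0 ∧ v (n+1) i = ‖w‖⁻¹ • w) →
        ∀ n < N, ∀ i : Fin k,
          let vt := v n i + τ • J (x n) (v n i)
          let vh := vt - ⟪vt, x (n+1)⟫ • x (n+1)
          let Z := ‖vh - ∑ j ∈ Finset.Iio i, ⟪vh, v (n+1) j⟫ • v (n+1) j‖
          |Z^2 - 1 - 2 * τ * ⟪v n i, J (x n) (v n i)⟫| ≤ Q * τ^2 ∧
            |Z⁻¹ - 1 + τ * ⟪v n i, J (x n) (v n i)⟫| ≤ Q * τ^2 := by
  set M : ℝ := ‖J x₀‖ + 2*L + 1 with hM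
  set CS : ℝ := (1 + 2*(k:ℝ)) * M with hCS
  set C1 : ℝ := 2*(CS + M + M*CS) with hC1
  set A0 : ℝ := 2*(C1 + M + (k:ℝ)*M) with hA0
  set B : ℝ := 2*(k:ℝ) + 1 with hB
  set C2 : ℝ := A0 * B^k with hC2
  set E0 : ℝ := C2 + M with hE0
  set Q1 : ℝ := M^2 + C1^2 + (k:ℝ)*E0^2 with hQ1
  set Q2 : ℝ := 2*(3*M^2 + 2*M^3 + 2*Q1) with hQ2
  have hk0 : (0:ℝ) ≤ (k:ℝ) := Nat.cast_nonneg k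
  have hM1 : 1 ≤ M := by rw [hM]; linarith [norm_nonneg (J x₀)]
  have hMpos : 0 < M := by linarith
  have hCSpos : 0 < CS := by
    rw [hCS]; exact mul_pos (by positivity) hMpos
  have hC1pos : 0 < C1 := by
    rw [hC1]; have := mul_pos hMpos hCSpos; linarith
  have hQ1pos : 0 < Q1 := by
    rw [hQ1]
    have g1 : 0 < M^2 := pow_pos hMpos 2
    have g2 : (0:ℝ) ≤ (k:ℝ)*E0^2 := mul_nonneg hk0 (sq_nonneg E0)
    linarith [sq_nonneg C1]
  have hQ2pos : 0 < Q2 := by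
    rw [hQ2]
    have g1 : 0 < M^2 := pow_pos hMpos 2
    have g2 : 0 < M^3 := pow_pos hMpos 3
    linarith
  set D : ℝ := 2*CS + 8*M + 2*Q1 + 2 with hD
  have hDpos : 0 < D := by rw [hD]; linarith
  refine ⟨D⁻¹, inv_pos.mpr hDpos, Q1 + Q2 + 1, by linarith, ?_⟩
  intro N τ hN hτN hττ₀ x v hx0 hv0 hsx hsv
  have hτpos : 0 < τ := by
    rw [hτN]; exact div_pos hT (by exact_mod_cast hN)
  have hτD : τ * D ≤ 1 := by
    calc τ * D ≤ D⁻¹ * D := mul_le_mul_of_nonneg_right hττ₀ hDpos.le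
    _ = 1 := inv_mul_cancel₀ (ne_of_gt hDpos)
  have hexp : τ * D = 2*(τ*CS) + 8*(τ*M) + 2*(τ*Q1) + 2*τ := by rw [hD]; ring
  have g1 : 0 < τ*CS := mul_pos hτpos hCSpos
  have g2 : 0 < τ*M := mul_pos hτpos hMpos
  have g3 : 0 < τ*Q1 := mul_pos hτpos hQ1pos
  obtain ⟨hτ1, hτCS, hτM, hτQ1⟩ := arith_tau hτD hexp g1 g2 g3 hτpos
  have hJb : ∀ y : EuclideanSpace ℝ (Fin d), ‖y‖ = 1 → ‖J y‖ ≤ M := by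
    intro y hy
    have h1 := hLip x₀ y
    have h2 : ‖J y - J x₀‖ ≤ L * ‖y - x₀‖ :=
      le_trans (le_add_of_nonneg_right (norm_nonneg _)) h1
    have h3 : ‖y - x₀‖ ≤ 2 := by
      calc ‖y - x₀‖ ≤ ‖y‖ + ‖x₀‖ := norm_sub_le _ _
      _ = 2 := by rw [hy, hx₀]; norm_num
    have h4 : ‖J y‖ - ‖J x₀‖ ≤ ‖J y - J x₀‖ := norm_sub_norm_le _ _
    rw [hM]
    linarith [mul_le_mul_of_nonneg_left h3 hL.le]
  have hFb : ∀ y : EuclideanSpace ℝ (Fin d), ‖y‖ = 1 → ‖F y‖ ≤ M := by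
    intro y hy
    have h1 := hgrow y
    rw [hy] at h1
    have h2 : (0:ℝ) ≤ ‖J x₀‖ := norm_nonneg _
    rw [hM]; linarith
  have hA : ∀ n, n ≤ N → ‖x n‖ = 1 ∧ (∀ i, ⟪v n i, x n⟫ = 0) ∧
      (∀ i j, ⟪v n i, v n j⟫ = if i = j then (1:ℝ) else 0) := by
    intro n
    induction n with
    | zero =>
      exact fun _ => ⟨by rw [hx0]; exact hx₀, fun i => by rw [hv0, hx0]; exact hv₀x i,
        fun i j => by rw [hv0]; exact hv₀ i j⟩
    | succ m ih =>
      intro hm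
      have hmN : m < N := hm
      obtain ⟨h1, h2, h3⟩ := ih (Nat.le_of_lt hmN)
      obtain ⟨c1, c2, c3, _⟩ := hisd_step hM1 hCS hC1 hA0 hB hC2 hE0 hQ1 hQ2
        hτpos hτ1 hτCS hτM hτQ1 (J (x m)) (F (x m)) (hJb _ h1) (hFb _ h1)
        (x m) (x (m+1)) (v m) (v (m+1)) h1 h2 h3 (hsx m hmN).2 (fun i => hsv m hmN i)
      exact ⟨c1, c2, c3⟩
  intro n hn i
  obtain ⟨h1, h2, h3⟩ := hA n (Nat.le_of_lt hn)
  obtain ⟨_, _, _, hZ⟩ := hisd_step hM1 hCS hC1 hA0 hB hC2 hE0 hQ1 hQ2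
    hτpos hτ1 hτCS hτM hτQ1 (J (x n)) (F (x n)) (hJb _ h1) (hFb _ h1)
    (x n) (x (n+1)) (v n) (v (n+1)) h1 h2 h3 (hsx n hn).2 (fun i => hsv n hn i)
  have he1 : (Q1+Q2+1)*τ^2 = Q1*τ^2 + (Q2+1)*τ^2 := by ring
  have he2 : (Q1+Q2+1)*τ^2 = Q2*τ^2 + (Q1+1)*τ^2 := by ring
  have hg1 : (0:ℝ) ≤ (Q2+1)*τ^2 := mul_nonneg (by linarith) (sq_nonneg τ)
  have hg2 : (0:ℝ) ≤ (Q1+1)*τ^2 := mul_nonneg (by linarith) (sq_nonneg τ)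
  have hq1' : Q1 * τ^2 ≤ (Q1+Q2+1)*τ^2 := by linarith
  have hq2' : Q2 * τ^2 ≤ (Q1+Q2+1)*τ^2 := by linarith
  exact ⟨le_trans (hZ i).1 hq1', le_trans (hZ i).2 hq2'⟩
end
end

section
/- Under Assumption A, there exist τ₀ > 0 and Q > 0, depending only on d, k, L and T, such that for every N ∈ ℕ with τ = T/N ≤ τ₀, the iterates of the constrained discrete HiSD scheme satisfy, for all 1 ≤ j < i ≤ k and 1 ≤ n ≤ N, |v̂_{j,n}ᵀ v_{i,n−1} − τ (J(x_{n−1}) v_{j,n−1})ᵀ v_{i,n−1}| ≤ Q τ². -/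
open scoped RealInnerProductSpace BigOperators

noncomputable section

set_option maxHeartbeats 1000000

theorem hisd_stmt16
    (d k : ℕ) (hd : 1 ≤ d) (hk : 1 ≤ k) (hkd : k ≤ d)
    (F : EuclideanSpace ℝ (Fin d) → EuclideanSpace ℝ (Fin d))
    (J : EuclideanSpace ℝ (Fin d) → (EuclideanSpace ℝ (Fin d) →L[ℝ] EuclideanSpace ℝ (Fin d)))
    (hJsymm : ∀ x u w, ⟪J x u, w⟫ = ⟪u, J x w⟫)
    (L : ℝ) (hL : 0 < L)
    (hLip : ∀ x₁ x₂ : EuclideanSpace ℝ (Fin d), ‖J x₂ - J x₁‖ + ‖F x₂ - F x₁‖ ≤ L * ‖x₂ - x₁‖)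
    (hgrow : ∀ x : EuclideanSpace ℝ (Fin d), ‖F x‖ ≤ L * (1 + ‖x‖))
    (T : ℝ) (hT : 0 < T)
    (x₀ : EuclideanSpace ℝ (Fin d)) (hx₀ : ‖x₀‖ = 1)
    (v₀ : Fin k → EuclideanSpace ℝ (Fin d))
    (hv₀ : ∀ i j : Fin k, ⟪v₀ i, v₀ j⟫ = if i = j then (1:ℝ) else 0)
    (hv₀x : ∀ i : Fin k, ⟪v₀ i, x₀⟫ = 0) :
    ∃ τ₀ > (0:ℝ), ∃ Q > (0:ℝ), ∀ (N : ℕ) (τ : ℝ), 0 < N → τ = T / N → τ ≤ τ₀ →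
      ∀ (x : ℕ → EuclideanSpace ℝ (Fin d)) (v : ℕ → Fin k → EuclideanSpace ℝ (Fin d)),
        x 0 = x₀ → v 0 = v₀ →
        (∀ n < N,
          let xt := x n + τ • (F (x n) - (2:ℝ) • ∑ j, ⟪v n j, F (x n)⟫ • v n j)
          xt ≠ 0 ∧ x (n+1) = ‖xt‖⁻¹ • xt) →
        (∀ n < N, ∀ i : Fin k,
          let vt := v n i + τ • J (x n) (v n i)
          let vh := vt - ⟪vt, x (n+1)⟫ • x (n+1)
          let w := vh - ∑ j ∈ Finset.Iio i, ⟪vh, v (n+1) j⟫ • v (n+1) j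
          w ≠ 0 ∧ v (n+1) i = ‖w‖⁻¹ • w) →
        ∀ n < N, ∀ i j : Fin k, j < i →
          let vt := v n j + τ • J (x n) (v n j)
          let vh := vt - ⟪vt, x (n+1)⟫ • x (n+1)
          |⟪vh, v n i⟫ - τ * ⟪J (x n) (v n j), v n i⟫| ≤ Q * τ^2 := by
  classical
  set C : ℝ := 2 * L * (1 + 2 * (k : ℝ)) with hCdef
  have hCpos : 0 < C := by positivity
  set CJ : ℝ := ‖J x₀‖ + 2 * L with hCJdef
  have hCJpos : 0 < CJ := by positivity
  refine ⟨min 1 (1 / (2 * C)), lt_min one_pos (by positivity),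
    2 * C * (2 * C + CJ), by positivity, ?_⟩
  intro N τ hN hτeq hττ₀ x v hx0 hv0 hxrec hvrec n hn i j hji
  have hτpos : 0 < τ := by
    rw [hτeq]
    have : (0:ℝ) < (N:ℝ) := by exact_mod_cast hN
    positivity
  have hτC : τ * C ≤ 1 / 2 := by
    have h1 : τ ≤ 1 / (2 * C) := le_trans hττ₀ (min_le_right _ _)
    rw [le_div_iff₀ (by positivity)] at h1
    nlinarith
  -- The discrete manifold invariants.
  have inv : ∀ m, m ≤ N →
      ‖x m‖ = 1 ∧ (∀ a b : Fin k, ⟪v m a, v m b⟫ = if a = b then (1:ℝ) else 0) ∧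
        (∀ a : Fin k, ⟪v m a, x m⟫ = 0) := by
    intro m
    induction m with
    | zero =>
      intro _
      refine ⟨by rw [hx0, hx₀], ?_, ?_⟩
      · intro a b; rw [hv0]; exact hv₀ a b
      · intro a; rw [hv0, hx0]; exact hv₀x a
    | succ p ih =>
      intro hp1
      have hp : p < N := hp1
      obtain ⟨hx1, hvv, hvx⟩ := ih (le_of_lt hp)
      obtain ⟨hxtne, hxe⟩ := hxrec p hp
      have hx1' : ‖x (p+1)‖ = 1 := by
        rw [hxe, norm_smul, norm_inv, norm_norm,
          inv_mul_cancel₀ (norm_ne_zero_iff.2 hxtne)]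
      -- strong induction over Gram–Schmidt index
      have step : ∀ a : Fin k,
          (∀ b : Fin k, b < a → ‖v (p+1) b‖ = 1 ∧ ⟪v (p+1) b, x (p+1)⟫ = 0 ∧
            ∀ c : Fin k, c < b → ⟪v (p+1) b, v (p+1) c⟫ = 0) →
          ‖v (p+1) a‖ = 1 ∧ ⟪v (p+1) a, x (p+1)⟫ = 0 ∧
            ∀ c : Fin k, c < a → ⟪v (p+1) a, v (p+1) c⟫ = 0 := by
        intro a ihb
        obtain ⟨hwne, hva⟩ := hvrec p hp a
        set vt := v p a + τ • J (x p) (v p a) with hvt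
        set vh := vt - ⟪vt, x (p+1)⟫ • x (p+1) with hvh
        set w := vh - ∑ b ∈ Finset.Iio a, ⟪vh, v (p+1) b⟫ • v (p+1) b with hw
        have hvhx : ⟪vh, x (p+1)⟫ = 0 := by
          rw [hvh, inner_sub_left, real_inner_smul_left,
            real_inner_self_eq_norm_sq, hx1']
          ring
        have hwx : ⟪w, x (p+1)⟫ = 0 := by
          rw [hw, inner_sub_left, sum_inner, hvhx]
          rw [Finset.sum_eq_zero, sub_zero]
          intro b hb
          rw [real_inner_smul_left, (ihb b (Finset.mem_Iio.1 hb)).2.1, mul_zero]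
        have hwc : ∀ c : Fin k, c < a → ⟪w, v (p+1) c⟫ = 0 := by
          intro c hc
          rw [hw, inner_sub_left, sum_inner]
          have hsum : ∑ b ∈ Finset.Iio a, ⟪⟪vh, v (p+1) b⟫ • v (p+1) b, v (p+1) c⟫
              = ⟪vh, v (p+1) c⟫ := by
            rw [Finset.sum_eq_single c]
            · rw [real_inner_smul_left, real_inner_self_eq_norm_sq,
                (ihb c hc).1]
              ring
            · intro b hb hbc
              have hba : b < a := Finset.mem_Iio.1 hb
              have horth : ⟪v (p+1) b, v (p+1) c⟫ = 0 := by
                rcases lt_or_gt_of_ne hbc with h | h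
                · rw [real_inner_comm]
                  exact (ihb c hc).2.2 b h
                · exact (ihb b hba).2.2 c h
              rw [real_inner_smul_left, horth, mul_zero]
            · intro hcn
              exact absurd (Finset.mem_Iio.2 hc) hcn
          rw [hsum, sub_self]
        have hnorm1 : ‖v (p+1) a‖ = 1 := by
          rw [hva, norm_smul, norm_inv, norm_norm,
            inv_mul_cancel₀ (norm_ne_zero_iff.2 hwne)]
        refine ⟨hnorm1, ?_, ?_⟩
        · rw [hva, real_inner_smul_left, hwx, mul_zero]
        · intro c hc
          rw [hva, real_inner_smul_left, hwc c hc, mul_zero]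
      have key : ∀ m, ∀ a : Fin k, a.val ≤ m →
          ‖v (p+1) a‖ = 1 ∧ ⟪v (p+1) a, x (p+1)⟫ = 0 ∧
            ∀ c : Fin k, c < a → ⟪v (p+1) a, v (p+1) c⟫ = 0 := by
        intro m
        induction m with
        | zero =>
          intro a ha
          exact step a (fun b hb => absurd (Fin.lt_def.1 hb) (by omega))
        | succ m ihm =>
          intro a ha
          exact step a (fun b hb => ihm b (by omega))
      have key' : ∀ a : Fin k, ‖v (p+1) a‖ = 1 ∧ ⟪v (p+1) a, x (p+1)⟫ = 0 ∧
          ∀ c : Fin k, c < a → ⟪v (p+1) a, v (p+1) c⟫ = 0 :=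
        fun a => key a.val a le_rfl
      refine ⟨hx1', ?_, fun a => (key' a).2.1⟩
      intro a b
      rcases eq_or_ne a b with rfl | hab
      · rw [if_pos rfl, real_inner_self_eq_norm_sq, (key' a).1]; norm_num
      · rw [if_neg hab]
        rcases lt_or_gt_of_ne hab with h | h
        · rw [real_inner_comm]; exact (key' b).2.2 a h
        · exact (key' a).2.2 b h
  -- Now the estimate at step n.
  obtain ⟨hx1, hvv, hvx⟩ := inv n (le_of_lt hn)
  obtain ⟨hx1', _, _⟩ := inv (n+1) hn
  have hv1 : ∀ a : Fin k, ‖v n a‖ = 1 := by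
    intro a
    have := hvv a a
    rw [if_pos rfl, real_inner_self_eq_norm_sq] at this
    nlinarith [norm_nonneg (v n a)]
  obtain ⟨hxtne, hxe⟩ := hxrec n hn
  set S := F (x n) - (2:ℝ) • ∑ b, ⟪v n b, F (x n)⟫ • v n b with hSdef
  set xt := x n + τ • S with hxtdef
  have hF : ‖F (x n)‖ ≤ 2 * L := by
    have := hgrow (x n); rw [hx1] at this; linarith
  have hSle : ‖S‖ ≤ C := by
    have hsum : ‖∑ b, ⟪v n b, F (x n)⟫ • v n b‖ ≤ (k : ℝ) * (2 * L) := by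
      calc ‖∑ b, ⟪v n b, F (x n)⟫ • v n b‖
          ≤ ∑ b, ‖⟪v n b, F (x n)⟫ • v n b‖ := norm_sum_le _ _
        _ ≤ ∑ _b : Fin k, 2 * L := by
            refine Finset.sum_le_sum fun b _ => ?_
            rw [norm_smul, hv1 b, mul_one, Real.norm_eq_abs]
            calc |⟪v n b, F (x n)⟫| ≤ ‖v n b‖ * ‖F (x n)‖ := abs_real_inner_le_norm _ _
              _ ≤ 2 * L := by rw [hv1 b, one_mul]; exact hF
        _ = (k : ℝ) * (2 * L) := by rw [Finset.sum_const, Finset.card_univ,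
              Fintype.card_fin, nsmul_eq_mul]
    calc ‖S‖ ≤ ‖F (x n)‖ + ‖(2:ℝ) • ∑ b, ⟪v n b, F (x n)⟫ • v n b‖ := norm_sub_le _ _
      _ ≤ 2 * L + 2 * ((k : ℝ) * (2 * L)) := by
          rw [norm_smul, Real.norm_ofNat]
          have := mul_le_mul_of_nonneg_left hsum (by norm_num : (0:ℝ) ≤ 2)
          linarith
      _ = C := by rw [hCdef]; ring
  have hτS : τ * ‖S‖ ≤ τ * C := mul_le_mul_of_nonneg_left hSle hτpos.le
  have hxtlb : (1:ℝ)/2 ≤ ‖xt‖ := by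
    have h1 : x n = xt - τ • S := by rw [hxtdef]; abel
    have h2 : (1:ℝ) ≤ ‖xt‖ + τ * ‖S‖ := by
      calc (1:ℝ) = ‖x n‖ := hx1.symm
        _ = ‖xt - τ • S‖ := by rw [← h1]
        _ ≤ ‖xt‖ + ‖τ • S‖ := norm_sub_le _ _
        _ = ‖xt‖ + τ * ‖S‖ := by rw [norm_smul, Real.norm_eq_abs, abs_of_pos hτpos]
    linarith
  have hxtinv : ‖xt‖⁻¹ ≤ 2 := by
    rw [inv_le_comm₀ (by linarith) (by norm_num)]
    linarith
  have hxp : ∀ a : Fin k, |⟪x (n+1), v n a⟫| ≤ 2 * (τ * C) := by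
    intro a
    have hxtv : ⟪xt, v n a⟫ = τ * ⟪S, v n a⟫ := by
      rw [hxtdef, inner_add_left, real_inner_smul_left, real_inner_comm, hvx a,
        zero_add]
    have hSv : |⟪S, v n a⟫| ≤ C := by
      calc |⟪S, v n a⟫| ≤ ‖S‖ * ‖v n a‖ := abs_real_inner_le_norm _ _
        _ ≤ C := by rw [hv1 a, mul_one]; exact hSle
    rw [hxe, real_inner_smul_left, hxtv, abs_mul, abs_mul,
      abs_of_nonneg (inv_nonneg.2 (norm_nonneg _)), abs_of_pos hτpos]
    have h1 : τ * |⟪S, v n a⟫| ≤ τ * C := mul_le_mul_of_nonneg_left hSv hτpos.le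
    have h2 : (0:ℝ) ≤ τ * |⟪S, v n a⟫| := by positivity
    exact mul_le_mul hxtinv h1 h2 (by norm_num)
  have hJb : ‖J (x n)‖ ≤ CJ := by
    have h1 := hLip x₀ (x n)
    have h2 : ‖x n - x₀‖ ≤ 2 := by
      calc ‖x n - x₀‖ ≤ ‖x n‖ + ‖x₀‖ := norm_sub_le _ _
        _ = 2 := by rw [hx1, hx₀]; norm_num
    have h3 : ‖J (x n) - J x₀‖ ≤ 2 * L := by
      have h2' : L * ‖x n - x₀‖ ≤ L * 2 := mul_le_mul_of_nonneg_left h2 hL.le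
      have h2'' := norm_nonneg (F (x n) - F x₀)
      linarith
    have h4 : ‖J (x n)‖ ≤ ‖J x₀‖ + ‖J (x n) - J x₀‖ := by
      have := norm_add_le (J x₀) (J (x n) - J x₀)
      rwa [add_sub_cancel] at this
    rw [hCJdef]; linarith
  show |⟪(v n j + τ • J (x n) (v n j)) -
      ⟪v n j + τ • J (x n) (v n j), x (n+1)⟫ • x (n+1), v n i⟫ -
      τ * ⟪J (x n) (v n j), v n i⟫| ≤ 2 * C * (2 * C + CJ) * τ ^ 2
  set vt := v n j + τ • J (x n) (v n j) with hvtdef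
  have hvtx : |⟪vt, x (n+1)⟫| ≤ 2 * (τ * C) + τ * CJ := by
    have hJv : |⟪J (x n) (v n j), x (n+1)⟫| ≤ CJ := by
      calc |⟪J (x n) (v n j), x (n+1)⟫| ≤ ‖J (x n) (v n j)‖ * ‖x (n+1)‖ :=
          abs_real_inner_le_norm _ _
        _ ≤ ‖J (x n)‖ * ‖v n j‖ * ‖x (n+1)‖ := by
            rw [hx1', mul_one, mul_one]
            exact (J (x n)).le_opNorm (v n j)
        _ ≤ CJ := by rw [hv1 j, hx1', mul_one, mul_one]; exact hJb
    have h1 : ⟪vt, x (n+1)⟫ = ⟪v n j, x (n+1)⟫ + τ * ⟪J (x n) (v n j), x (n+1)⟫ := by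
      rw [hvtdef, inner_add_left, real_inner_smul_left]
    have h2 : |⟪v n j, x (n+1)⟫| ≤ 2 * (τ * C) := by
      rw [real_inner_comm]; exact hxp j
    rw [h1]
    refine le_trans (abs_add_le _ _) ?_
    rw [abs_mul, abs_of_pos hτpos]
    have h5 := mul_le_mul_of_nonneg_left hJv hτpos.le
    linarith
  have hvti : ⟪vt, v n i⟫ = τ * ⟪J (x n) (v n j), v n i⟫ := by
    rw [hvtdef, inner_add_left, real_inner_smul_left, hvv j i,
      if_neg (ne_of_lt hji), zero_add]
  have hexp : ⟪vt - ⟪vt, x (n+1)⟫ • x (n+1), v n i⟫ - τ * ⟪J (x n) (v n j), v n i⟫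
      = -(⟪vt, x (n+1)⟫ * ⟪x (n+1), v n i⟫) := by
    rw [inner_sub_left, real_inner_smul_left, hvti]
    ring
  rw [hexp, abs_neg, abs_mul]
  calc |⟪vt, x (n+1)⟫| * |⟪x (n+1), v n i⟫|
      ≤ (2 * (τ * C) + τ * CJ) * (2 * (τ * C)) := by
        apply mul_le_mul hvtx (hxp i) (abs_nonneg _)
        positivity
    _ = 2 * C * (2 * C + CJ) * τ ^ 2 := by ring
end
end

section
/- Under Assumption A, there exist τ₀ > 0 and Q > 0, depending only on d, k, L and T, such that for every N ∈ ℕ with τ = T/N ≤ τ₀, the iterates of the constrained discrete HiSD scheme satisfy, for all 1 ≤ i ≤ k and 1 ≤ n ≤ N, ‖(v_{i,n} − v_{i,n−1})/τ − R_i^{n−1} − L_i^{n−1} + x_{n−1} x_{n−1}ᵀ J(x_{n−1}) v_{i,n−1} − x_{n−1} (v_{i,n−1}ᵀ F(x_{n−1}))‖ ≤ Q τ; that is, combining the Rayleigh-quotient step, the vector transport and the Gram–Schmidt step recovers, up to an O(τ) error, the Euler discretization of the constrained directional dynamics dv_i/dt = R_i + L_i − x xᵀ J(x) v_i + x v_iᵀ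 F(x). -/
open scoped RealInnerProductSpace BigOperators
set_option maxHeartbeats 2000000
section
variable {E : Type*} [NormedAddCommGroup E] [InnerProductSpace ℝ E]

lemma fin_sum_Iio (k : ℕ) (i : Fin k) (f : ℕ → ℝ) :
    ∑ j ∈ Finset.Iio i, f j.val = ∑ m ∈ Finset.range i.val, f m := by
  rw [← Nat.Iio_eq_range, ← Fin.map_valEmbedding_Iio, Finset.sum_map]
  rfl

lemma geom_bound (m : ℕ) : ∑ j ∈ Finset.range m, (10:ℝ)^j = ((10:ℝ)^m - 1)/9 := by
  have h := geom_sum_eq (by norm_num : (10:ℝ) ≠ 1) m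
  rw [h]; norm_num

lemma normalize_est (a p : E) (ha : ‖a‖ = 1) (hp : ‖p‖ ≤ 1/2) (hz : a + p ≠ 0) :
    ‖‖a + p‖⁻¹ • (a + p) - (a + p - ⟪a, p⟫ • a)‖ ≤ 9 * ‖p‖ ^ 2 := by
  set s := ‖a + p‖ with hs
  set c := ⟪a, p⟫ with hc
  have hcabs : |c| ≤ ‖p‖ := by
    calc |c| ≤ ‖a‖ * ‖p‖ := abs_real_inner_le_norm a p
    _ = ‖p‖ := by rw [ha, one_mul]
  have hs2 : s ^ 2 = 1 + 2 * c + ‖p‖ ^ 2 := by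
    rw [hs, @norm_add_sq_real, ha]; ring
  have hslb : 1 - ‖p‖ ≤ s := by
    have := norm_sub_norm_le a (-p)
    simp only [norm_neg, sub_neg_eq_add, ha] at this
    simpa using this
  have hsub : s ≥ 1/2 := by linarith
  have hzub : s ≤ 3/2 := by
    have := norm_add_le a p
    rw [ha] at this; linarith
  have hspos : (0:ℝ) < s := by linarith
  have hkey : |s - (1 + c)| ≤ ‖p‖ ^ 2 := by
    have h1 : (s - (1 + c)) * (s + (1 + c)) = ‖p‖ ^ 2 - c ^ 2 := by nlinarith [hs2]
    have hclb : -‖p‖ ≤ c := by have := abs_le.mp hcabs; linarith [this.1]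
    have hden : 1 ≤ s + (1 + c) := by linarith
    have h2 : |s - (1+c)| * 1 ≤ |s - (1+c)| * (s + (1+c)) :=
      mul_le_mul_of_nonneg_left hden (abs_nonneg _)
    have h3 : |s - (1+c)| * (s + (1+c)) = |‖p‖^2 - c^2| := by
      rw [← abs_of_nonneg (by linarith : (0:ℝ) ≤ s + (1+c)), ← abs_mul, h1]
    have h4 : |‖p‖^2 - c^2| ≤ ‖p‖^2 := by
      rw [abs_of_nonneg (by nlinarith [abs_le.mp hcabs, sq_abs c] : (0:ℝ) ≤ ‖p‖^2 - c^2)]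
      nlinarith [sq_abs c, abs_nonneg c]
    calc |s - (1+c)| = |s - (1+c)| * 1 := (mul_one _).symm
      _ ≤ |s - (1+c)| * (s + (1+c)) := h2
      _ = |‖p‖^2 - c^2| := h3
      _ ≤ ‖p‖^2 := h4
  have hdiff : s⁻¹ • (a + p) - ((a + p) - c • a) = (s⁻¹ - 1 + c) • (a + p) - c • p := by
    module
  rw [hdiff]
  have hs1 : |s - 1| ≤ ‖p‖ + ‖p‖^2 := by
    have h3 : s - 1 = (s - (1+c)) + c := by ring
    have h2 := abs_add_le (s - (1+c)) c
    rw [h3]; exact h2.trans (by linarith)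
  have hnum : |1 - s + s*c| ≤ (5/2) * ‖p‖^2 := by
    have h4 : 1 - s + s*c = -(s - (1+c)) + c*(s-1) := by ring
    rw [h4]
    refine (abs_add_le _ _).trans ?_
    rw [abs_neg, abs_mul]
    have hple : ‖p‖ * |s-1| ≤ ‖p‖ * (‖p‖ + ‖p‖^2) :=
      mul_le_mul_of_nonneg_left hs1 (norm_nonneg p)
    have : |c| * |s-1| ≤ ‖p‖ * (‖p‖ + ‖p‖^2) :=
      le_trans (mul_le_mul_of_nonneg_right hcabs (abs_nonneg _)) hple
    nlinarith [norm_nonneg p]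
  have hinv : |s⁻¹ - 1 + c| ≤ 5 * ‖p‖^2 := by
    have he : (s⁻¹ - 1 + c) * s = 1 - s + s*c := by
      field_simp
    have hm : |s⁻¹ - 1 + c| * s = |1 - s + s*c| := by
      rw [← he, abs_mul, abs_of_pos hspos]
    nlinarith [abs_nonneg (s⁻¹ - 1 + c)]
  calc ‖(s⁻¹ - 1 + c) • (a+p) - c • p‖ ≤ ‖(s⁻¹ - 1 + c) • (a+p)‖ + ‖c • p‖ := norm_sub_le _ _
    _ = |s⁻¹ - 1 + c| * s + |c| * ‖p‖ := by rw [norm_smul, norm_smul]; rfl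
    _ ≤ 5 * ‖p‖^2 * (3/2) + ‖p‖ * ‖p‖ := by gcongr
    _ ≤ 9 * ‖p‖^2 := by nlinarith [norm_nonneg p]


lemma norm_sum_le_card_mul {ι : Type*} (s : Finset ι) (g : ι → E) (C : ℝ)
    (h : ∀ j ∈ s, ‖g j‖ ≤ C) : ‖∑ j ∈ s, g j‖ ≤ s.card * C := by
  refine (norm_sum_le _ _).trans ?_
  calc ∑ j ∈ s, ‖g j‖ ≤ ∑ _j ∈ s, C := Finset.sum_le_sum h
  _ = s.card * C := by rw [Finset.sum_const, nsmul_eq_mul]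

lemma norm_one_of_inner_self {u : E} (h : ⟪u, u⟫ = (1:ℝ)) : ‖u‖ = 1 := by
  have := real_inner_self_eq_norm_mul_norm u
  nlinarith [norm_nonneg u]

lemma step_gs_inv (k : ℕ) (xn : E) (hxn1 : ‖xn‖ = 1)
    (vh : Fin k → E) (hvhx : ∀ i, ⟪vh i, xn⟫ = 0)
    (vn : Fin k → E)
    (hvn : ∀ i : Fin k,
      (vh i - ∑ j ∈ Finset.Iio i, ⟪vh i, vn j⟫ • vn j ≠ 0) ∧
      vn i = ‖vh i - ∑ j ∈ Finset.Iio i, ⟪vh i, vn j⟫ • vn j‖⁻¹ •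
        (vh i - ∑ j ∈ Finset.Iio i, ⟪vh i, vn j⟫ • vn j)) :
    (∀ i, ⟪vn i, xn⟫ = 0) ∧ (∀ i j, ⟪vn i, vn j⟫ = if i = j then (1:ℝ) else 0) := by
  set w : Fin k → E := fun i => vh i - ∑ j ∈ Finset.Iio i, ⟪vh i, vn j⟫ • vn j with hw
  have P : ∀ m : ℕ, ∀ i : Fin k, (i:ℕ) < m →
      ⟪vn i, xn⟫ = 0 ∧ ‖vn i‖ = 1 ∧ ∀ j : Fin k, j < i → ⟪vn i, vn j⟫ = 0 := by
    intro m
    induction m with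
    | zero => intro i h; omega
    | succ m ih =>
      intro i hi
      have hIH : ∀ j : Fin k, j < i →
          ⟪vn j, xn⟫ = 0 ∧ ‖vn j‖ = 1 ∧ ∀ l : Fin k, l < j → ⟪vn j, vn l⟫ = 0 := by
        intro j hj
        exact ih j (by omega)
      -- orthonormality of vn j for j, l < i
      have horth : ∀ j l : Fin k, j < i → l < i → ⟪vn j, vn l⟫ = if j = l then (1:ℝ) else 0 := by
        intro j l hj hl
        by_cases hjl : j = l
        · subst hjl
          rw [if_pos rfl, real_inner_self_eq_norm_mul_norm, (hIH j hj).2.1, one_mul]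
        · rw [if_neg hjl]
          rcases lt_or_gt_of_ne hjl with h | h
          · rw [real_inner_comm]; exact (hIH l hl).2.2 j h
          · exact (hIH j hj).2.2 l h
      obtain ⟨hwne, hvni⟩ := hvn i
      have hwx : ⟪w i, xn⟫ = 0 := by
        rw [hw]
        simp only [inner_sub_left, hvhx i, sum_inner, inner_smul_left]
        rw [Finset.sum_eq_zero]
        · ring
        · intro j hj
          rw [(hIH j (Finset.mem_Iio.mp hj)).1, mul_zero]
      have hwvj : ∀ j : Fin k, j < i → ⟪w i, vn j⟫ = 0 := by
        intro j hj
        rw [hw]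
        simp only [inner_sub_left, sum_inner, inner_smul_left]
        rw [Finset.sum_eq_single j]
        · rw [horth j j hj hj, if_pos rfl]; simp
        · intro l hl hlj
          rw [horth l j (Finset.mem_Iio.mp hl) hj, if_neg hlj, mul_zero]
        · intro hji; exact absurd (Finset.mem_Iio.mpr hj) hji
      have hnorm : ‖vn i‖ = 1 := by
        rw [hvni, norm_smul, norm_inv, norm_norm, inv_mul_cancel₀ (norm_ne_zero_iff.mpr hwne)]
      refine ⟨?_, hnorm, ?_⟩
      · rw [hvni, real_inner_smul_left, hwx, mul_zero]
      · intro j hj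
        rw [hvni, real_inner_smul_left, hwvj j hj, mul_zero]
  have Pall : ∀ i : Fin k, ⟪vn i, xn⟫ = 0 ∧ ‖vn i‖ = 1 ∧
      ∀ j : Fin k, j < i → ⟪vn i, vn j⟫ = 0 := fun i => P (i.val + 1) i (Nat.lt_succ_self _)
  refine ⟨fun i => (Pall i).1, fun i j => ?_⟩
  by_cases hij : i = j
  · subst hij
    rw [if_pos rfl, real_inner_self_eq_norm_mul_norm, (Pall i).2.1, one_mul]
  · rw [if_neg hij]
    rcases lt_or_gt_of_ne hij with h | h
    · rw [real_inner_comm]; exact (Pall j).2.2 i h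
    · exact (Pall i).2.2 j h

lemma step_est (k : ℕ) (hk : 1 ≤ k) (B τ : ℝ) (hB : 1 ≤ B) (hτ : 0 < τ)
    (hsmall : τ * (100 * ((k:ℝ)+1) * B) ≤ 1)
    (hQsmall : τ * (642 * (k:ℝ)^2 * B^2 * 10^k) ≤ 1)
    (f : E) (hfB : ‖f‖ ≤ B)
    (A : E →L[ℝ] E) (hAB : ‖A‖ ≤ B) (hAsym : ∀ u w : E, ⟪A u, w⟫ = ⟪u, A w⟫)
    (xc xn : E) (vc vn : Fin k → E)
    (hxc : ‖xc‖ = 1)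
    (hvc : ∀ i j, ⟪vc i, vc j⟫ = if i = j then (1:ℝ) else 0)
    (hvcx : ∀ i, ⟪vc i, xc⟫ = 0)
    (hxn : xn = ‖xc + τ • (f - (2:ℝ) • ∑ j, ⟪vc j, f⟫ • vc j)‖⁻¹ •
      (xc + τ • (f - (2:ℝ) • ∑ j, ⟪vc j, f⟫ • vc j)))
    (hxn1 : ‖xn‖ = 1)
    (hvnorth : ∀ i j, ⟪vn i, vn j⟫ = if i = j then (1:ℝ) else 0)
    (hvn : ∀ i : Fin k,
      ((vc i + τ • A (vc i) - ⟪vc i + τ • A (vc i), xn⟫ • xn) -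
        ∑ j ∈ Finset.Iio i, ⟪vc i + τ • A (vc i) - ⟪vc i + τ • A (vc i), xn⟫ • xn, vn j⟫ • vn j
          ≠ 0) ∧
      vn i = ‖(vc i + τ • A (vc i) - ⟪vc i + τ • A (vc i), xn⟫ • xn) -
        ∑ j ∈ Finset.Iio i, ⟪vc i + τ • A (vc i) - ⟪vc i + τ • A (vc i), xn⟫ • xn, vn j⟫ • vn j‖⁻¹ •
        ((vc i + τ • A (vc i) - ⟪vc i + τ • A (vc i), xn⟫ • xn) -
        ∑ j ∈ Finset.Iio i, ⟪vc i + τ • A (vc i) - ⟪vc i + τ • A (vc i), xn⟫ • xn, vn j⟫ • vn j)) :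
    ∀ i : Fin k,
      ‖vn i - vc i - τ • (A (vc i) +
          ((-⟪vc i, A (vc i)⟫) • vc i -
            (2:ℝ) • ∑ j ∈ Finset.Iio i, ⟪vc j, A (vc i)⟫ • vc j) -
          ⟪xc, A (vc i)⟫ • xc + ⟪vc i, f⟫ • xc)‖ ≤
        642 * (k:ℝ)^2 * B^2 * 10^(i:ℕ) * τ^2 := by
  -- the target drift
  set g : Fin k → E := fun i => A (vc i) +
      ((-⟪vc i, A (vc i)⟫) • vc i - (2:ℝ) • ∑ j ∈ Finset.Iio i, ⟪vc j, A (vc i)⟫ • vc j) -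
      ⟪xc, A (vc i)⟫ • xc + ⟪vc i, f⟫ • xc with hgdef
  have hk' : (1:ℝ) ≤ (k:ℝ) := by exact_mod_cast hk
  have hB0 : (0:ℝ) ≤ B := by linarith
  have hkB : τ * ((k:ℝ) * B) ≤ 1/100 := by
    nlinarith only [hsmall, hk', hB0, hτ.le, mul_nonneg hτ.le hB0]
  have hτB : τ * B ≤ 1/100 := by
    nlinarith only [hsmall, hk', hB0, hτ.le, mul_nonneg hτ.le hB0,
      mul_nonneg (mul_nonneg hτ.le (Nat.cast_nonneg k)) hB0]
  have hkB0 : (0:ℝ) ≤ (k:ℝ)*B := by positivity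
  have hnvc : ∀ i, ‖vc i‖ = 1 := by
    intro i
    have h := hvc i i
    rw [if_pos rfl] at h
    have := real_inner_self_eq_norm_mul_norm (vc i)
    nlinarith [norm_nonneg (vc i)]
  have hnvn : ∀ i, ‖vn i‖ = 1 := by
    intro i
    have h := hvnorth i i
    rw [if_pos rfl] at h
    have := real_inner_self_eq_norm_mul_norm (vn i)
    nlinarith [norm_nonneg (vn i)]
  -- bound on S
  set S : E := f - (2:ℝ) • ∑ j, ⟪vc j, f⟫ • vc j with hSdef
  have hSB : ‖S‖ ≤ 3*(k:ℝ)*B := by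
    have hsum : ‖∑ j, ⟪vc j, f⟫ • vc j‖ ≤ (k:ℝ) * B := by
      have := norm_sum_le_card_mul Finset.univ (fun j => ⟪vc j, f⟫ • vc j) B ?_
      · simpa using this
      · intro j _
        rw [norm_smul, hnvc j, mul_one]
        calc |⟪vc j, f⟫| ≤ ‖vc j‖ * ‖f‖ := abs_real_inner_le_norm _ _
          _ ≤ 1 * B := by rw [hnvc j]; simpa using hfB
          _ = B := one_mul B
    calc ‖S‖ ≤ ‖f‖ + ‖(2:ℝ) • ∑ j, ⟪vc j, f⟫ • vc j‖ := norm_sub_le _ _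
      _ ≤ B + 2 * ((k:ℝ)*B) := by
          rw [norm_smul]; simp only [Real.norm_ofNat]; gcongr
      _ ≤ 3*(k:ℝ)*B := by nlinarith only [hk', hB0]
  set xt : E := xc + τ • S with hxtdef
  have hxtxc : ‖xt - xc‖ ≤ 3*(k:ℝ)*B*τ := by
    have : xt - xc = τ • S := by rw [hxtdef]; abel
    rw [this, norm_smul, Real.norm_eq_abs, abs_of_pos hτ]
    nlinarith only [hSB, hτ.le]
  have hxtn1 : |‖xt‖ - 1| ≤ 3*(k:ℝ)*B*τ := by
    have h := abs_norm_sub_norm_le xt xc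
    rw [hxc] at h
    exact h.trans hxtxc
  have hkBτ : 3*(k:ℝ)*B*τ ≤ 3/100 := by linarith only [hkB]
  have hxtlb : 9/10 ≤ ‖xt‖ := by
    have := abs_le.mp hxtn1
    linarith [this.1]
  have hxtub : ‖xt‖ ≤ 2 := by
    have := abs_le.mp hxtn1
    linarith [this.2]
  have hxtpos : (0:ℝ) < ‖xt‖ := by linarith
  have hxt0 : xt ≠ 0 := by
    intro h
    rw [h, norm_zero] at hxtlb
    linarith
  have hinv1 : |‖xt‖⁻¹ - 1| ≤ 6*(k:ℝ)*B*τ := by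
    have he : (‖xt‖⁻¹ - 1) * ‖xt‖ = 1 - ‖xt‖ := by field_simp
    have habs : |‖xt‖⁻¹ - 1| * ‖xt‖ = |1 - ‖xt‖| := by
      rw [← he, abs_mul, abs_of_pos hxtpos]
    have h1 : |1 - ‖xt‖| ≤ 3*(k:ℝ)*B*τ := by rw [abs_sub_comm]; exact hxtn1
    nlinarith only [habs, h1, hxtlb, abs_nonneg (‖xt‖⁻¹ - 1),
      mul_nonneg (mul_nonneg (mul_nonneg (by norm_num : (0:ℝ) ≤ 3) (Nat.cast_nonneg k)) hB0) hτ.le]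
  have hxnxc : ‖xn - xc‖ ≤ 6*(k:ℝ)*B*τ := by
    have heq : xn - xc = (‖xt‖⁻¹ - 1) • xt + (τ • S) := by
      rw [hxn, hxtdef]
      module
    rw [heq]
    calc ‖(‖xt‖⁻¹ - 1) • xt + τ • S‖ ≤ ‖(‖xt‖⁻¹ - 1) • xt‖ + ‖τ • S‖ := norm_add_le _ _
      _ = |‖xt‖⁻¹ - 1| * ‖xt‖ + |τ| * ‖S‖ := by rw [norm_smul, norm_smul]; rfl
      _ = |1 - ‖xt‖| + τ * ‖S‖ := by
          rw [abs_of_pos hτ]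
          congr 1
          have he : (‖xt‖⁻¹ - 1) * ‖xt‖ = 1 - ‖xt‖ := by field_simp
          rw [← he, abs_mul, abs_of_pos hxtpos]
      _ ≤ 3*(k:ℝ)*B*τ + τ*(3*(k:ℝ)*B) := by
          have h1 : |1 - ‖xt‖| ≤ 3*(k:ℝ)*B*τ := by rw [abs_sub_comm]; exact hxtn1
          gcongr
      _ = 6*(k:ℝ)*B*τ := by ring
  -- generic inner product bounds
  have hAuB : ∀ i, ‖A (vc i)‖ ≤ B := by
    intro i
    calc ‖A (vc i)‖ ≤ ‖A‖ * ‖vc i‖ := A.le_opNorm _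
      _ ≤ B := by rw [hnvc i, mul_one]; exact hAB
  have hufB : ∀ i j, |⟪vc i, A (vc j)⟫| ≤ B := by
    intro i j
    calc |⟪vc i, A (vc j)⟫| ≤ ‖vc i‖ * ‖A (vc j)‖ := abs_real_inner_le_norm _ _
      _ ≤ B := by rw [hnvc i, one_mul]; exact hAuB j
  have hvfB : ∀ i, |⟪vc i, f⟫| ≤ B := by
    intro i
    calc |⟪vc i, f⟫| ≤ ‖vc i‖ * ‖f‖ := abs_real_inner_le_norm _ _
      _ ≤ B := by rw [hnvc i, one_mul]; exact hfB
  have hxAuB : ∀ i, |⟪xc, A (vc i)⟫| ≤ B := by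
    intro i
    calc |⟪xc, A (vc i)⟫| ≤ ‖xc‖ * ‖A (vc i)‖ := abs_real_inner_le_norm _ _
      _ ≤ B := by rw [hxc, one_mul]; exact hAuB i
  -- bound on the drift g
  have hgB : ∀ j, ‖g j‖ ≤ 6*(k:ℝ)*B := by
    intro j
    set s1 : E := ∑ l ∈ Finset.Iio j, ⟪vc l, A (vc j)⟫ • vc l with hs1
    have hsum : ‖s1‖ ≤ (k:ℝ) * B := by
      have hb := norm_sum_le_card_mul (Finset.Iio j) (fun l => ⟪vc l, A (vc j)⟫ • vc l) B ?_
      · refine le_trans (le_of_eq (by rw [hs1])) (hb.trans ?_)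
        have hc : ((Finset.Iio j).card : ℝ) ≤ (k:ℝ) := by
          rw [Fin.card_Iio]
          exact_mod_cast (j.isLt).le
        nlinarith only [hc, hB0]
      · intro l _
        rw [norm_smul, hnvc l, mul_one, Real.norm_eq_abs]
        exact hufB l j
    have h3 : ‖(-⟪vc j, A (vc j)⟫) • vc j‖ ≤ B := by
      rw [norm_smul, hnvc j, mul_one, Real.norm_eq_abs, abs_neg]; exact hufB j j
    have h4 : ‖⟪xc, A (vc j)⟫ • xc‖ ≤ B := by
      rw [norm_smul, hxc, mul_one, Real.norm_eq_abs]; exact hxAuB j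
    have h5 : ‖⟪vc j, f⟫ • xc‖ ≤ B := by
      rw [norm_smul, hxc, mul_one, Real.norm_eq_abs]; exact hvfB j
    have hgj : g j = A (vc j) +
        ((-⟪vc j, A (vc j)⟫) • vc j - (2:ℝ) • s1) -
        ⟪xc, A (vc j)⟫ • xc + ⟪vc j, f⟫ • xc := by rw [hgdef]
    have h2 : ‖(2:ℝ) • s1‖ ≤ 2*((k:ℝ)*B) := by
      rw [norm_smul]; simp only [Real.norm_ofNat]; linarith only [hsum]
    rw [hgj]
    have t1 := norm_add_le (A (vc j) + ((-⟪vc j, A (vc j)⟫) • vc j - (2:ℝ) • s1) -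
        ⟪xc, A (vc j)⟫ • xc) (⟪vc j, f⟫ • xc)
    have t2 := norm_sub_le (A (vc j) + ((-⟪vc j, A (vc j)⟫) • vc j - (2:ℝ) • s1))
        (⟪xc, A (vc j)⟫ • xc)
    have t3 := norm_add_le (A (vc j)) ((-⟪vc j, A (vc j)⟫) • vc j - (2:ℝ) • s1)
    have t4 := norm_sub_le ((-⟪vc j, A (vc j)⟫) • vc j) ((2:ℝ) • s1)
    have hA := hAuB j
    nlinarith only [t1, t2, t3, t4, h2, h3, h4, h5, hA, hk', hB0]
  have main : ∀ m : ℕ, ∀ i : Fin k, (i:ℕ) < m →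
      ‖vn i - vc i - τ • g i‖ ≤ 642*(k:ℝ)^2*B^2*10^(i:ℕ)*τ^2 := by
    intro m
    induction m with
    | zero => intro i h; omega
    | succ m ih =>
      intro i hi
      have hIH : ∀ j : Fin k, j < i →
          ‖vn j - vc j - τ • g j‖ ≤ 642*(k:ℝ)^2*B^2*10^(j:ℕ)*τ^2 :=
        fun j hj => ih j (by omega)
      obtain ⟨hwne, hvni⟩ := hvn i
      clear ih hvn
      set vt : E := vc i + τ • A (vc i) with hvtdef
      set cc : ℝ := ⟪vt, xn⟫ with hccdef
      set vh : E := vt - cc • xn with hvhdef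
      set w : E := vh - ∑ j ∈ Finset.Iio i, ⟪vh, vn j⟫ • vn j with hwdef
      -- inner products with the new x
      have huxt : ⟪vc i, xt⟫ = -(τ * ⟪vc i, f⟫) := by
        have hsum : ∑ j, ⟪vc j, f⟫ * ⟪vc i, vc j⟫ = ⟪vc i, f⟫ := by
          rw [Finset.sum_eq_single i]
          · rw [hvc i i, if_pos rfl, mul_one]
          · intro j _ hji
            rw [hvc i j, if_neg (fun h => hji h.symm), mul_zero]
          · intro h; exact absurd (Finset.mem_univ i) h
        rw [hxtdef, hSdef, inner_add_right, real_inner_smul_right, inner_sub_right,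
          real_inner_smul_right, inner_sum]
        simp only [real_inner_smul_right]
        rw [hvcx i, hsum]
        ring
      have huxn : ⟪vc i, xn⟫ = ‖xt‖⁻¹ * -(τ * ⟪vc i, f⟫) := by
        rw [hxn, real_inner_smul_right, huxt]
      have hcc0 : cc = ⟪vc i, xn⟫ + τ * ⟪A (vc i), xn⟫ := by
        rw [hccdef, hvtdef, inner_add_left, real_inner_smul_left]
      have hdd_eq : cc - τ*(⟪xc, A (vc i)⟫ - ⟪vc i, f⟫)
          = τ*⟪vc i, f⟫*(1 - ‖xt‖⁻¹) + τ*⟪A (vc i), xn - xc⟫ := by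
        rw [hcc0, huxn, inner_sub_right, real_inner_comm xc (A (vc i))]
        ring
      have hAxn : |⟪A (vc i), xn - xc⟫| ≤ B * (6*(k:ℝ)*B*τ) := by
        calc |⟪A (vc i), xn - xc⟫| ≤ ‖A (vc i)‖ * ‖xn - xc‖ := abs_real_inner_le_norm _ _
          _ ≤ B * (6*(k:ℝ)*B*τ) := mul_le_mul (hAuB i) hxnxc (norm_nonneg _) hB0
      have hdd : |cc - τ*(⟪xc, A (vc i)⟫ - ⟪vc i, f⟫)| ≤ 12*(k:ℝ)*B^2*τ^2 := by
        rw [hdd_eq]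
        have e1 : |τ*⟪vc i, f⟫*(1 - ‖xt‖⁻¹)| ≤ τ*B*(6*(k:ℝ)*B*τ) := by
          rw [abs_mul, abs_mul, abs_of_pos hτ, abs_sub_comm]
          have h1 := hvfB i
          have h2 := hinv1
          have hmm2 : |⟪vc i, f⟫| * |‖xt‖⁻¹ - 1| ≤ B * (6*(k:ℝ)*B*τ) :=
            mul_le_mul h1 h2 (abs_nonneg _) hB0
          nlinarith only [hmm2, hτ.le]
        have e2 : |τ*⟪A (vc i), xn - xc⟫| ≤ τ*(B*(6*(k:ℝ)*B*τ)) := by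
          rw [abs_mul, abs_of_pos hτ]
          exact mul_le_mul_of_nonneg_left hAxn hτ.le
        calc |τ*⟪vc i, f⟫*(1 - ‖xt‖⁻¹) + τ*⟪A (vc i), xn - xc⟫|
            ≤ |τ*⟪vc i, f⟫*(1 - ‖xt‖⁻¹)| + |τ*⟪A (vc i), xn - xc⟫| := abs_add_le _ _
          _ ≤ τ*B*(6*(k:ℝ)*B*τ) + τ*(B*(6*(k:ℝ)*B*τ)) := by linarith
          _ = 12*(k:ℝ)*B^2*τ^2 := by ring
      have hq2B : |⟪xc, A (vc i)⟫ - ⟪vc i, f⟫| ≤ 2*B := by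
        rw [sub_eq_add_neg]
        refine (abs_add_le _ _).trans ?_
        rw [abs_neg]
        linarith [hxAuB i, hvfB i]
      set h₀ : E := A (vc i) - (⟪xc, A (vc i)⟫ - ⟪vc i, f⟫) • xc with hh0def
      set e₀ : E := vh - vc i - τ • h₀ with he0def
      have hvh_eq : vh = vc i + τ • h₀ + e₀ := by rw [he0def]; abel
      have he0_eq : e₀ = -((cc - τ*(⟪xc, A (vc i)⟫ - ⟪vc i, f⟫)) • xn)
          - (τ * (⟪xc, A (vc i)⟫ - ⟪vc i, f⟫)) • (xn - xc) := by
        rw [he0def, hvhdef, hvtdef, hh0def]; module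
      have he0B : ‖e₀‖ ≤ 24*(k:ℝ)*B^2*τ^2 := by
        have hng : e₀ = -(((cc - τ*(⟪xc, A (vc i)⟫ - ⟪vc i, f⟫)) • xn)
            + (τ * (⟪xc, A (vc i)⟫ - ⟪vc i, f⟫)) • (xn - xc)) := by rw [he0_eq]; abel
        rw [hng, norm_neg]
        refine (norm_add_le _ _).trans ?_
        rw [norm_smul, norm_smul, hxn1, mul_one, Real.norm_eq_abs, Real.norm_eq_abs, abs_mul,
          abs_of_pos hτ]
        have h2 : τ * |⟪xc, A (vc i)⟫ - ⟪vc i, f⟫| * ‖xn - xc‖ ≤ τ * (2*B) * (6*(k:ℝ)*B*τ) := by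
          have hmm := mul_le_mul hq2B hxnxc (norm_nonneg _) (by linarith : (0:ℝ) ≤ 2*B)
          calc τ * |⟪xc, A (vc i)⟫ - ⟪vc i, f⟫| * ‖xn - xc‖
              = τ * (|⟪xc, A (vc i)⟫ - ⟪vc i, f⟫| * ‖xn - xc‖) := by ring
            _ ≤ τ * (2*B * (6*(k:ℝ)*B*τ)) := mul_le_mul_of_nonneg_left hmm hτ.le
            _ = τ * (2*B) * (6*(k:ℝ)*B*τ) := by ring
        have h3 : τ * (2*B) * (6*(k:ℝ)*B*τ) = 12*(k:ℝ)*B^2*τ^2 := by ring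
        linarith only [hdd, h2, h3]
      have hh0B : ‖h₀‖ ≤ 3*B := by
        rw [hh0def]
        refine (norm_sub_le _ _).trans ?_
        rw [norm_smul, hxc, mul_one, Real.norm_eq_abs]
        linarith [hAuB i, hq2B]
      -- crude bound on vn j - vc j
      have hvnvc : ∀ j : Fin k, ‖vn j - vc j‖ ≤ 6*(k:ℝ)*B*τ + ‖vn j - vc j - τ • g j‖ := by
        intro j
        have hsplit : τ • g j + (vn j - vc j - τ • g j) = vn j - vc j := by abel
        have htri := norm_add_le (τ • g j) (vn j - vc j - τ • g j)
        rw [hsplit, norm_smul, Real.norm_eq_abs, abs_of_pos hτ] at htri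
        have hgt : τ * ‖g j‖ ≤ 6*(k:ℝ)*B*τ := by nlinarith only [hτ.le, hgB j]
        linarith only [htri, hgt]
      have hgj_inner : ∀ j : Fin k, j < i → ⟪vc i, g j⟫ = ⟪A (vc i), vc j⟫ := by
        intro j hj
        have hij : i ≠ j := hj.ne'
        simp only [hgdef]
        rw [inner_add_right, inner_sub_right, inner_add_right, inner_sub_right,
          real_inner_smul_right, real_inner_smul_right, real_inner_smul_right,
          real_inner_smul_right, inner_sum]
        simp only [real_inner_smul_right]
        rw [hvc i j, if_neg hij, hvcx i]
        rw [Finset.sum_eq_zero (fun l hl => by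
          have hil : i ≠ l := (lt_trans (Finset.mem_Iio.mp hl) hj).ne'
          rw [hvc i l, if_neg hil, mul_zero])]
        rw [← hAsym]
        ring
      have hh0vj : ∀ j : Fin k, j < i → ⟪h₀, vc j⟫ = ⟪A (vc i), vc j⟫ := by
        intro j hj
        rw [hh0def, inner_sub_left, real_inner_smul_left]
        have hz : ⟪xc, vc j⟫ = 0 := by rw [real_inner_comm]; exact hvcx j
        rw [hz]
        ring
      have hinner : ∀ j : Fin k, j < i →
          |⟪vh, vn j⟫ - 2*(τ*⟪A (vc i), vc j⟫)| ≤
            2*‖vn j - vc j - τ • g j‖ + 42*(k:ℝ)*B^2*τ^2 := by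
        intro j hj
        have hij : i ≠ j := hj.ne'
        have hvnj : vn j = vc j + τ • g j + (vn j - vc j - τ • g j) := by abel
        have e1 : ⟪vh, vn j⟫ = ⟪vc i, vn j⟫ + τ*⟪h₀, vn j⟫ + ⟪e₀, vn j⟫ := by
          conv_lhs => rw [hvh_eq]
          rw [inner_add_left, inner_add_left, real_inner_smul_left]
        have e2 : ⟪vc i, vn j⟫ = ⟪vc i, vc j⟫ + τ*⟪vc i, g j⟫
            + ⟪vc i, vn j - vc j - τ • g j⟫ := by
          conv_lhs => rw [hvnj]
          rw [inner_add_right, inner_add_right, real_inner_smul_right]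
        have e3 : ⟪h₀, vn j⟫ = ⟪h₀, vc j⟫ + τ*⟪h₀, g j⟫ + ⟪h₀, vn j - vc j - τ • g j⟫ := by
          conv_lhs => rw [hvnj]
          rw [inner_add_right, inner_add_right, real_inner_smul_right]
        rw [e1, e2, e3, hvc i j, if_neg hij, hgj_inner j hj, hh0vj j hj]
        have hkey : (0:ℝ) + τ*⟪A (vc i), vc j⟫ + ⟪vc i, vn j - vc j - τ • g j⟫
            + τ*(⟪A (vc i), vc j⟫ + τ*⟪h₀, g j⟫ + ⟪h₀, vn j - vc j - τ • g j⟫) + ⟪e₀, vn j⟫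
            - 2*(τ*⟪A (vc i), vc j⟫)
            = ⟪vc i, vn j - vc j - τ • g j⟫ + τ*(τ*⟪h₀, g j⟫)
              + τ*⟪h₀, vn j - vc j - τ • g j⟫ + ⟪e₀, vn j⟫ := by ring
        rw [hkey]
        have b1 : |⟪vc i, vn j - vc j - τ • g j⟫| ≤ ‖vn j - vc j - τ • g j‖ := by
          refine (abs_real_inner_le_norm _ _).trans ?_
          rw [hnvc i, one_mul]
        have b2 : |τ*(τ*⟪h₀, g j⟫)| ≤ 18*(k:ℝ)*B^2*τ^2 := by
          have hX : |⟪h₀, g j⟫| ≤ 3*B*(6*(k:ℝ)*B) :=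
            (abs_real_inner_le_norm _ _).trans (mul_le_mul hh0B (hgB j) (norm_nonneg _)
              (by linarith))
          rw [abs_mul, abs_mul, abs_of_pos hτ]
          have hmul : τ*τ*|⟪h₀, g j⟫| ≤ τ*τ*(3*B*(6*(k:ℝ)*B)) :=
            mul_le_mul_of_nonneg_left hX (mul_nonneg hτ.le hτ.le)
          linarith only [hmul]
        have b3 : |τ*⟪h₀, vn j - vc j - τ • g j⟫| ≤ ‖vn j - vc j - τ • g j‖ := by
          have hX : |⟪h₀, vn j - vc j - τ • g j⟫| ≤ 3*B*‖vn j - vc j - τ • g j‖ :=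
            (abs_real_inner_le_norm _ _).trans (mul_le_mul_of_nonneg_right hh0B
              (norm_nonneg _))
          rw [abs_mul, abs_of_pos hτ]
          nlinarith only [hX, hτB, hτ.le, norm_nonneg (vn j - vc j - τ • g j),
            abs_nonneg (⟪h₀, vn j - vc j - τ • g j⟫)]
        have b4 : |⟪e₀, vn j⟫| ≤ 24*(k:ℝ)*B^2*τ^2 := by
          refine (abs_real_inner_le_norm _ _).trans ?_
          rw [hnvn j, mul_one]
          exact he0B
        have habs : |⟪vc i, vn j - vc j - τ • g j⟫ + τ*(τ*⟪h₀, g j⟫)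
            + τ*⟪h₀, vn j - vc j - τ • g j⟫ + ⟪e₀, vn j⟫|
            ≤ |⟪vc i, vn j - vc j - τ • g j⟫| + |τ*(τ*⟪h₀, g j⟫)|
            + |τ*⟪h₀, vn j - vc j - τ • g j⟫| + |⟪e₀, vn j⟫| := by
          refine (abs_add_le _ _).trans ?_
          have ha1 := (abs_add_le (⟪vc i, vn j - vc j - τ • g j⟫ + τ*(τ*⟪h₀, g j⟫))
            (τ*⟪h₀, vn j - vc j - τ • g j⟫))
          have ha2 := abs_add_le (⟪vc i, vn j - vc j - τ • g j⟫) (τ*(τ*⟪h₀, g j⟫))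
          linarith only [ha1, ha2]
        linarith only [habs, b1, b2, b3, b4]
      set hh : E := h₀ - (2:ℝ) • ∑ j ∈ Finset.Iio i, ⟪A (vc i), vc j⟫ • vc j with hhdef
      have hhB : ‖hh‖ ≤ 5*(k:ℝ)*B := by
        rw [hhdef]
        refine (norm_sub_le _ _).trans ?_
        have hsum : ‖∑ j ∈ Finset.Iio i, ⟪A (vc i), vc j⟫ • vc j‖ ≤ (k:ℝ)*B := by
          have hb := norm_sum_le_card_mul (Finset.Iio i) (fun j => ⟪A (vc i), vc j⟫ • vc j) B ?_
          · refine hb.trans ?_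
            have hc : ((Finset.Iio i).card : ℝ) ≤ (k:ℝ) := by
              rw [Fin.card_Iio]; exact_mod_cast i.isLt.le
            nlinarith only [hc, hB0]
          · intro l _
            rw [norm_smul, hnvc l, mul_one, Real.norm_eq_abs]
            calc |⟪A (vc i), vc l⟫| ≤ ‖A (vc i)‖*‖vc l‖ := abs_real_inner_le_norm _ _
              _ ≤ B := by rw [hnvc l, mul_one]; exact hAuB i
        rw [norm_smul]
        simp only [Real.norm_ofNat]
        nlinarith only [hh0B, hsum, hk', hB0]
      have hew_eq : w - vc i - τ • hh = e₀ - ∑ j ∈ Finset.Iio i,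
          (⟪vh, vn j⟫ • vn j - (2*(τ*⟪A (vc i), vc j⟫)) • vc j) := by
        have hsum_eq : τ • ((2:ℝ) • ∑ j ∈ Finset.Iio i, ⟪A (vc i), vc j⟫ • vc j)
            = ∑ j ∈ Finset.Iio i, (2*(τ*⟪A (vc i), vc j⟫)) • vc j := by
          rw [Finset.smul_sum, Finset.smul_sum]
          exact Finset.sum_congr rfl (fun j _ => by module)
        rw [Finset.sum_sub_distrib, ← hsum_eq, hwdef, he0def, hhdef]
        module
      have hewB : ‖w - vc i - τ • hh‖ ≤ 3*(∑ j ∈ Finset.Iio i, ‖vn j - vc j - τ • g j‖)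
          + 78*(k:ℝ)^2*B^2*τ^2 := by
        rw [hew_eq]
        refine (norm_sub_le _ _).trans ?_
        have hterm : ∀ j ∈ Finset.Iio i,
            ‖⟪vh, vn j⟫ • vn j - (2*(τ*⟪A (vc i), vc j⟫)) • vc j‖
            ≤ 3*‖vn j - vc j - τ • g j‖ + 54*(k:ℝ)*B^2*τ^2 := by
          intro j hjm
          have hj : j < i := Finset.mem_Iio.mp hjm
          have hper : ⟪vh, vn j⟫ • vn j - (2*(τ*⟪A (vc i), vc j⟫)) • vc j
              = (⟪vh, vn j⟫ - 2*(τ*⟪A (vc i), vc j⟫)) • vn j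
                + (2*(τ*⟪A (vc i), vc j⟫)) • (vn j - vc j) := by module
          rw [hper]
          refine (norm_add_le _ _).trans ?_
          rw [norm_smul, norm_smul, hnvn j, mul_one, Real.norm_eq_abs, Real.norm_eq_abs]
          have t1 := hinner j hj
          have t2 : |2*(τ*⟪A (vc i), vc j⟫)| ≤ 2*τ*B := by
            rw [abs_mul, abs_mul, abs_of_pos hτ, abs_two]
            have hb : |⟪A (vc i), vc j⟫| ≤ B := by
              calc |⟪A (vc i), vc j⟫| ≤ ‖A (vc i)‖*‖vc j‖ := abs_real_inner_le_norm _ _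
                _ ≤ B := by rw [hnvc j, mul_one]; exact hAuB i
            nlinarith only [hb, hτ.le]
          have t3 := hvnvc j
          have t4 : |2*(τ*⟪A (vc i), vc j⟫)| * ‖vn j - vc j‖
              ≤ 12*(k:ℝ)*B^2*τ^2 + ‖vn j - vc j - τ • g j‖ := by
            have hmu := mul_le_mul t2 t3 (norm_nonneg _) (by positivity)
            nlinarith only [hmu, hτB, hτ.le, norm_nonneg (vn j - vc j - τ • g j), hB0,
              norm_nonneg (vn j - vc j)]
          linarith only [t1, t4]
        have hsum_le := Finset.sum_le_sum hterm
        have hs2 : ∑ j ∈ Finset.Iio i, (3*‖vn j - vc j - τ • g j‖ + 54*(k:ℝ)*B^2*τ^2)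
            = 3*(∑ j ∈ Finset.Iio i, ‖vn j - vc j - τ • g j‖)
              + ((i:ℕ):ℝ)*(54*(k:ℝ)*B^2*τ^2) := by
          rw [Finset.sum_add_distrib, Finset.sum_const, Fin.card_Iio, nsmul_eq_mul,
            ← Finset.mul_sum]
        rw [hs2] at hsum_le
        have hcard : ((i:ℕ):ℝ) ≤ (k:ℝ) := by exact_mod_cast i.isLt.le
        have hns := norm_sum_le (Finset.Iio i)
          (fun j => ⟪vh, vn j⟫ • vn j - (2*(τ*⟪A (vc i), vc j⟫)) • vc j)
        have hpos : (0:ℝ) ≤ 54*(k:ℝ)*B^2*τ^2 := by positivity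
        have hkB2 : (0:ℝ) ≤ (k:ℝ)*B^2*τ^2 := by positivity
        nlinarith only [he0B, hns, hsum_le, hcard, hpos, hkB2, hk', hB0]
      have hSig0 : 0 ≤ ∑ j ∈ Finset.Iio i, ‖vn j - vc j - τ • g j‖ :=
        Finset.sum_nonneg (fun j _ => norm_nonneg _)
      have hSigb : ∑ j ∈ Finset.Iio i, ‖vn j - vc j - τ • g j‖
          ≤ 642*(k:ℝ)^2*B^2*τ^2*(((10:ℝ)^(i:ℕ) - 1)/9) := by
        have h1 : ∑ j ∈ Finset.Iio i, ‖vn j - vc j - τ • g j‖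
            ≤ ∑ j ∈ Finset.Iio i, 642*(k:ℝ)^2*B^2*10^(j:ℕ)*τ^2 :=
          Finset.sum_le_sum (fun j hj => hIH j (Finset.mem_Iio.mp hj))
        refine h1.trans (le_of_eq ?_)
        have h3 : ∑ j ∈ Finset.Iio i, (10:ℝ)^(j:ℕ) = ((10:ℝ)^(i:ℕ) - 1)/9 := by
          have h4 := fin_sum_Iio k i (fun m => (10:ℝ)^m)
          rw [h4, geom_bound]
        calc ∑ j ∈ Finset.Iio i, 642*(k:ℝ)^2*B^2*10^(j:ℕ)*τ^2
            = 642*(k:ℝ)^2*B^2*τ^2*(∑ j ∈ Finset.Iio i, (10:ℝ)^(j:ℕ)) := by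
              rw [Finset.mul_sum]
              exact Finset.sum_congr rfl (fun j _ => by ring)
          _ = 642*(k:ℝ)^2*B^2*τ^2*(((10:ℝ)^(i:ℕ) - 1)/9) := by rw [h3]
      have hpow : ((10:ℝ)^(i:ℕ) - 1)/9 ≤ (10:ℝ)^k := by
        have h1 : (10:ℝ)^(i:ℕ) ≤ 10^k :=
          pow_le_pow_right₀ (by norm_num : (1:ℝ) ≤ 10) i.isLt.le
        linarith only [h1, pow_nonneg (by norm_num : (0:ℝ) ≤ 10) k]
      have hSigt : ∑ j ∈ Finset.Iio i, ‖vn j - vc j - τ • g j‖ ≤ τ := by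
        have h1 : 642*(k:ℝ)^2*B^2*τ^2*(((10:ℝ)^(i:ℕ) - 1)/9)
            ≤ τ*(τ*(642*(k:ℝ)^2*B^2*10^k)) := by
          calc 642*(k:ℝ)^2*B^2*τ^2*(((10:ℝ)^(i:ℕ) - 1)/9)
              ≤ 642*(k:ℝ)^2*B^2*τ^2*((10:ℝ)^k) :=
                mul_le_mul_of_nonneg_left hpow (by positivity)
            _ = τ*(τ*(642*(k:ℝ)^2*B^2*10^k)) := by ring
        have h2 : τ*(τ*(642*(k:ℝ)^2*B^2*10^k)) ≤ τ*1 :=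
          mul_le_mul_of_nonneg_left hQsmall hτ.le
        linarith only [hSigb, h1, h2]
      have hkB1 : (1:ℝ) ≤ (k:ℝ)*B := by nlinarith only [hk', hB]
      have hpB2 : ‖w - vc i‖ ≤ 5*(k:ℝ)*B*τ
          + (3*(∑ j ∈ Finset.Iio i, ‖vn j - vc j - τ • g j‖) + 78*(k:ℝ)^2*B^2*τ^2) := by
        have hsplit : τ • hh + (w - vc i - τ • hh) = w - vc i := by abel
        have htri := norm_add_le (τ • hh) (w - vc i - τ • hh)
        rw [hsplit, norm_smul, Real.norm_eq_abs, abs_of_pos hτ] at htri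
        have hth : τ*‖hh‖ ≤ 5*(k:ℝ)*B*τ := by nlinarith only [hhB, hτ.le]
        linarith only [htri, hth, hewB]
      have hpB : ‖w - vc i‖ ≤ 9*(k:ℝ)*B*τ := by
        have ha2 : τ*((k:ℝ)*B)*(τ*((k:ℝ)*B)) ≤ (1/100)*(τ*((k:ℝ)*B)) :=
          mul_le_mul_of_nonneg_right hkB (mul_nonneg hτ.le hkB0)
        nlinarith only [hpB2, hSigt, ha2, hτ.le, hkB1,
          mul_nonneg (by linarith only [hkB1] : (0:ℝ) ≤ (k:ℝ)*B - 1) hτ.le]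
      have hphalf : ‖w - vc i‖ ≤ 1/2 := by linarith only [hpB, hkB]
      have hNorm := normalize_est (vc i) (w - vc i) (hnvc i) hphalf
        (by rw [add_sub_cancel]; exact hwne)
      rw [add_sub_cancel] at hNorm
      have hucw : ⟪vc i, w - vc i⟫ = τ*⟪vc i, A (vc i)⟫ + ⟪vc i, w - vc i - τ • hh⟫ := by
        have hsplit : w - vc i = τ • hh + (w - vc i - τ • hh) := by abel
        conv_lhs => rw [hsplit]
        rw [inner_add_right, real_inner_smul_right]
        have hih : ⟪vc i, hh⟫ = ⟪vc i, A (vc i)⟫ := by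
          rw [hhdef, hh0def, inner_sub_right, inner_sub_right, real_inner_smul_right,
            real_inner_smul_right, inner_sum]
          simp only [real_inner_smul_right]
          rw [hvcx i, Finset.sum_eq_zero (fun l hl => by
            have hil : i ≠ l := (Finset.mem_Iio.mp hl).ne'
            rw [hvc i l, if_neg hil, mul_zero])]
          ring
        rw [hih]
      have hgi_eq : g i = hh - ⟪vc i, A (vc i)⟫ • vc i := by
        simp only [hgdef]
        rw [hhdef, hh0def]
        have hsc : ∑ j ∈ Finset.Iio i, ⟪vc j, A (vc i)⟫ • vc j
            = ∑ j ∈ Finset.Iio i, ⟪A (vc i), vc j⟫ • vc j :=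
          Finset.sum_congr rfl (fun j _ => by rw [real_inner_comm])
        rw [hsc]
        module
      have hfinal : vn i - vc i - τ • g i
          = (‖w‖⁻¹ • w - (w - ⟪vc i, w - vc i⟫ • vc i))
            + ((w - vc i - τ • hh) - ⟪vc i, w - vc i - τ • hh⟫ • vc i) := by
        rw [hvni, hgi_eq, hucw]
        module
      rw [hfinal]
      refine (norm_add_le _ _).trans ?_
      have hip : |⟪vc i, w - vc i - τ • hh⟫| ≤ ‖w - vc i - τ • hh‖ := by
        refine (abs_real_inner_le_norm _ _).trans ?_
        rw [hnvc i, one_mul]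
      have hsecond : ‖(w - vc i - τ • hh) - ⟪vc i, w - vc i - τ • hh⟫ • vc i‖
          ≤ 2*‖w - vc i - τ • hh‖ := by
        refine (norm_sub_le _ _).trans ?_
        rw [norm_smul, hnvc i, mul_one, Real.norm_eq_abs]
        linarith only [hip]
      have hq1 : 9*‖w - vc i‖^2 ≤ 81*((k:ℝ)*B*τ)*(5*(k:ℝ)*B*τ
          + (3*(∑ j ∈ Finset.Iio i, ‖vn j - vc j - τ • g j‖) + 78*(k:ℝ)^2*B^2*τ^2)) := by
        nlinarith only [hpB, hpB2, norm_nonneg (w - vc i),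
          mul_nonneg (mul_nonneg hkB0 hτ.le) (norm_nonneg (w - vc i))]
      have e1 : 243*((k:ℝ)*B*τ)*(∑ j ∈ Finset.Iio i, ‖vn j - vc j - τ • g j‖)
          ≤ 3*(∑ j ∈ Finset.Iio i, ‖vn j - vc j - τ • g j‖) := by
        nlinarith only [hkB, hSig0]
      have e2 : 81*((k:ℝ)*B*τ)*(78*(k:ℝ)^2*B^2*τ^2) + 81*((k:ℝ)*B*τ)*(5*(k:ℝ)*B*τ)
          ≤ 78*(k:ℝ)^2*B^2*τ^2 + 405*(k:ℝ)^2*B^2*τ^2 := by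
        have hpos2 : (0:ℝ) ≤ 78*(k:ℝ)^2*B^2*τ^2 := by positivity
        nlinarith only [hkB, hpos2, mul_nonneg hkB0 hτ.le]
      have hkbt2 : (0:ℝ) ≤ (k:ℝ)^2*B^2*τ^2 := by positivity
      have hone : (1:ℝ) ≤ (10:ℝ)^(i:ℕ) := one_le_pow₀ (by norm_num)
      nlinarith only [hNorm, hsecond, hewB, hq1, e1, e2, hSigb, hSig0, hkbt2, hone,
        mul_nonneg hkbt2 (by linarith only [hone] : (0:ℝ) ≤ (10:ℝ)^(i:ℕ) - 1)]
  intro i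
  have hmain := main (i.val+1) i (Nat.lt_succ_self _)
  rw [hgdef] at hmain
  simpa using hmain

end

open scoped RealInnerProductSpace BigOperators

noncomputable section

theorem hisd_stmt17
    (d k : ℕ) (hd : 1 ≤ d) (hk : 1 ≤ k) (hkd : k ≤ d)
    (F : EuclideanSpace ℝ (Fin d) → EuclideanSpace ℝ (Fin d))
    (J : EuclideanSpace ℝ (Fin d) → (EuclideanSpace ℝ (Fin d) →L[ℝ] EuclideanSpace ℝ (Fin d)))
    (hJsymm : ∀ x u w, ⟪J x u, w⟫ = ⟪u, J x w⟫)
    (L : ℝ) (hL : 0 < L)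
    (hLip : ∀ x₁ x₂ : EuclideanSpace ℝ (Fin d), ‖J x₂ - J x₁‖ + ‖F x₂ - F x₁‖ ≤ L * ‖x₂ - x₁‖)
    (hgrow : ∀ x : EuclideanSpace ℝ (Fin d), ‖F x‖ ≤ L * (1 + ‖x‖))
    (T : ℝ) (hT : 0 < T)
    (x₀ : EuclideanSpace ℝ (Fin d)) (hx₀ : ‖x₀‖ = 1)
    (v₀ : Fin k → EuclideanSpace ℝ (Fin d))
    (hv₀ : ∀ i j : Fin k, ⟪v₀ i, v₀ j⟫ = if i = j then (1:ℝ) else 0)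
    (hv₀x : ∀ i : Fin k, ⟪v₀ i, x₀⟫ = 0) :
    ∃ τ₀ > (0:ℝ), ∃ Q > (0:ℝ), ∀ (N : ℕ) (τ : ℝ), 0 < N → τ = T / N → τ ≤ τ₀ →
      ∀ (x : ℕ → EuclideanSpace ℝ (Fin d)) (v : ℕ → Fin k → EuclideanSpace ℝ (Fin d)),
        x 0 = x₀ → v 0 = v₀ →
        (∀ n < N,
          let xt := x n + τ • (F (x n) - (2:ℝ) • ∑ j, ⟪v n j, F (x n)⟫ • v n j)
          xt ≠ 0 ∧ x (n+1) = ‖xt‖⁻¹ • xt) →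
        (∀ n < N, ∀ i : Fin k,
          let vt := v n i + τ • J (x n) (v n i)
          let vh := vt - ⟪vt, x (n+1)⟫ • x (n+1)
          let w := vh - ∑ j ∈ Finset.Iio i, ⟪vh, v (n+1) j⟫ • v (n+1) j
          w ≠ 0 ∧ v (n+1) i = ‖w‖⁻¹ • w) →
        ∀ n < N, ∀ i : Fin k,
          ‖τ⁻¹ • (v (n+1) i - v n i) - J (x n) (v n i) -
            ((-⟪v n i, J (x n) (v n i)⟫) • v n i -
              (2:ℝ) • ∑ j ∈ Finset.Iio i, ⟪v n j, J (x n) (v n i)⟫ • v n j) +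
            ⟪x n, J (x n) (v n i)⟫ • x n -
            ⟪v n i, F (x n)⟫ • x n‖ ≤ Q * τ := by
  set B : ℝ := ‖J x₀‖ + 4*L + 1 with hBdef
  have hB : 1 ≤ B := by
    have := norm_nonneg (J x₀)
    rw [hBdef]; linarith
  have hB0 : (0:ℝ) < B := by linarith
  set Q : ℝ := 642*(k:ℝ)^2*B^2*10^k with hQdef
  have hk' : (1:ℝ) ≤ (k:ℝ) := by exact_mod_cast hk
  have hQ0 : 0 < Q := by rw [hQdef]; positivity
  set a : ℝ := 100*((k:ℝ)+1)*B with hadef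
  have ha0 : 0 < a := by rw [hadef]; positivity
  refine ⟨(a + Q)⁻¹, by positivity, Q, hQ0, ?_⟩
  intro N τ hN hτeq hτle x v hx0 hv0 hxstep hvstep n hn i
  have hτpos : 0 < τ := by
    rw [hτeq]
    exact div_pos hT (by exact_mod_cast hN)
  have hab : τ * (a + Q) ≤ 1 := by
    have h1 : τ * (a + Q) ≤ (a + Q)⁻¹ * (a + Q) :=
      mul_le_mul_of_nonneg_right hτle (by positivity)
    rw [inv_mul_cancel₀ (by positivity : a + Q ≠ 0)] at h1
    exact h1
  have hsmall : τ * (100*((k:ℝ)+1)*B) ≤ 1 := by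
    have h2 : 0 ≤ τ * Q := by positivity
    rw [← hadef]
    nlinarith only [hab, h2]
  have hQsmall : τ * (642*(k:ℝ)^2*B^2*10^k) ≤ 1 := by
    have h2 : 0 ≤ τ * a := by positivity
    rw [← hQdef]
    nlinarith only [hab, h2]
  -- norm bounds along unit sphere
  have hJb : ∀ y : EuclideanSpace ℝ (Fin d), ‖y‖ = 1 → ‖J y‖ ≤ B := by
    intro y hy
    have h1 := hLip x₀ y
    have h2 : (0:ℝ) ≤ ‖F y - F x₀‖ := norm_nonneg _
    have h3 : ‖y - x₀‖ ≤ 2 := by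
      have := norm_sub_le y x₀
      rw [hy, hx₀] at this
      linarith
    have h4 : ‖J y - J x₀‖ ≤ 2*L := by nlinarith only [h1, h2, h3, hL]
    have h5 : J y = J x₀ + (J y - J x₀) := by abel
    calc ‖J y‖ = ‖J x₀ + (J y - J x₀)‖ := by rw [← h5]
      _ ≤ ‖J x₀‖ + ‖J y - J x₀‖ := norm_add_le _ _
      _ ≤ B := by rw [hBdef]; linarith
  have hFb : ∀ y : EuclideanSpace ℝ (Fin d), ‖y‖ = 1 → ‖F y‖ ≤ B := by
    intro y hy
    have := hgrow y
    rw [hy] at this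
    rw [hBdef]
    nlinarith only [this, hL, norm_nonneg (J x₀)]
  -- invariants
  have hP : ∀ m : ℕ, m ≤ N → ‖x m‖ = 1 ∧
      (∀ i j : Fin k, ⟪v m i, v m j⟫ = if i = j then (1:ℝ) else 0) ∧
      (∀ i : Fin k, ⟪v m i, x m⟫ = 0) := by
    intro m
    induction m with
    | zero => intro _; rw [hx0, hv0]; exact ⟨hx₀, hv₀, hv₀x⟩
    | succ m ih =>
      intro hm
      have hm' : m < N := Nat.lt_of_succ_le hm
      obtain ⟨hx1, hvv, hvx⟩ := ih hm'.le
      obtain ⟨hxt0, hxdef⟩ := hxstep m hm'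
      have hxn1 : ‖x (m+1)‖ = 1 := by
        rw [hxdef, norm_smul, norm_inv, norm_norm,
          inv_mul_cancel₀ (norm_ne_zero_iff.mpr hxt0)]
      have hvh_perp : ∀ i : Fin k,
          ⟪(v m i + τ • J (x m) (v m i)) -
            ⟪v m i + τ • J (x m) (v m i), x (m+1)⟫ • x (m+1), x (m+1)⟫ = 0 := by
        intro i
        rw [inner_sub_left, real_inner_smul_left, real_inner_self_eq_norm_mul_norm, hxn1]
        ring
      have hgs := step_gs_inv k (x (m+1)) hxn1
        (fun i => (v m i + τ • J (x m) (v m i)) -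
          ⟪v m i + τ • J (x m) (v m i), x (m+1)⟫ • x (m+1))
        hvh_perp (v (m+1)) (fun i => hvstep m hm' i)
      exact ⟨hxn1, hgs.2, hgs.1⟩
  obtain ⟨hx1, hvv, hvx⟩ := hP n hn.le
  obtain ⟨hxn1, hvv', hvx'⟩ := hP (n+1) hn
  obtain ⟨hxt0, hxdef⟩ := hxstep n hn
  have hest := step_est k hk B τ hB hτpos hsmall hQsmall
    (F (x n)) (hFb _ hx1) (J (x n)) (hJb _ hx1) (hJsymm (x n))
    (x n) (x (n+1)) (v n) (v (n+1)) hx1 hvv hvx hxdef hxn1 hvv'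
    (fun i => hvstep n hn i) i
  -- rewrite the goal
  have hXid : τ⁻¹ • (v (n+1) i - v n i) - J (x n) (v n i) -
      ((-⟪v n i, J (x n) (v n i)⟫) • v n i -
        (2:ℝ) • ∑ j ∈ Finset.Iio i, ⟪v n j, J (x n) (v n i)⟫ • v n j) +
      ⟪x n, J (x n) (v n i)⟫ • x n - ⟪v n i, F (x n)⟫ • x n
      = τ⁻¹ • (v (n+1) i - v n i - τ • (J (x n) (v n i) +
          ((-⟪v n i, J (x n) (v n i)⟫) • v n i -
            (2:ℝ) • ∑ j ∈ Finset.Iio i, ⟪v n j, J (x n) (v n i)⟫ • v n j) -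
          ⟪x n, J (x n) (v n i)⟫ • x n + ⟪v n i, F (x n)⟫ • x n)) := by
    conv_rhs => rw [smul_sub, smul_smul, inv_mul_cancel₀ (ne_of_gt hτpos), one_smul]
    module
  rw [hXid, norm_smul, Real.norm_eq_abs, abs_inv, abs_of_pos hτpos]
  have hpow : (10:ℝ)^(i:ℕ) ≤ 10^k :=
    pow_le_pow_right₀ (by norm_num : (1:ℝ) ≤ 10) i.isLt.le
  have hle : ‖v (n+1) i - v n i - τ • (J (x n) (v n i) +
      ((-⟪v n i, J (x n) (v n i)⟫) • v n i -
        (2:ℝ) • ∑ j ∈ Finset.Iio i, ⟪v n j, J (x n) (v n i)⟫ • v n j) -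
      ⟪x n, J (x n) (v n i)⟫ • x n + ⟪v n i, F (x n)⟫ • x n)‖ ≤ Q * τ^2 := by
    refine hest.trans ?_
    rw [hQdef]
    have h2 : (0:ℝ) ≤ 642*(k:ℝ)^2*B^2*τ^2 := by positivity
    nlinarith only [hpow, h2]
  calc τ⁻¹ * ‖v (n+1) i - v n i - τ • (J (x n) (v n i) +
      ((-⟪v n i, J (x n) (v n i)⟫) • v n i -
        (2:ℝ) • ∑ j ∈ Finset.Iio i, ⟪v n j, J (x n) (v n i)⟫ • v n j) -
      ⟪x n, J (x n) (v n i)⟫ • x n + ⟪v n i, F (x n)⟫ • x n)‖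
      ≤ τ⁻¹ * (Q * τ^2) := by
        exact mul_le_mul_of_nonneg_left hle (by positivity)
    _ = Q * τ := by field_simp

end
end
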